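/- arXiv:math/0310077 — 7 statements merged into one kernel-verified Lean document; each statement's English description precedes it below -/
import Mathlib

section
/- Assume Re(β) < 0. Then the function q* is well-defined (the integral defining it converges absolutely for every u > 0), q* is differentiable at every u > 0, and it satisfies the advanced-argument difference differential equation u·(q*)′(u) = Σ_{j=0}^m α_j q*(u + v_j) for all u > 0. -/
open MeasureTheory Filter Set
open Topology

/-- The integrand in the definition of `q*` (case `Re β < 0`):
`x ↦ x^(−β−1) · exp(−u x + ∑_{j=1}^m α_j ∫_0^x (1 − e^{−v_j t})/t dt)`. -/
noncomputable def qstarIntegrand (m : ℕ) (v : ℕ → ℝ) (α : ℕ → ℂ) (u x : ℝ) : ℂ :=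
  (x : ℂ) ^ (-(∑ j ∈ Finset.range (m + 1), α j) - 1) *
    Complex.exp (-(u * x : ℝ) +
      ∑ j ∈ Finset.Icc 1 m,
        α j * ((∫ t in (0 : ℝ)..x, (1 - Real.exp (-(v j) * t)) / t : ℝ) : ℂ))

/-- The function `q*` of Definition 3.1 (case `Re β < 0`). -/
noncomputable def qstar (m : ℕ) (v : ℕ → ℝ) (α : ℕ → ℂ) (u : ℝ) : ℂ :=
  (Complex.Gamma (-(∑ j ∈ Finset.range (m + 1), α j)))⁻¹ *
    ∫ x in Set.Ioi (0 : ℝ), qstarIntegrand m v α u x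

namespace QAux

noncomputable def h (w t : ℝ) : ℝ := (1 - Real.exp (-w * t)) / t
noncomputable def g (w x : ℝ) : ℝ := ∫ t in (0:ℝ)..x, h w t

lemma key_abs (a : ℝ) : |Real.exp a - 1| ≤ |a| * Real.exp |a| := by
  rcases le_or_gt 0 a with ha | ha
  · rw [abs_of_nonneg ha, abs_of_nonneg (by linarith [Real.one_le_exp ha])]
    have h1 : 1 - a ≤ Real.exp (-a) := by linarith [Real.add_one_le_exp (-a)]
    have h2 := Real.exp_pos a
    have h3 : Real.exp (-a) * Real.exp a = 1 := by
      rw [← Real.exp_add]; simp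
    nlinarith
  · have h1 : Real.exp a < 1 := Real.exp_lt_one_iff.mpr ha
    rw [abs_of_neg ha, abs_of_nonpos (by linarith)]
    have h2 : a + 1 ≤ Real.exp a := Real.add_one_le_exp a
    have h3 : (1:ℝ) ≤ Real.exp (-a) := Real.one_le_exp (by linarith)
    nlinarith
  
lemma habs {w : ℝ} (hw : 0 ≤ w) (t : ℝ) : |h w t| ≤ w * Real.exp (w * |t|) := by
  rcases eq_or_ne t 0 with rfl | ht
  · simp [h]
    positivity
  · have := key_abs (-w * t)
    rw [h, abs_div]
    rw [div_le_iff₀ (abs_pos.mpr ht)]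
    have e1 : |1 - Real.exp (-w * t)| = |Real.exp (-w * t) - 1| := abs_sub_comm _ _
    have e2 : |(-w * t)| = w * |t| := by
      rw [abs_mul, abs_neg, abs_of_nonneg hw]
    rw [e1]
    calc |Real.exp (-w * t) - 1| ≤ |(-w * t)| * Real.exp |(-w * t)| := key_abs _
      _ = w * Real.exp (w * |t|) * |t| := by rw [e2]; ring

lemma hmeas (w : ℝ) : Measurable (h w) := by
  unfold h
  exact (measurable_const.sub ((Real.continuous_exp.comp (continuous_const.mul continuous_id)).measurable)).div measurable_id

lemma hii {w : ℝ} (hw : 0 ≤ w) (a b : ℝ) : IntervalIntegrable (h w) volume a b := by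
  rw [intervalIntegrable_iff]
  apply Measure.integrableOn_of_bounded (M := w * Real.exp (w * max |min a b| |max a b|))
    measure_Ioc_lt_top.ne (hmeas w).aestronglyMeasurable
  filter_upwards [ae_restrict_mem measurableSet_Ioc] with t ht
  rw [Real.norm_eq_abs]
  refine (habs hw t).trans ?_
  have h1 : |t| ≤ max |min a b| |max a b| := abs_le_max_abs_abs ht.1.le ht.2
  exact mul_le_mul_of_nonneg_left (Real.exp_le_exp.mpr (mul_le_mul_of_nonneg_left h1 hw)) hw


lemma hnonneg {w : ℝ} (hw : 0 ≤ w) {t : ℝ} (ht : 0 ≤ t) : 0 ≤ h w t := by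
  rcases eq_or_lt_of_le ht with rfl | ht'
  · simp [h]
  · apply div_nonneg _ ht'.le
    have : Real.exp (-w * t) ≤ 1 := Real.exp_le_one_iff.mpr (by nlinarith)
    linarith

lemma hle {w : ℝ} (hw : 0 ≤ w) {t : ℝ} (ht : 0 ≤ t) : h w t ≤ w := by
  rcases eq_or_lt_of_le ht with rfl | ht'
  · simpa [h] using hw
  · rw [h, div_le_iff₀ ht']
    have := Real.add_one_le_exp (-w * t)
    linarith

lemma hle_inv {w : ℝ} (hw : 0 ≤ w) {t : ℝ} (ht : 0 < t) : h w t ≤ 1 / t := by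
  rw [h]
  have h1 : 1 - Real.exp (-w * t) ≤ 1 := by linarith [Real.exp_pos (-w * t)]
  exact (div_le_div_iff_of_pos_right ht).mpr h1

lemma g_nonneg {w : ℝ} (hw : 0 ≤ w) {x : ℝ} (hx : 0 ≤ x) : 0 ≤ g w x :=
  intervalIntegral.integral_nonneg hx (fun t ht => hnonneg hw ht.1)

lemma g_le_mul {w : ℝ} (hw : 0 ≤ w) {x : ℝ} (hx : 0 ≤ x) : g w x ≤ w * x := by
  have := intervalIntegral.integral_mono_on hx (hii hw 0 x)
    (intervalIntegrable_const (c := w)) (fun t ht => hle hw ht.1)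
  simpa [mul_comm, g] using this

lemma g_le_log {w : ℝ} (hw : 0 ≤ w) {x : ℝ} (hx : 1 ≤ x) : g w x ≤ w + Real.log x := by
  have hsplit : g w x = g w 1 + ∫ t in (1:ℝ)..x, h w t :=
    (intervalIntegral.integral_add_adjacent_intervals (hii hw 0 1) (hii hw 1 x)).symm
  have h1 : g w 1 ≤ w := by simpa using g_le_mul hw (zero_le_one (α := ℝ))
  have h0 : (0:ℝ) ∉ Set.uIcc (1:ℝ) x := by
    rw [Set.uIcc_of_le hx]
    rintro ⟨h01, -⟩; linarith
  have hint2 : IntervalIntegrable (fun t : ℝ => 1 / t) volume 1 x := by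
    apply ContinuousOn.intervalIntegrable
    exact continuousOn_const.div continuousOn_id (fun t ht => by rintro rfl; exact h0 ht)
  have h2 : (∫ t in (1:ℝ)..x, h w t) ≤ ∫ t in (1:ℝ)..x, 1 / t := by
    apply intervalIntegral.integral_mono_on hx (hii hw 1 x) hint2
    intro t ht
    exact hle_inv hw (lt_of_lt_of_le zero_lt_one ht.1)
  rw [integral_one_div h0] at h2
  simp only [div_one] at h2
  linarith

lemma g_cont {w : ℝ} (hw : 0 ≤ w) : Continuous (g w) :=
  intervalIntegral.continuous_primitive (fun a b => hii hw a b) 0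

lemma g_hasDeriv {w : ℝ} (hw : 0 ≤ w) {x : ℝ} (hx : 0 < x) : HasDerivAt (g w) (h w x) x := by
  apply intervalIntegral.integral_hasDerivAt_right (hii hw 0 x)
    ((hmeas w).aestronglyMeasurable.stronglyMeasurableAtFilter)
  unfold h
  exact ((continuous_const.sub (Real.continuous_exp.comp
    (continuous_const.mul continuous_id))).continuousAt).div continuousAt_id hx.ne'

end QAux

open QAux

set_option maxHeartbeats 1000000 in
theorem stmt0 (m : ℕ) (v : ℕ → ℝ) (α : ℕ → ℂ)
    (hv0 : v 0 = 0) (hv : ∀ i, i < m → v i < v (i + 1))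
    (hα : ∀ j, 1 ≤ j → j ≤ m → α j ≠ 0)
    (hβ : (∑ j ∈ Finset.range (m + 1), α j).re < 0) :
    ∀ u : ℝ, 0 < u →
      IntegrableOn (qstarIntegrand m v α u) (Set.Ioi (0 : ℝ)) ∧
      DifferentiableAt ℝ (qstar m v α) u ∧
      (u : ℂ) * deriv (qstar m v α) u =
        ∑ j ∈ Finset.range (m + 1), α j * qstar m v α (u + v j) := by
  intro u hu
  have hvnn : ∀ j, j ≤ m → 0 ≤ v j := by
    intro j hj
    induction j with
    | zero => simp [hv0]
    | succ n ih =>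
      have h1 : n ≤ m := Nat.le_of_succ_le hj
      have h2 := hv n (Nat.lt_of_succ_le hj)
      linarith [ih h1]
  set β : ℂ := ∑ j ∈ Finset.range (m + 1), α j with hβdef
  have hβ0 : β ≠ 0 := by
    intro h; rw [h] at hβ; simp at hβ
  set r : ℝ := (-β - 1).re with hrdef
  have hr : -1 < r := by
    simp only [hrdef, Complex.sub_re, Complex.neg_re, Complex.one_re]; linarith
  set A : ℝ := ∑ j ∈ Finset.Icc 1 m, ‖α j‖ with hAdef
  set C₁ : ℝ := ∑ j ∈ Finset.Icc 1 m, ‖α j‖ * v j with hC₁def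
  have hA0 : 0 ≤ A := Finset.sum_nonneg fun j _ => (norm_nonneg _)
  set S : ℝ → ℂ := fun x => ∑ j ∈ Finset.Icc 1 m, α j * ((g (v j) x : ℝ) : ℂ) with hSdef
  have hfun : ∀ u' x : ℝ, qstarIntegrand m v α u' x
      = (x : ℂ) ^ (-β - 1) * Complex.exp (-((u' : ℂ) * (x : ℂ)) + S x) := by
    intro u' x
    simp only [qstarIntegrand, hSdef, g, h, ← hβdef, Complex.ofReal_neg, Complex.ofReal_mul]
  have hnorm : ∀ (u' x : ℝ), 0 < x → ‖qstarIntegrand m v α u' x‖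
      = x ^ r * Real.exp (-(u' * x) + ∑ j ∈ Finset.Icc 1 m, (α j).re * g (v j) x) := by
    intro u' x hx
    rw [hfun, norm_mul,
      Complex.norm_cpow_eq_rpow_re_of_pos hx, Complex.norm_exp]
    congr 2
    simp [hSdef, Complex.re_sum, Complex.mul_re]
  have hgb : ∀ j, j ∈ Finset.Icc 1 m → ∀ x : ℝ, 0 < x →
      g (v j) x ≤ v j + Real.log (max x 1) := by
    intro j hj x hx
    have hw : 0 ≤ v j := hvnn j (Finset.mem_Icc.mp hj).2
    rcases le_total x 1 with hx1 | hx1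
    · rw [max_eq_right hx1, Real.log_one]
      have := g_le_mul hw hx.le
      nlinarith
    · rw [max_eq_left hx1]
      exact g_le_log hw hx1
  have hnormle : ∀ (u' x : ℝ), u / 2 ≤ u' → 0 < x →
      ‖qstarIntegrand m v α u' x‖
        ≤ Real.exp C₁ * ((x ^ r + x ^ (r + A)) * Real.exp (-(u / 2) * x)) := by
    intro u' x hu' hx
    rw [hnorm u' x hx]
    set M : ℝ := max x 1 with hMdef
    have hM1 : (1:ℝ) ≤ M := le_max_right _ _
    have hM0 : (0:ℝ) < M := lt_of_lt_of_le zero_lt_one hM1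
    have hlogM : 0 ≤ Real.log M := Real.log_nonneg hM1
    have step1 : (∑ j ∈ Finset.Icc 1 m, (α j).re * g (v j) x)
        ≤ C₁ + A * Real.log M := by
      calc (∑ j ∈ Finset.Icc 1 m, (α j).re * g (v j) x)
          ≤ ∑ j ∈ Finset.Icc 1 m, ‖α j‖ * (v j + Real.log M) := by
            apply Finset.sum_le_sum
            intro j hj
            have hw : 0 ≤ v j := hvnn j (Finset.mem_Icc.mp hj).2
            have hg0 : 0 ≤ g (v j) x := g_nonneg hw hx.le
            have h1 : (α j).re * g (v j) x ≤ ‖α j‖ * g (v j) x :=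
              mul_le_mul_of_nonneg_right ((Complex.re_le_norm _)) hg0
            exact h1.trans (mul_le_mul_of_nonneg_left (hgb j hj x hx) (norm_nonneg _))
        _ = C₁ + A * Real.log M := by
            rw [hC₁def, hAdef, Finset.sum_mul, ← Finset.sum_add_distrib]
            apply Finset.sum_congr rfl
            intro j hj; ring
    have step2 : Real.exp (-(u' * x) + ∑ j ∈ Finset.Icc 1 m, (α j).re * g (v j) x)
        ≤ Real.exp C₁ * M ^ A * Real.exp (-(u / 2) * x) := by
      have e1 : -(u' * x) + (∑ j ∈ Finset.Icc 1 m, (α j).re * g (v j) x)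
          ≤ C₁ + A * Real.log M + -(u / 2) * x := by
        have : -(u' * x) ≤ -(u / 2) * x := by nlinarith
        linarith
      calc Real.exp (-(u' * x) + ∑ j ∈ Finset.Icc 1 m, (α j).re * g (v j) x)
          ≤ Real.exp (C₁ + A * Real.log M + -(u / 2) * x) := Real.exp_le_exp.mpr e1
        _ = Real.exp C₁ * M ^ A * Real.exp (-(u / 2) * x) := by
            rw [Real.exp_add, Real.exp_add]
            congr 2
            rw [Real.rpow_def_of_pos hM0, mul_comm]
    have hMA : x ^ r * M ^ A ≤ x ^ r + x ^ (r + A) := by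
      rcases le_total x 1 with hx1 | hx1
      · have : M = 1 := max_eq_right hx1
        rw [this, Real.one_rpow, mul_one]
        have : (0:ℝ) ≤ x ^ (r + A) := Real.rpow_nonneg hx.le _
        linarith
      · have hMx : M = x := max_eq_left hx1
        rw [hMx, ← Real.rpow_add hx]
        have : (0:ℝ) ≤ x ^ r := Real.rpow_nonneg hx.le _
        linarith
    calc x ^ r * Real.exp (-(u' * x) + ∑ j ∈ Finset.Icc 1 m, (α j).re * g (v j) x)
        ≤ x ^ r * (Real.exp C₁ * M ^ A * Real.exp (-(u / 2) * x)) := by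
          apply mul_le_mul_of_nonneg_left step2 (Real.rpow_nonneg hx.le _)
      _ = Real.exp C₁ * ((x ^ r * M ^ A) * Real.exp (-(u / 2) * x)) := by ring
      _ ≤ Real.exp C₁ * ((x ^ r + x ^ (r + A)) * Real.exp (-(u / 2) * x)) := by
          apply mul_le_mul_of_nonneg_left _ (Real.exp_pos _).le
          exact mul_le_mul_of_nonneg_right hMA (Real.exp_pos _).le
  have hBint : ∀ p : ℝ, -1 < p →
      IntegrableOn (fun x : ℝ => x ^ p * Real.exp (-(u / 2) * x)) (Ioi 0) := by
    intro p hp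
    have := integrableOn_rpow_mul_exp_neg_mul_rpow hp zero_lt_one (half_pos hu)
    simpa [Real.rpow_one] using this
  have hD : ∀ p q : ℝ, -1 < p → -1 < q →
      IntegrableOn (fun x : ℝ =>
        Real.exp C₁ * ((x ^ p + x ^ q) * Real.exp (-(u / 2) * x))) (Ioi 0) := by
    intro p q hp hq
    have h1 := ((hBint p hp).add (hBint q hq)).const_mul (Real.exp C₁)
    exact h1.congr (ae_of_all _ fun x => by simp only [Pi.add_apply]; ring)
  have hScont : Continuous S := by
    apply continuous_finset_sum
    intro j hj
    exact continuous_const.mul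
      (Complex.continuous_ofReal.comp (g_cont (hvnn j (Finset.mem_Icc.mp hj).2)))
  have hEcont : ∀ u' : ℝ, Continuous fun x : ℝ =>
      Complex.exp (-((u' : ℂ) * (x : ℂ)) + S x) := by
    intro u'
    apply Complex.continuous_exp.comp
    exact ((continuous_const.mul Complex.continuous_ofReal).neg).add hScont
  have hmeasf : ∀ u' : ℝ, AEStronglyMeasurable (qstarIntegrand m v α u')
      (volume.restrict (Ioi 0)) := by
    intro u'
    have hcont : ContinuousOn (qstarIntegrand m v α u') (Ioi 0) := by
      have heq : qstarIntegrand m v α u'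
          = fun x : ℝ => (x : ℂ) ^ (-β - 1) * Complex.exp (-((u' : ℂ) * (x : ℂ)) + S x) :=
        funext fun x => hfun u' x
      rw [heq]
      intro x hx
      apply ContinuousAt.continuousWithinAt
      exact (Complex.continuousAt_ofReal_cpow_const x _ (Or.inr (ne_of_gt hx))).mul
        ((hEcont u').continuousAt)
    exact hcont.aestronglyMeasurable measurableSet_Ioi
  have hInt : ∀ u' : ℝ, u / 2 ≤ u' → IntegrableOn (qstarIntegrand m v α u') (Ioi 0) := by
    intro u' hu'
    apply Integrable.mono' (hD r (r + A) hr (by linarith)) (hmeasf u')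
    rw [ae_restrict_iff' measurableSet_Ioi]
    exact ae_of_all _ fun x hx => hnormle u' x hu' hx
  have hderiv_u : ∀ (x : ℝ) (u' : ℝ), HasDerivAt (fun y : ℝ => qstarIntegrand m v α y x)
      (-(x : ℂ) * qstarIntegrand m v α u' x) u' := by
    intro x u'
    have heq : (fun y : ℝ => qstarIntegrand m v α y x)
        = fun y : ℝ => (x:ℂ) ^ (-β - 1) * Complex.exp (-((y:ℂ) * (x:ℂ)) + S x) :=
      funext fun y => hfun y x
    rw [heq, hfun]
    have h1 : HasDerivAt (fun y : ℝ => ((y : ℂ))) 1 u' := by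
      simpa using HasDerivAt.ofReal_comp (hasDerivAt_id u')
    have h2 : HasDerivAt (fun y : ℝ => -((y:ℂ) * (x:ℂ)) + S x) (-(x:ℂ)) u' := by
      simpa using ((h1.mul_const ((x:ℂ))).neg).add_const (S x)
    have h3 := (h2.cexp).const_mul ((x:ℂ) ^ (-β - 1))
    exact h3.congr_deriv (by ring)
  have hbnd : ∀ᵐ x : ℝ ∂(volume.restrict (Ioi 0)), ∀ y ∈ Metric.ball u (u/2),
      ‖-(x:ℂ) * qstarIntegrand m v α y x‖
        ≤ Real.exp C₁ * ((x ^ (r+1) + x ^ (r+1+A)) * Real.exp (-(u/2) * x)) := by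
    rw [ae_restrict_iff' measurableSet_Ioi]
    apply ae_of_all
    intro x hx y hy
    have hy2 : u/2 ≤ y := by
      rw [Metric.mem_ball, Real.dist_eq] at hy
      have := abs_lt.mp hy
      linarith [this.1]
    rw [norm_mul, norm_neg, Complex.norm_real, Real.norm_eq_abs, abs_of_pos hx]
    calc x * ‖qstarIntegrand m v α y x‖
        ≤ x * (Real.exp C₁ * ((x ^ r + x ^ (r + A)) * Real.exp (-(u/2) * x))) :=
          mul_le_mul_of_nonneg_left (hnormle y x hy2 hx) hx.le
      _ = Real.exp C₁ * ((x ^ (r+1) + x ^ (r+1+A)) * Real.exp (-(u/2) * x)) := by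
          rw [Real.rpow_add_one hx.ne', show r+1+A = (r+A)+1 by ring,
            Real.rpow_add_one hx.ne']
          ring
  have hdiff : ∀ᵐ x : ℝ ∂(volume.restrict (Ioi 0)), ∀ y ∈ Metric.ball u (u/2),
      HasDerivAt (fun y : ℝ => qstarIntegrand m v α y x)
        (-(x:ℂ) * qstarIntegrand m v α y x) y :=
    ae_of_all _ fun x => fun y _ => hderiv_u x y
  have key := hasDerivAt_integral_of_dominated_loc_of_deriv_le
      (μ := volume.restrict (Ioi (0:ℝ)))
      (F := fun (y : ℝ) (x : ℝ) => qstarIntegrand m v α y x)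
      (F' := fun (y : ℝ) (x : ℝ) => -(x:ℂ) * qstarIntegrand m v α y x)
      (x₀ := u) (s := Metric.ball u (u/2))
      (bound := fun x : ℝ => Real.exp C₁ * ((x ^ (r+1) + x ^ (r+1+A)) * Real.exp (-(u/2) * x)))
      (Metric.ball_mem_nhds u (half_pos hu))
      (Filter.Eventually.of_forall fun y => hmeasf y) (hInt u (by linarith))
      (((Complex.continuous_ofReal.neg).aestronglyMeasurable.restrict).mul (hmeasf u))
      hbnd (hD (r+1) (r+1+A) (by linarith) (by linarith)) hdiff
  set T : ℝ → ℂ := fun x =>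
    ∑ j ∈ Finset.Icc 1 m, α j * (1 - Complex.exp (((-(v j * x) : ℝ) : ℂ))) with hTdef
  have hshift : ∀ (j : ℕ) (x : ℝ),
      Complex.exp (((-(v j * x) : ℝ) : ℂ)) * qstarIntegrand m v α u x
        = qstarIntegrand m v α (u + v j) x := by
    intro j x
    rw [hfun, hfun, mul_left_comm, ← Complex.exp_add]
    congr 2
    push_cast
    ring
  have hFW : ∀ x ∈ Ioi (0:ℝ), HasDerivAt
      (fun y : ℝ => (y:ℂ) ^ (-β) * Complex.exp (-((u:ℂ) * (y:ℂ)) + S y))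
      ((-β - (u:ℂ) * (x:ℂ) + T x) * qstarIntegrand m v α u x) x := by
    intro x hx
    have hx' : (0:ℝ) < x := hx
    have hx0 : (x:ℂ) ≠ 0 := by exact_mod_cast (ne_of_gt hx')
    have hP0 := hasDerivAt_ofReal_cpow_const' (ne_of_gt hx') (r := -β - 1)
      (by intro hc; exact hβ0 (by linear_combination -hc))
    have e0 : -β - 1 + 1 = -β := by ring
    rw [e0] at hP0
    have hP := hP0.const_mul (-β)
    have hPeq : (fun y : ℝ => -β * ((y:ℂ) ^ (-β) / (-β))) = fun y : ℝ => (y:ℂ) ^ (-β) := by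
      funext y; field_simp
    rw [hPeq] at hP
    have hSd : HasDerivAt S (∑ j ∈ Finset.Icc 1 m, α j * ((QAux.h (v j) x : ℝ) : ℂ)) x := by
      have hs := HasDerivAt.sum (u := Finset.Icc 1 m)
        (A := fun j (y : ℝ) => α j * ((g (v j) y : ℝ) : ℂ))
        (A' := fun j => α j * ((QAux.h (v j) x : ℝ) : ℂ)) (x := x)
        (fun j hj => ((g_hasDeriv (hvnn j (Finset.mem_Icc.mp hj).2) hx').ofReal_comp).const_mul (α j))
      have e : S = ∑ j ∈ Finset.Icc 1 m, fun y : ℝ => α j * ((g (v j) y : ℝ) : ℂ) := by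
        funext y; simp [hSdef, Finset.sum_apply]
      rw [e]; exact hs
    have hφ : HasDerivAt (fun y : ℝ => -((u:ℂ) * (y:ℂ)) + S y)
        (-(u:ℂ) + ∑ j ∈ Finset.Icc 1 m, α j * ((QAux.h (v j) x : ℝ) : ℂ)) x := by
      apply HasDerivAt.add _ hSd
      have h1 : HasDerivAt (fun y : ℝ => ((y : ℂ))) 1 x := by
        simpa using HasDerivAt.ofReal_comp (hasDerivAt_id x)
      exact (h1.const_mul ((u:ℂ))).neg.congr_deriv (by ring)
    have hFd := hP.mul hφ.cexp
    have hsum : (∑ j ∈ Finset.Icc 1 m, α j * ((QAux.h (v j) x : ℝ) : ℂ)) * (x:ℂ) = T x := by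
      rw [hTdef, Finset.sum_mul]
      apply Finset.sum_congr rfl
      intro j hj
      rw [mul_assoc]
      congr 1
      simp only [QAux.h]
      push_cast
      field_simp
    have hpow : (x:ℂ) ^ (-β) = (x:ℂ) ^ (-β - 1) * (x:ℂ) := by
      conv_lhs => rw [show -β = -β - 1 + 1 by ring]
      rw [Complex.cpow_add _ _ hx0, Complex.cpow_one]
    refine hFd.congr_deriv ?_
    rw [hfun, ← hsum, hpow]
    ring
  have hcont0 : ContinuousWithinAt
      (fun y : ℝ => (y:ℂ) ^ (-β) * Complex.exp (-((u:ℂ) * (y:ℂ)) + S y)) (Ici 0) 0 := by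
    apply ContinuousAt.continuousWithinAt
    apply ContinuousAt.mul _ (hEcont u).continuousAt
    have h1 := Complex.continuousAt_ofReal_cpow 0 (-β)
      (Or.inl (by simp only [Complex.neg_re]; linarith))
    have h2 : ContinuousAt (fun y : ℝ => ((y, -β) : ℝ × ℂ)) 0 :=
      (continuous_id.prodMk continuous_const).continuousAt
    exact ContinuousAt.comp (x := (0:ℝ)) h1 h2
  have hF0 : ((0:ℝ):ℂ) ^ (-β) * Complex.exp (-((u:ℂ) * ((0:ℝ):ℂ)) + S 0) = 0 := by
    rw [Complex.ofReal_zero, Complex.zero_cpow (neg_ne_zero.mpr hβ0), zero_mul]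
  have hDtend : ∀ p q : ℝ, Tendsto
      (fun y : ℝ => Real.exp C₁ * ((y ^ p + y ^ q) * Real.exp (-(u/2) * y))) atTop (𝓝 0) := by
    intro p q
    have t1 := tendsto_rpow_mul_exp_neg_mul_atTop_nhds_zero p (u/2) (half_pos hu)
    have t2 := tendsto_rpow_mul_exp_neg_mul_atTop_nhds_zero q (u/2) (half_pos hu)
    have t3 := (t1.add t2).const_mul (Real.exp C₁)
    simp only [add_zero, mul_zero] at t3
    apply t3.congr
    intro y; ring
  have hFlim : Tendsto (fun y : ℝ => (y:ℂ) ^ (-β) * Complex.exp (-((u:ℂ) * (y:ℂ)) + S y))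
      atTop (𝓝 0) := by
    rw [tendsto_zero_iff_norm_tendsto_zero]
    apply squeeze_zero' (Filter.Eventually.of_forall fun y => norm_nonneg _) _
      (hDtend (r+1) (r+1+A))
    filter_upwards [eventually_gt_atTop (0:ℝ)] with y hy
    have hnF : ‖(y:ℂ) ^ (-β) * Complex.exp (-((u:ℂ) * (y:ℂ)) + S y)‖
        = y * ‖qstarIntegrand m v α u y‖ := by
      rw [hfun, norm_mul, norm_mul, Complex.norm_cpow_eq_rpow_re_of_pos hy,
        Complex.norm_cpow_eq_rpow_re_of_pos hy]
      have e1 : (-β).re = r + 1 := by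
        simp only [hrdef, Complex.sub_re, Complex.one_re]; ring
      rw [e1, Real.rpow_add_one (ne_of_gt hy)]
      ring
    rw [hnF]
    calc y * ‖qstarIntegrand m v α u y‖
        ≤ y * (Real.exp C₁ * ((y ^ r + y ^ (r + A)) * Real.exp (-(u/2) * y))) :=
          mul_le_mul_of_nonneg_left (hnormle u y (by linarith) hy) hy.le
      _ = Real.exp C₁ * ((y ^ (r+1) + y ^ (r+1+A)) * Real.exp (-(u/2) * y)) := by
          rw [Real.rpow_add_one (ne_of_gt hy), show r+1+A = (r+A)+1 by ring,
            Real.rpow_add_one (ne_of_gt hy)]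
          ring
  have hXint : IntegrableOn (fun x : ℝ => (x:ℂ) * qstarIntegrand m v α u x) (Ioi 0) := by
    have h1 := key.1.neg
    exact h1.congr (ae_of_all _ fun x => by simp)
  have hWeq : ∀ x : ℝ, (-β - (u:ℂ) * (x:ℂ) + T x) * qstarIntegrand m v α u x
      = ((-β + ∑ j ∈ Finset.Icc 1 m, α j) * qstarIntegrand m v α u x
          + (-(u:ℂ)) * ((x:ℂ) * qstarIntegrand m v α u x))
        - ∑ j ∈ Finset.Icc 1 m, α j * qstarIntegrand m v α (u + v j) x := by
    intro x
    have hT : T x * qstarIntegrand m v α u x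
        = (∑ j ∈ Finset.Icc 1 m, α j) * qstarIntegrand m v α u x
          - ∑ j ∈ Finset.Icc 1 m, α j * qstarIntegrand m v α (u + v j) x := by
      rw [hTdef, Finset.sum_mul, Finset.sum_mul, ← Finset.sum_sub_distrib]
      apply Finset.sum_congr rfl
      intro j hj
      rw [← hshift j x]
      ring
    calc (-β - (u:ℂ) * (x:ℂ) + T x) * qstarIntegrand m v α u x
        = (-β) * qstarIntegrand m v α u x + (-(u:ℂ)) * ((x:ℂ) * qstarIntegrand m v α u x)
          + T x * qstarIntegrand m v α u x := by ring
      _ = _ := by rw [hT]; ring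
  have hint1 : IntegrableOn (fun x : ℝ =>
      (-β + ∑ j ∈ Finset.Icc 1 m, α j) * qstarIntegrand m v α u x
        + (-(u:ℂ)) * ((x:ℂ) * qstarIntegrand m v α u x)) (Ioi 0) :=
    ((hInt u (by linarith)).const_mul _).add (hXint.const_mul _)
  have hint2 : IntegrableOn (fun x : ℝ =>
      ∑ j ∈ Finset.Icc 1 m, α j * qstarIntegrand m v α (u + v j) x) (Ioi 0) := by
    apply integrable_finset_sum
    intro j hj
    have hwj : 0 ≤ v j := hvnn j (Finset.mem_Icc.mp hj).2
    exact (hInt (u + v j) (by linarith)).const_mul _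
  have hWint : IntegrableOn (fun x : ℝ =>
      (-β - (u:ℂ) * (x:ℂ) + T x) * qstarIntegrand m v α u x) (Ioi 0) := by
    exact (hint1.sub hint2).congr (ae_of_all _ fun x => (hWeq x).symm)
  have hFTC : ∫ x in Ioi (0:ℝ), (-β - (u:ℂ) * (x:ℂ) + T x) * qstarIntegrand m v α u x = 0 := by
    rw [integral_Ioi_of_hasDerivAt_of_tendsto hcont0 hFW hWint hFlim, hF0, sub_zero]
  set I0 : ℂ := ∫ x in Ioi (0:ℝ), qstarIntegrand m v α u x with hI0def
  set X : ℂ := ∫ x in Ioi (0:ℝ), (x:ℂ) * qstarIntegrand m v α u x with hXdef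
  have hsplitInt : ∫ x in Ioi (0:ℝ), (-β - (u:ℂ) * (x:ℂ) + T x) * qstarIntegrand m v α u x
      = ((-β + ∑ j ∈ Finset.Icc 1 m, α j) * I0 + (-(u:ℂ)) * X)
        - ∑ j ∈ Finset.Icc 1 m,
            α j * ∫ x in Ioi (0:ℝ), qstarIntegrand m v α (u + v j) x := by
    have e1 : ∫ x in Ioi (0:ℝ), (-β - (u:ℂ) * (x:ℂ) + T x) * qstarIntegrand m v α u x
        = ∫ x in Ioi (0:ℝ), (((-β + ∑ j ∈ Finset.Icc 1 m, α j) * qstarIntegrand m v α u x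
            + (-(u:ℂ)) * ((x:ℂ) * qstarIntegrand m v α u x))
          - ∑ j ∈ Finset.Icc 1 m, α j * qstarIntegrand m v α (u + v j) x) :=
      integral_congr_ae (ae_of_all _ hWeq)
    rw [e1, integral_sub hint1 hint2,
      integral_add ((hInt u (by linarith)).const_mul _) (hXint.const_mul _),
      integral_const_mul, integral_const_mul,
      integral_finset_sum _ (fun j hj => (hInt (u + v j)
        (by linarith [hvnn j (Finset.mem_Icc.mp hj).2])).const_mul _)]
    rw [← hI0def, ← hXdef]
    congr 1
    apply Finset.sum_congr rfl
    intro j hj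
    rw [integral_const_mul]
  have hfinal : ((-β + ∑ j ∈ Finset.Icc 1 m, α j) * I0 + (-(u:ℂ)) * X)
      - ∑ j ∈ Finset.Icc 1 m,
          α j * ∫ x in Ioi (0:ℝ), qstarIntegrand m v α (u + v j) x = 0 := by
    rw [← hsplitInt]; exact hFTC
  have hqeq : qstar m v α = fun y : ℝ =>
      (Complex.Gamma (-β))⁻¹ * ∫ x in Ioi (0:ℝ), qstarIntegrand m v α y x := by
    funext y
    simp only [qstar, ← hβdef]
  have hd : HasDerivAt (qstar m v α)
      ((Complex.Gamma (-β))⁻¹ * ∫ x in Ioi (0:ℝ), -(x:ℂ) * qstarIntegrand m v α u x) u := by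
    rw [hqeq]
    exact key.2.const_mul _
  refine ⟨hInt u (by linarith), hd.differentiableAt, ?_⟩
  rw [hd.deriv]
  have hXneg : ∫ x in Ioi (0:ℝ), -(x:ℂ) * qstarIntegrand m v α u x = -X := by
    rw [hXdef, ← integral_neg]
    exact integral_congr_ae (ae_of_all _ fun x => by ring)
  have hins : Finset.range (m+1) = insert 0 (Finset.Icc 1 m) := by
    ext j
    simp only [Finset.mem_range, Finset.mem_insert, Finset.mem_Icc, Nat.lt_succ_iff]
    omega
  have hβs : β = α 0 + ∑ j ∈ Finset.Icc 1 m, α j := by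
    rw [hβdef, hins, Finset.sum_insert (by simp)]
  rw [hins, Finset.sum_insert (by simp), hv0, add_zero]
  simp only [hqeq]
  rw [hXneg, ← hI0def]
  have hRHS : ∑ j ∈ Finset.Icc 1 m, α j * ((Complex.Gamma (-β))⁻¹
        * ∫ x in Ioi (0:ℝ), qstarIntegrand m v α (u + v j) x)
      = (Complex.Gamma (-β))⁻¹ * ∑ j ∈ Finset.Icc 1 m,
          α j * ∫ x in Ioi (0:ℝ), qstarIntegrand m v α (u + v j) x := by
    rw [Finset.mul_sum]
    exact Finset.sum_congr rfl fun j _ => by ring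
  rw [hRHS]
  linear_combination (Complex.Gamma (-β))⁻¹ * hfinal + ((Complex.Gamma (-β))⁻¹ * I0) * hβs
end

section
/- Assume Re(β) < 0. Then q*(u) is asymptotic to u^β at infinity, i.e. q*(u)/u^β → 1 as the real variable u → ∞ (here u^β denotes the complex power of the positive real u). -/
open MeasureTheory Filter Set


/-- Continuous extension of `t ↦ (1 - exp(-w t))/t`. -/
noncomputable def ftil (w t : ℝ) : ℝ := if t = 0 then w else (1 - Real.exp (-w * t)) / t

lemma ftil_cont (w : ℝ) : Continuous (ftil w) := by
  rw [continuous_iff_continuousAt]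
  intro x
  rcases eq_or_ne x 0 with rfl | hx
  · have hd : HasDerivAt (fun t : ℝ => 1 - Real.exp (-w * t)) w 0 := by
      have h1 : HasDerivAt (fun t : ℝ => -w * t) (-w) 0 := by
        simpa using (hasDerivAt_id (0:ℝ)).const_mul (-w)
      have h2 := h1.exp
      have h3 := h2.const_sub 1
      simpa using h3
    have hs := hasDerivAt_iff_tendsto_slope.mp hd
    have heq : ∀ t : ℝ, t ≠ 0 → slope (fun t : ℝ => 1 - Real.exp (-w * t)) 0 t = ftil w t := by
      intro t ht
      simp only [slope, ftil, if_neg ht, sub_zero]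
      rw [mul_zero, Real.exp_zero]
      simp [div_eq_inv_mul]
    rw [ContinuousAt]
    rw [← nhdsNE_sup_pure (0:ℝ), tendsto_sup]
    constructor
    · have : ftil w 0 = w := by simp [ftil]
      rw [this]
      refine hs.congr' ?_
      filter_upwards [self_mem_nhdsWithin] with t ht
      exact heq t ht
    · rw [tendsto_pure_left]
      intro s hs'
      exact mem_of_mem_nhds hs'
  · have hev : ∀ᶠ t in nhds x, ftil w t = (1 - Real.exp (-w * t)) / t := by
      filter_upwards [isOpen_compl_singleton.mem_nhds hx] with t ht
      exact if_neg ht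
    refine ContinuousAt.congr ?_ (hev.mono fun t ht => ht.symm)
    exact ((continuous_const.sub ((continuous_const.mul continuous_id).rexp)).continuousAt).div
      continuousAt_id hx

lemma integral_f_eq (w x : ℝ) :
    (∫ t in (0:ℝ)..x, (1 - Real.exp (-w * t)) / t) = ∫ t in (0:ℝ)..x, ftil w t := by
  apply intervalIntegral.integral_congr_ae
  have hae : ∀ᵐ t : ℝ, (1 - Real.exp (-w * t)) / t = ftil w t := by
    refine ae_iff.mpr (measure_mono_null ?_ (measure_singleton (0:ℝ)))
    intro t ht
    simp only [mem_setOf_eq] at ht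
    by_contra h
    exact ht (by simp [ftil, (show t ≠ 0 from fun h' => h (by simp [h']))])
  exact hae.mono fun t ht _ => ht

lemma H_cont (w : ℝ) : Continuous fun x => ∫ t in (0:ℝ)..x, ftil w t :=
  intervalIntegral.continuous_primitive (fun a b => (ftil_cont w).intervalIntegrable a b) 0

lemma H_bound (w x : ℝ) (hw : 0 ≤ w) (hx : 0 ≤ x) :
    |∫ t in (0:ℝ)..x, ftil w t| ≤ w * x := by
  have h := intervalIntegral.norm_integral_le_of_norm_le_const
    (a := (0:ℝ)) (b := x) (C := w) (f := ftil w) ?_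
  · rw [Real.norm_eq_abs] at h
    calc |∫ t in (0:ℝ)..x, ftil w t| ≤ w * |x - 0| := h
    _ = w * x := by rw [sub_zero, abs_of_nonneg hx]
  · intro t ht
    rw [uIoc_of_le hx] at ht
    obtain ⟨ht0, htx⟩ := ht
    have h1 : ftil w t = (1 - Real.exp (-w * t)) / t := if_neg ht0.ne'
    have hnum0 : 0 ≤ 1 - Real.exp (-w * t) := by
      have : Real.exp (-w * t) ≤ 1 := Real.exp_le_one_iff.mpr (by nlinarith)
      linarith
    have hnum : 1 - Real.exp (-w * t) ≤ w * t := by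
      have := Real.add_one_le_exp (-w * t)
      linarith
    rw [Real.norm_eq_abs, h1, abs_div, abs_of_nonneg hnum0, abs_of_pos ht0]
    rw [div_le_iff₀ ht0]
    linarith

theorem stmt1 (m : ℕ) (v : ℕ → ℝ) (α : ℕ → ℂ)
    (hv0 : v 0 = 0) (hv : ∀ i, i < m → v i < v (i + 1))
    (hα : ∀ j, 1 ≤ j → j ≤ m → α j ≠ 0)
    (hβ : (∑ j ∈ Finset.range (m + 1), α j).re < 0) :
    Tendsto (fun u : ℝ => qstar m v α u / (u : ℂ) ^ (∑ j ∈ Finset.range (m + 1), α j))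
      atTop (nhds 1) := by
  set β := ∑ j ∈ Finset.range (m + 1), α j with hβdef
  set g : ℝ → ℂ :=
    fun x => ∑ j ∈ Finset.Icc 1 m, α j * ((∫ t in (0:ℝ)..x, ftil (v j) t : ℝ) : ℂ) with hgdef
  have hg_cont : Continuous g := by
    apply continuous_finset_sum
    intro j _
    exact continuous_const.mul (Complex.continuous_ofReal.comp (H_cont (v j)))
  have hg0 : g 0 = 0 := by simp [hgdef]
  have hvnn : ∀ j, j ≤ m → 0 ≤ v j := by
    intro j hj
    induction j with
    | zero => simp [hv0]
    | succ n ih =>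
      have hn : n < m := Nat.lt_of_succ_le hj
      exact le_of_lt (lt_of_le_of_lt (ih hn.le) (hv n hn))
  set C : ℝ := ∑ j ∈ Finset.Icc 1 m, ‖α j‖ * v j with hCdef
  have hC : 0 ≤ C :=
    Finset.sum_nonneg fun j hj =>
      mul_nonneg (norm_nonneg _) (hvnn j (Finset.mem_Icc.mp hj).2)
  have hgb : ∀ x : ℝ, 0 ≤ x → ‖g x‖ ≤ C * x := by
    intro x hx
    calc ‖g x‖
        ≤ ∑ j ∈ Finset.Icc 1 m,
            ‖α j * ((∫ t in (0:ℝ)..x, ftil (v j) t : ℝ) : ℂ)‖ :=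
          norm_sum_le _ _
      _ ≤ ∑ j ∈ Finset.Icc 1 m, ‖α j‖ * (v j * x) := by
          apply Finset.sum_le_sum
          intro j hj
          rw [norm_mul, Complex.norm_real, Real.norm_eq_abs]
          exact mul_le_mul_of_nonneg_left
            (H_bound (v j) x (hvnn j (Finset.mem_Icc.mp hj).2) hx) (norm_nonneg _)
      _ = C * x := by
          rw [hCdef, Finset.sum_mul]
          exact Finset.sum_congr rfl fun j _ => (mul_assoc _ _ _).symm
  have hQ : ∀ u x : ℝ, qstarIntegrand m v α u x
      = (x:ℂ) ^ (-β - 1) * Complex.exp (-((u * x : ℝ) : ℂ) + g x) := by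
    intro u x
    simp only [qstarIntegrand, ← hβdef, hgdef]
    congr 2
    congr 1
    exact Finset.sum_congr rfl fun j _ => by rw [integral_f_eq]
  set F : ℝ → ℝ → ℂ :=
    fun u y => (y:ℂ) ^ (-β - 1) * Complex.exp (-(y:ℂ) + g (u⁻¹ * y)) with hFdef
  have hb : 0 < (-β).re := by simpa using neg_pos.mpr hβ
  -- substitution x = y/u
  have hsub : ∀ u : ℝ, 0 < u →
      (∫ x in Ioi (0:ℝ), qstarIntegrand m v α u x) = (u:ℂ) ^ β * ∫ y in Ioi (0:ℝ), F u y := by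
    intro u hu
    have h1 := MeasureTheory.integral_comp_mul_left_Ioi
      (fun x => qstarIntegrand m v α u x) 0 (inv_pos.mpr hu)
    rw [mul_zero, inv_inv] at h1
    have h2 : ∀ y ∈ Ioi (0:ℝ), qstarIntegrand m v α u (u⁻¹ * y) = (u:ℂ) ^ (β + 1) * F u y := by
      intro y hy
      have hy0 : (0:ℝ) < y := hy
      rw [hQ]
      rw [show ((u⁻¹ * y : ℝ) : ℂ) = ((u⁻¹ : ℝ) : ℂ) * ((y : ℝ) : ℂ) from Complex.ofReal_mul _ _]
      rw [Complex.mul_cpow_ofReal_nonneg (inv_nonneg.mpr hu.le) hy0.le]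
      rw [show (u * (u⁻¹ * y) : ℝ) = y from mul_inv_cancel_left₀ hu.ne' y]
      rw [Complex.ofReal_inv]
      rw [Complex.inv_cpow _ _
        (by rw [Complex.arg_ofReal_of_nonneg hu.le]; exact Real.pi_ne_zero.symm)]
      rw [← Complex.cpow_neg]
      rw [show -(-β - 1) = β + 1 by ring]
      rw [hFdef]
      ring
    rw [setIntegral_congr_fun measurableSet_Ioi h2, MeasureTheory.integral_const_mul] at h1
    have h4 := congrArg (fun z => (u⁻¹ : ℝ) • z) h1
    simp only [smul_smul, inv_mul_cancel₀ hu.ne', one_smul] at h4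
    rw [← h4, Complex.real_smul, Complex.ofReal_inv,
      Complex.cpow_add _ _ (Complex.ofReal_ne_zero.mpr hu.ne'), Complex.cpow_one]
    field_simp
    rw [div_eq_iff (Complex.ofReal_ne_zero.mpr hu.ne')]
    ring
  have hdiv : ∀ u : ℝ, 0 < u →
      qstar m v α u / (u:ℂ) ^ β = (Complex.Gamma (-β))⁻¹ * ∫ y in Ioi (0:ℝ), F u y := by
    intro u hu
    have hne : ((u:ℂ)) ^ β ≠ 0 := by
      rw [Complex.cpow_def_of_ne_zero (Complex.ofReal_ne_zero.mpr hu.ne')]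
      exact Complex.exp_ne_zero _
    simp only [qstar, ← hβdef]
    rw [hsub u hu]
    field_simp
  have hΓ : Complex.Gamma (-β) = ∫ y in Ioi (0:ℝ), (y:ℂ) ^ (-β - 1) * Complex.exp (-(y:ℂ)) := by
    rw [Complex.Gamma_eq_integral hb, Complex.GammaIntegral]
    refine setIntegral_congr_fun measurableSet_Ioi fun y hy => ?_
    rw [← Complex.ofReal_neg, Complex.ofReal_exp, Complex.ofReal_neg]
    rw [show -β - 1 = -β - 1 from rfl]
    ring
  have hmeas : ∀ u : ℝ, AEStronglyMeasurable (F u) (volume.restrict (Ioi 0)) := by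
    intro u
    apply ContinuousOn.aestronglyMeasurable _ measurableSet_Ioi
    apply ContinuousOn.mul
    · intro y hy
      exact (Complex.continuousAt_ofReal_cpow_const y _ (Or.inr (ne_of_gt hy))).continuousWithinAt
    · apply Continuous.continuousOn
      exact Complex.continuous_exp.comp
        ((Complex.continuous_ofReal.neg).add (hg_cont.comp (continuous_const.mul continuous_id)))
  have hbound : ∀ᶠ u : ℝ in atTop, ∀ᵐ y ∂(volume.restrict (Ioi 0)),
      ‖F u y‖ ≤ y ^ ((-β).re - 1) * Real.exp (-((2:ℝ)⁻¹ * y)) := by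
    filter_upwards [eventually_ge_atTop (max 1 (2 * C))] with u hu
    have hu1 : (1:ℝ) ≤ u := le_trans (le_max_left _ _) hu
    have hu0 : (0:ℝ) < u := lt_of_lt_of_le one_pos hu1
    have hu2 : 2 * C ≤ u := le_trans (le_max_right _ _) hu
    rw [ae_restrict_iff' measurableSet_Ioi]
    refine Eventually.of_forall fun y hy => ?_
    have hy0 : (0:ℝ) < y := hy
    have h1 : ‖F u y‖ = y ^ ((-β - 1).re) * Real.exp ((-(y:ℂ) + g (u⁻¹ * y)).re) := by
      rw [hFdef]
      rw [norm_mul, Complex.norm_cpow_eq_rpow_re_of_pos hy0, Complex.norm_exp]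
    rw [h1]
    have hx0 : (0:ℝ) ≤ u⁻¹ * y := mul_nonneg (inv_nonneg.mpr hu0.le) hy0.le
    have h3 : (g (u⁻¹ * y)).re ≤ C * (u⁻¹ * y) :=
      le_trans (Complex.re_le_norm _) (hgb _ hx0)
    have h5 := mul_le_mul_of_nonneg_right hu2 hx0
    rw [mul_inv_cancel_left₀ hu0.ne'] at h5
    have h2 : (-(y:ℂ) + g (u⁻¹ * y)).re ≤ -((2:ℝ)⁻¹ * y) := by
      simp only [Complex.add_re, Complex.neg_re, Complex.ofReal_re]
      linarith
    have hre : ((-β - 1)).re = (-β).re - 1 := by simp [Complex.sub_re]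
    rw [hre]
    exact mul_le_mul_of_nonneg_left (Real.exp_le_exp.mpr h2) (Real.rpow_nonneg hy0.le _)
  have hbi : IntegrableOn (fun y : ℝ => y ^ ((-β).re - 1) * Real.exp (-((2:ℝ)⁻¹ * y)))
      (Ioi (0:ℝ)) := by
    have h0 := Real.GammaIntegral_convergent hb
    have h1 : IntegrableOn
        (fun y : ℝ => Real.exp (-((2:ℝ)⁻¹ * y)) * ((2:ℝ)⁻¹ * y) ^ ((-β).re - 1)) (Ioi 0) := by
      have h2 := (integrableOn_Ioi_comp_mul_left_iff
        (fun x => Real.exp (-x) * x ^ ((-β).re - 1)) 0 (by norm_num : (0:ℝ) < 2⁻¹)).mpr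
      simp only [mul_zero] at h2
      exact h2 h0
    have h3 := h1.const_mul ((((2:ℝ)⁻¹) ^ ((-β).re - 1))⁻¹)
    refine IntegrableOn.congr_fun h3 (fun y hy => ?_) measurableSet_Ioi
    have hy0 : (0:ℝ) < y := hy
    have hp : (0:ℝ) < ((2:ℝ)⁻¹) ^ ((-β).re - 1) := Real.rpow_pos_of_pos (by norm_num) _
    rw [Real.mul_rpow (by norm_num) hy0.le]
    field_simp
  have hlim : ∀ᵐ y ∂(volume.restrict (Ioi (0:ℝ))),
      Tendsto (fun u => F u y) atTop (nhds ((y:ℂ) ^ (-β - 1) * Complex.exp (-(y:ℂ)))) := by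
    rw [ae_restrict_iff' measurableSet_Ioi]
    refine Eventually.of_forall fun y hy => ?_
    have h1 : Tendsto (fun u : ℝ => u⁻¹ * y) atTop (nhds 0) := by
      simpa using tendsto_inv_atTop_zero.mul_const y
    have h2 : Tendsto (fun u : ℝ => g (u⁻¹ * y)) atTop (nhds 0) := by
      have := (hg_cont.continuousAt (x := 0)).tendsto.comp h1
      rwa [hg0] at this
    have h4 : Tendsto (fun u : ℝ => -(y:ℂ) + g (u⁻¹ * y)) atTop (nhds (-(y:ℂ) + 0)) :=
      tendsto_const_nhds.add h2
    rw [add_zero] at h4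
    exact tendsto_const_nhds.mul ((Complex.continuous_exp.continuousAt).tendsto.comp h4)
  have hJ : Tendsto (fun u : ℝ => ∫ y in Ioi (0:ℝ), F u y) atTop
      (nhds (Complex.Gamma (-β))) := by
    rw [hΓ]
    exact tendsto_integral_filter_of_dominated_convergence _
      (Eventually.of_forall hmeas) hbound hbi hlim
  have hΓne : Complex.Gamma (-β) ≠ 0 := Complex.Gamma_ne_zero_of_re_pos hb
  have hfin : Tendsto (fun u : ℝ => (Complex.Gamma (-β))⁻¹ * ∫ y in Ioi (0:ℝ), F u y)
      atTop (nhds 1) := by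
    have := hJ.const_mul ((Complex.Gamma (-β))⁻¹)
    rwa [inv_mul_cancel₀ hΓne] at this
  refine Tendsto.congr' ?_ hfin
  filter_upwards [eventually_gt_atTop (0:ℝ)] with u hu
  exact (hdiv u hu).symm
end

section
/- Suppose q : ℝ → ℂ solves (E+), and suppose there is a complex number τ such that q(u)/u^τ → 1 as the real variable u → ∞ (u^τ the complex power of the positive real u). Then τ = β. -/
open MeasureTheory Filter Set

lemma aux_real (g G : ℝ → ℝ) (hd : ∀ t, HasDerivAt g (G t) t) (c l : ℝ)
    (hG : Tendsto G atTop (nhds c)) (h1 : Tendsto g atTop (nhds l)) : c = 0 := by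
  have key : ∀ n : ℕ, ∃ ξ ∈ Ioo (n:ℝ) (n+1), G ξ = (g (n+1) - g n) / ((n+1) - n) := by
    intro n
    exact exists_hasDerivAt_eq_slope g G (by linarith)
      (fun x _ => (hd x).continuousAt.continuousWithinAt) (fun x _ => hd x)
  choose ξ hξ hval using key
  have hξtop : Tendsto ξ atTop atTop :=
    tendsto_atTop_mono (fun n => (hξ n).1.le) tendsto_natCast_atTop_atTop
  have h2 : Tendsto (fun n => G (ξ n)) atTop (nhds c) := hG.comp hξtop
  have h3 : Tendsto (fun n : ℕ => (g ((n:ℝ)+1) - g n) / (((n:ℝ)+1) - n)) atTop (nhds 0) := by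
    have : Tendsto (fun n : ℕ => g ((n:ℝ)+1) - g n) atTop (nhds (l - l)) :=
      Tendsto.sub (h1.comp (tendsto_atTop_add_const_right _ _ tendsto_natCast_atTop_atTop))
        (h1.comp tendsto_natCast_atTop_atTop)
    simpa using this
  exact tendsto_nhds_unique (h2.congr fun n => hval n) h3

lemma aux_cx (g G : ℝ → ℂ) (hd : ∀ t, HasDerivAt g (G t) t) (c : ℂ)
    (hG : Tendsto G atTop (nhds c)) (h1 : Tendsto g atTop (nhds 1)) : c = 0 := by
  have hre : ∀ t, HasDerivAt (fun s => (g s).re) ((G t).re) t := fun t =>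
    (Complex.reCLM.hasFDerivAt.comp_hasDerivAt t (hd t))
  have him : ∀ t, HasDerivAt (fun s => (g s).im) ((G t).im) t := fun t =>
    (Complex.imCLM.hasFDerivAt.comp_hasDerivAt t (hd t))
  have h1' := (Complex.continuous_re.tendsto _).comp h1
  have h2' := (Complex.continuous_im.tendsto _).comp h1
  have hGre := (Complex.continuous_re.tendsto _).comp hG
  have hGim := (Complex.continuous_im.tendsto _).comp hG
  exact Complex.ext (aux_real _ _ hre _ _ hGre h1') (aux_real _ _ him _ _ hGim h2')

lemma aux_shift (τ : ℂ) (q : ℝ → ℂ) (w : ℝ) (hw : 0 ≤ w)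
    (hτ : Tendsto (fun u : ℝ => q u / (u : ℂ) ^ τ) atTop (nhds 1)) :
    Tendsto (fun u : ℝ => q (u + w) / (u : ℂ) ^ τ) atTop (nhds 1) := by
  have h1 : Tendsto (fun u : ℝ => q (u + w) / ((u + w : ℝ) : ℂ) ^ τ) atTop (nhds 1) :=
    hτ.comp (tendsto_atTop_add_const_right atTop w tendsto_id)
  have hb0 : Tendsto (fun u : ℝ => w / u) atTop (nhds 0) :=
    tendsto_const_nhds.div_atTop tendsto_id
  have hbase : Tendsto (fun u : ℝ => 1 + w / u) atTop (nhds 1) := by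
    simpa using tendsto_const_nhds.add hb0
  have hcont : ContinuousAt (fun x : ℝ => ((x : ℂ)) ^ τ) 1 := by
    apply (continuousAt_cpow_const ?_).comp Complex.continuous_ofReal.continuousAt
    simp [Complex.mem_slitPlane_iff]
  have h2 : Tendsto (fun u : ℝ => ((1 + w / u : ℝ) : ℂ) ^ τ) atTop (nhds 1) := by
    have := hcont.tendsto.comp hbase
    simp only [Function.comp_def] at this
    convert this using 2
    simp [Complex.one_cpow]
  have h3 := h1.mul h2
  rw [mul_one] at h3
  apply h3.congr'
  filter_upwards [eventually_gt_atTop (0:ℝ)] with u hu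
  have hb : (0:ℝ) < 1 + w / u := by positivity
  have key : ((u + w : ℝ) : ℂ) ^ τ = (u : ℂ) ^ τ * ((1 + w / u : ℝ) : ℂ) ^ τ := by
    rw [show u + w = u * (1 + w / u) by field_simp, Complex.ofReal_mul]
    exact Complex.mul_cpow_ofReal_nonneg hu.le hb.le τ
  have hne1 : (u : ℂ) ^ τ ≠ 0 := by
    rw [Ne, Complex.cpow_eq_zero_iff]; push_neg; intro h
    exact absurd (Complex.ofReal_eq_zero.mp h) (ne_of_gt hu)
  have hne2 : ((1 + w / u : ℝ) : ℂ) ^ τ ≠ 0 := by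
    rw [Ne, Complex.cpow_eq_zero_iff]; push_neg; intro h
    exact absurd (Complex.ofReal_eq_zero.mp h) (ne_of_gt hb)
  have habs : ∀ a x y : ℂ, x ≠ 0 → y ≠ 0 → a / (x * y) * y = a / x := by
    intros a x y hx hy; field_simp
  rw [key]; exact habs _ _ _ hne1 hne2

/-- `q : ℝ → ℂ` solves the advanced-argument equation (E+):
`q` is differentiable at every `u > 0` and
`u·q′(u) = ∑_{j=0}^m α_j q(u + v_j)` for all `u > 0`. -/
def SolvesEplus (m : ℕ) (v : ℕ → ℝ) (α : ℕ → ℂ) (q : ℝ → ℂ) : Prop :=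
  ∀ u : ℝ, 0 < u → DifferentiableAt ℝ q u ∧
    (u : ℂ) * deriv q u = ∑ j ∈ Finset.range (m + 1), α j * q (u + v j)

theorem stmt2 (m : ℕ) (v : ℕ → ℝ) (α : ℕ → ℂ)
    (hv0 : v 0 = 0) (hv : ∀ i, i < m → v i < v (i + 1))
    (hα : ∀ j, 1 ≤ j → j ≤ m → α j ≠ 0)
    (q : ℝ → ℂ) (hq : SolvesEplus m v α q) (τ : ℂ)
    (hτ : Tendsto (fun u : ℝ => q u / (u : ℂ) ^ τ) atTop (nhds 1)) :
    τ = ∑ j ∈ Finset.range (m + 1), α j := by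
  set β := ∑ j ∈ Finset.range (m + 1), α j with hβ
  have hvn : ∀ j, j ≤ m → 0 ≤ v j := by
    intro j
    induction j with
    | zero => intro _; simp [hv0]
    | succ k ih => intro h; exact le_of_lt (lt_of_le_of_lt (ih (by omega)) (hv k (by omega)))
  have A : ∀ j ∈ Finset.range (m + 1),
      Tendsto (fun u : ℝ => q (u + v j) / (u : ℂ) ^ τ) atTop (nhds 1) := fun j hj =>
    aux_shift τ q (v j) (hvn j (Nat.lt_succ_iff.mp (Finset.mem_range.mp hj))) hτ
  set E : ℝ → ℂ := fun t => Complex.exp (-(τ * t)) with hEdef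
  have hexpE : ∀ t : ℝ, ((Real.exp t : ℝ) : ℂ) ^ τ = Complex.exp (τ * t) := by
    intro t
    rw [Complex.cpow_def_of_ne_zero (by exact_mod_cast (Real.exp_pos t).ne'),
      ← Complex.ofReal_log (Real.exp_pos t).le, Real.log_exp, mul_comm]
  have hEeq : ∀ t : ℝ, E t = (((Real.exp t : ℝ) : ℂ) ^ τ)⁻¹ := by
    intro t; rw [hexpE, ← Complex.exp_neg]
  set g : ℝ → ℂ := fun t => q (Real.exp t) * E t with hgdef
  set G : ℝ → ℂ := fun t =>
    (∑ j ∈ Finset.range (m + 1), α j * q (Real.exp t + v j)) * E t - τ * g t with hGdef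
  have hdg : ∀ t, HasDerivAt g (G t) t := by
    intro t
    have hu : 0 < Real.exp t := Real.exp_pos t
    obtain ⟨hdiff, heq⟩ := hq _ hu
    have h1 : HasDerivAt (fun s => q (Real.exp s)) (Real.exp t • deriv q (Real.exp t)) t :=
      (hdiff.hasDerivAt).scomp t (Real.hasDerivAt_exp t)
    have h2 : HasDerivAt E (-τ * E t) t := by
      have hin : HasDerivAt (fun z : ℂ => -(τ * z)) (-τ) (t : ℂ) := by
        have h := ((hasDerivAt_id (t : ℂ)).const_mul τ).neg; simp only [id, mul_one] at h; exact h
      have hz : HasDerivAt (fun z : ℂ => Complex.exp (-(τ * z)))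
          (Complex.exp (-(τ * (t : ℂ))) * -τ) (t : ℂ) := by
        exact (Complex.hasDerivAt_exp (-(τ * (t : ℂ)))).comp (t : ℂ) hin
      have := hz.comp_ofReal
      simp only [hEdef]
      convert this using 1
      ring
    have h3 := h1.mul h2
    refine h3.congr_deriv ?_
    rw [hGdef]
    simp only [hgdef]
    rw [← heq, Complex.real_smul]
    ring
  have hlg : Tendsto g atTop (nhds 1) := by
    have := hτ.comp Real.tendsto_exp_atTop
    apply this.congr
    intro t
    simp [hgdef, hEeq t, div_eq_mul_inv, Function.comp]
  have hlG : Tendsto G atTop (nhds (β - τ)) := by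
    have hsum : Tendsto
        (fun t => ∑ j ∈ Finset.range (m + 1), α j * (q (Real.exp t + v j) * E t))
        atTop (nhds β) := by
      have := tendsto_finset_sum (Finset.range (m + 1))
        (fun j hj => (((A j hj).comp Real.tendsto_exp_atTop).const_mul (α j)))
      rw [hβ]
      convert this using 2 with t
      · apply Finset.sum_congr rfl
        intro j hj
        simp [hEeq t, div_eq_mul_inv, Function.comp]
      · simp
    have h4 : Tendsto (fun t => τ * g t) atTop (nhds τ) := by
      simpa using hlg.const_mul τ
    have := hsum.sub h4
    apply this.congr
    intro t
    show _ = (∑ j ∈ Finset.range (m + 1), α j * q (Real.exp t + v j)) * E t - τ * g t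
    rw [Finset.sum_mul]
    congr 1
    exact Finset.sum_congr rfl fun j _ => (mul_assoc _ _ _).symm
  have h0 : β - τ = 0 := aux_cx g G hdg (β - τ) hlG hlg
  exact (sub_eq_zero.mp h0).symm
end

section
/- Suppose q_1 : ℝ → ℂ and q_2 : ℝ → ℂ both solve (E+), and suppose there are complex numbers τ_1, τ_2 such that q_i(u)/u^{τ_i} → 1 as the real variable u → ∞ for i = 1, 2. Then q_1(u) = q_2(u) for all u > 0. -/
open MeasureTheory Filter Set

open intervalIntegral Topology

section Aux
variable {m : ℕ} {v : ℕ → ℝ} {α : ℕ → ℂ} {q : ℝ → ℂ}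

lemma hasDerivAt_cpow_ofReal' (w : ℂ) {x : ℝ} (hx : 0 < x) :
    HasDerivAt (fun y : ℝ => (y : ℂ) ^ w) (w * (x : ℂ) ^ (w - 1)) x := by
  rcases eq_or_ne w 0 with rfl | hw
  · have : HasDerivAt (fun _ : ℝ => (1:ℂ)) 0 x := hasDerivAt_const x 1
    simpa using this.congr_of_eventuallyEq
      (Filter.Eventually.of_forall fun y => by simp)
  · have hr : w - 1 ≠ -1 := by
      intro h; apply hw; linear_combination h
    have h := (hasDerivAt_ofReal_cpow_const' hx.ne' hr).const_mul w
    simp only [sub_add_cancel] at h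
    have : (fun y : ℝ => w * ((y:ℂ) ^ w / w)) = fun y : ℝ => (y:ℂ) ^ w := by
      funext y; field_simp
    rw [this] at h
    simpa [mul_comm] using h

lemma hasDerivAt_mul_cpow {u : ℝ} (hu : 0 < u) (hq : DifferentiableAt ℝ q u) (w : ℂ) :
    HasDerivAt (fun t : ℝ => q t * (t:ℂ)^w)
      (deriv q u * (u:ℂ)^w + q u * (w * (u:ℂ)^(w-1))) u :=
  hq.hasDerivAt.mul (hasDerivAt_cpow_ofReal' w hu)

lemma deriv_expr (hq : SolvesEplus m v α q) {u : ℝ} (hu : 0 < u) (w : ℂ) :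
    HasDerivAt (fun t : ℝ => q t * (t:ℂ)^w)
      ((u:ℂ)^(w-1) * ((∑ j ∈ Finset.range (m+1), α j * q (u + v j)) + w * q u)) u := by
  have h := hasDerivAt_mul_cpow hu (hq u hu).1 w
  convert h using 1
  have hu0 : (u:ℂ) ≠ 0 := by exact_mod_cast hu.ne'
  have h1 : (u:ℂ)^w = (u:ℂ)^(w-1) * u := by
    rw [Complex.cpow_sub _ _ hu0, Complex.cpow_one]; field_simp
  rw [h1, mul_add, ← (hq u hu).2]
  ring

lemma v_mono (hv0 : v 0 = 0) (hv : ∀ i, i < m → v i < v (i + 1)) :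
    ∀ j, j ≤ m → ∀ i, i ≤ j → v i ≤ v j := by
  intro j
  induction j with
  | zero => intro _ i hi; interval_cases i; exact le_rfl
  | succ k ih =>
    intro hk i hi
    rcases Nat.lt_succ_iff_lt_or_eq.mp (Nat.lt_succ_of_le hi) with h | rfl
    · exact (ih (le_of_lt (Nat.lt_of_lt_of_le (Nat.lt_succ_self k) hk)) i (Nat.lt_succ_iff.mp h)).trans
        (le_of_lt (hv k (Nat.lt_of_succ_le hk)))
    · exact le_rfl

lemma v_nonneg (hv0 : v 0 = 0) (hv : ∀ i, i < m → v i < v (i + 1)) {j : ℕ} (hj : j ≤ m) :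
    0 ≤ v j := hv0 ▸ v_mono hv0 hv j hj 0 (Nat.zero_le _)

lemma v_le_vm (hv0 : v 0 = 0) (hv : ∀ i, i < m → v i < v (i + 1)) {j : ℕ} (hj : j ≤ m) :
    v j ≤ v m := v_mono hv0 hv m le_rfl j hj

lemma derivEq (hq : SolvesEplus m v α q) {u : ℝ} (hu : 0 < u) :
    deriv q u = (u:ℂ)⁻¹ * ∑ j ∈ Finset.range (m+1), α j * q (u + v j) := by
  have hu0 : (u:ℂ) ≠ 0 := by exact_mod_cast hu.ne'
  rw [← (hq u hu).2]
  field_simp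

lemma sol_contOn (hq : SolvesEplus m v α q) : ContinuousOn q (Ioi (0:ℝ)) :=
  fun u hu => ((hq u hu).1.continuousAt).continuousWithinAt

lemma derivContOn (hv0 : v 0 = 0) (hv : ∀ i, i < m → v i < v (i + 1))
    (hq : SolvesEplus m v α q) : ContinuousOn (deriv q) (Ioi (0:ℝ)) := by
  have h : ContinuousOn (fun u : ℝ => (u:ℂ)⁻¹ * ∑ j ∈ Finset.range (m+1), α j * q (u + v j))
      (Ioi (0:ℝ)) := by
    apply ContinuousOn.mul
    · exact ContinuousOn.inv₀ (Complex.continuous_ofReal.continuousOn)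
        (fun u hu => by exact_mod_cast (ne_of_gt (mem_Ioi.mp hu)))
    · apply continuousOn_finset_sum
      intro j hj
      apply continuousOn_const.mul
      intro u hu
      have hvj : 0 ≤ v j := v_nonneg hv0 hv (Nat.lt_succ_iff.mp (Finset.mem_range.mp hj))
      have hadd : ContinuousAt (fun t : ℝ => t + v j) u :=
        (continuous_id.add continuous_const).continuousAt
      have hqc : ContinuousAt q (u + v j) :=
        (hq (u + v j) (by have := mem_Ioi.mp hu; linarith)).1.continuousAt
      exact (ContinuousAt.comp (x := u) hqc hadd).continuousWithinAt
  exact h.congr (fun u hu => derivEq hq (mem_Ioi.mp hu))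

end Aux

section Aux2

lemma norm_cpow_real {x : ℝ} (hx : 0 < x) (w : ℂ) : ‖(x:ℂ) ^ w‖ = x ^ w.re := by
  rw [Complex.norm_cpow_eq_rpow_re_of_pos hx]

lemma cpow_contOn (w : ℂ) : ContinuousOn (fun t : ℝ => (t:ℂ) ^ w) (Ioi (0:ℝ)) :=
  fun t ht => (Complex.continuousAt_ofReal_cpow_const t w (Or.inr (ne_of_gt (mem_Ioi.mp ht)))).continuousWithinAt

lemma rpow_add_le {c s u : ℝ} (hs : 0 ≤ s) (hsu : s ≤ u) (hu : 0 < u) :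
    (u + s) ^ c ≤ max 1 (2 ^ c) * u ^ c := by
  rcases le_or_gt 0 c with hc | hc
  · calc (u + s) ^ c ≤ (2 * u) ^ c :=
          Real.rpow_le_rpow (by linarith) (by linarith) hc
      _ = 2 ^ c * u ^ c := Real.mul_rpow (by norm_num) hu.le
      _ ≤ max 1 (2 ^ c) * u ^ c := by
          apply mul_le_mul_of_nonneg_right (le_max_right _ _) (Real.rpow_nonneg hu.le _)
  · calc (u + s) ^ c ≤ u ^ c := Real.rpow_le_rpow_of_nonpos hu (by linarith) hc.le
      _ ≤ max 1 (2 ^ c) * u ^ c := by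
          nth_rewrite 1 [← one_mul (u ^ c)]
          exact mul_le_mul_of_nonneg_right (le_max_left _ _) (Real.rpow_nonneg hu.le _)

end Aux2

lemma decay_bound {f f' : ℝ → ℂ} {U M e : ℝ} (hU : 0 < U) (hM : 0 ≤ M)
    (hf : ∀ t, U ≤ t → HasDerivAt f (f' t) t) (hc : ContinuousOn f' (Ici U))
    (hbd : ∀ t, U ≤ t → ‖f' t‖ ≤ M * t ^ e) (he : e < -1)
    (hlim : ∀ δ : ℝ, 0 < δ → ∀ u₀ : ℝ, ∃ T, u₀ ≤ T ∧ ‖f T‖ ≤ δ) :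
    ∀ u, U ≤ u → ‖f u‖ ≤ M / (-(e+1)) * u ^ (e+1) := by
  intro u hu
  have hu0 : 0 < u := hU.trans_le hu
  refine le_of_forall_pos_le_add fun δ hδ => ?_
  obtain ⟨T, hT, hTδ⟩ := hlim δ hδ u
  have hsub : uIcc u T ⊆ Ici U := by
    rw [uIcc_of_le hT]; exact fun x hx => le_trans hu hx.1
  have hint : IntervalIntegrable f' volume u T :=
    (hc.mono hsub).intervalIntegrable
  have hftc : ∫ t in u..T, f' t = f T - f u :=
    integral_eq_sub_of_hasDerivAt (fun t ht => hf t (hsub ht)) hint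
  have h1 : ‖f u‖ ≤ ‖f T‖ + ‖∫ t in u..T, f' t‖ := by
    have : f u = f T - ∫ t in u..T, f' t := by rw [hftc]; ring
    rw [this]
    exact norm_sub_le _ _
  -- bound the integral
  have hbint : IntervalIntegrable (fun t : ℝ => M * t ^ e) volume u T := by
    apply ContinuousOn.intervalIntegrable
    apply continuousOn_const.mul
    intro t ht
    have ht0 : t ≠ 0 := by
      have := hsub ht; exact (hU.trans_le this).ne'
    exact (Real.continuousAt_rpow_const t e (Or.inl ht0)).continuousWithinAt
  have h2 : ‖∫ t in u..T, f' t‖ ≤ |∫ t in u..T, M * t ^ e| := by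
    apply norm_integral_le_abs_of_norm_le _ hbint
    refine (ae_restrict_iff' measurableSet_uIoc).2 (ae_of_all _ fun t ht => ?_)
    have : U ≤ t := by
      rw [uIoc_of_le hT] at ht; exact le_trans hu (le_of_lt ht.1)
    exact hbd t this
  have hval : ∫ t in u..T, M * t ^ e = M * ((T ^ (e+1) - u ^ (e+1)) / (e+1)) := by
    rw [intervalIntegral.integral_const_mul, integral_rpow]
    right
    constructor
    · exact ne_of_lt he
    · intro h0
      rw [uIcc_of_le hT] at h0
      exact absurd h0.1 (not_le.mpr hu0)
  have hTu : T ^ (e+1) ≤ u ^ (e+1) :=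
    Real.rpow_le_rpow_of_nonpos hu0 hT (by linarith)
  have hT0 : (0:ℝ) ≤ T ^ (e+1) := Real.rpow_nonneg (by linarith) _
  have h3 : |∫ t in u..T, M * t ^ e| ≤ M / (-(e+1)) * u ^ (e+1) := by
    rw [hval]
    have he1 : 0 < -(e+1) := by linarith
    rw [abs_mul, abs_of_nonneg hM, abs_div]
    rw [abs_of_nonpos (by linarith : T ^ (e+1) - u ^ (e+1) ≤ 0), abs_of_neg (by linarith : e + 1 < 0)]
    rw [div_mul_eq_mul_div, mul_div_assoc]
    gcongr
    linarith
  calc ‖f u‖ ≤ ‖f T‖ + ‖∫ t in u..T, f' t‖ := h1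
    _ ≤ δ + M / (-(e+1)) * u ^ (e+1) := add_le_add hTδ (h2.trans h3)
    _ = M / (-(e+1)) * u ^ (e+1) + δ := by ring

section DB
variable {m : ℕ} {v : ℕ → ℝ} {α : ℕ → ℂ} {r : ℝ → ℂ}

lemma derivBound (hv0 : v 0 = 0) (hv : ∀ i, i < m → v i < v (i + 1))
    (hr : SolvesEplus m v α r) {U ε c : ℝ} (hU : 0 < U) (hUv : v m ≤ U) (hε : 0 ≤ ε)
    (hbd : ∀ t, U ≤ t → ‖r t‖ ≤ ε * t ^ c) :
    ∀ t, U ≤ t → ‖deriv r t‖ ≤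
      ((∑ j ∈ Finset.range (m+1), ‖α j‖) * max 1 (2 ^ c) * ε) * t ^ (c - 1) := by
  intro t ht
  have ht0 : 0 < t := hU.trans_le ht
  rw [derivEq hr ht0]
  rw [norm_mul]
  have h1 : ‖((t:ℝ):ℂ)⁻¹‖ = t⁻¹ := by
    rw [norm_inv, Complex.norm_real, Real.norm_of_nonneg ht0.le]
  rw [h1]
  have h2 : ‖∑ j ∈ Finset.range (m+1), α j * r (t + v j)‖ ≤
      (∑ j ∈ Finset.range (m+1), ‖α j‖) * (max 1 (2 ^ c) * ε * t ^ c) := by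
    calc ‖∑ j ∈ Finset.range (m+1), α j * r (t + v j)‖
        ≤ ∑ j ∈ Finset.range (m+1), ‖α j * r (t + v j)‖ := norm_sum_le _ _
      _ ≤ ∑ j ∈ Finset.range (m+1), ‖α j‖ * (max 1 (2 ^ c) * ε * t ^ c) := by
          apply Finset.sum_le_sum
          intro j hj
          rw [norm_mul]
          apply mul_le_mul_of_nonneg_left _ (norm_nonneg _)
          have hjm : j ≤ m := Nat.lt_succ_iff.mp (Finset.mem_range.mp hj)
          have hvj : 0 ≤ v j := v_nonneg hv0 hv hjm
          have : ‖r (t + v j)‖ ≤ ε * (t + v j) ^ c := hbd _ (by linarith)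
          calc ‖r (t + v j)‖ ≤ ε * (t + v j) ^ c := this
            _ ≤ ε * (max 1 (2 ^ c) * t ^ c) := by
                apply mul_le_mul_of_nonneg_left _ hε
                exact rpow_add_le hvj (le_trans (v_le_vm hv0 hv hjm) (hUv.trans ht)) ht0
            _ = max 1 (2 ^ c) * ε * t ^ c := by ring
      _ = (∑ j ∈ Finset.range (m+1), ‖α j‖) * (max 1 (2 ^ c) * ε * t ^ c) := by
          rw [← Finset.sum_mul]
  calc t⁻¹ * ‖∑ j ∈ Finset.range (m+1), α j * r (t + v j)‖
      ≤ t⁻¹ * ((∑ j ∈ Finset.range (m+1), ‖α j‖) * (max 1 (2 ^ c) * ε * t ^ c)) := by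
        apply mul_le_mul_of_nonneg_left h2 (inv_nonneg.mpr ht0.le)
    _ = ((∑ j ∈ Finset.range (m+1), ‖α j‖) * max 1 (2 ^ c) * ε) * (t ^ c * t⁻¹) := by ring
    _ = ((∑ j ∈ Finset.range (m+1), ‖α j‖) * max 1 (2 ^ c) * ε) * t ^ (c - 1) := by
        rw [Real.rpow_sub ht0, Real.rpow_one, div_eq_mul_inv]

end DB

lemma cpow_ratio_tendsto (τ : ℂ) (w : ℝ) (hw : 0 ≤ w) :
    Tendsto (fun t : ℝ => ((t+w:ℝ):ℂ)^τ * ((t:ℝ):ℂ)^(-τ)) atTop (𝓝 1) := by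
  have key : (fun t : ℝ => Complex.exp ((Real.log ((t+w)/t) : ℂ) * τ)) =ᶠ[atTop]
      (fun t : ℝ => ((t+w:ℝ):ℂ)^τ * ((t:ℝ):ℂ)^(-τ)) := by
    filter_upwards [eventually_gt_atTop (0:ℝ)] with t ht
    have htw : (0:ℝ) < t + w := by linarith
    have h1 : ((t+w:ℝ):ℂ) ≠ 0 := by exact_mod_cast htw.ne'
    have h2 : ((t:ℝ):ℂ) ≠ 0 := by exact_mod_cast ht.ne'
    rw [Complex.cpow_def_of_ne_zero h1, Complex.cpow_def_of_ne_zero h2, ← Complex.exp_add]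
    congr 1
    rw [← Complex.ofReal_log htw.le, ← Complex.ofReal_log ht.le,
      Real.log_div htw.ne' ht.ne', Complex.ofReal_sub]
    ring
  have l1 : Tendsto (fun t:ℝ => (t+w)/t) atTop (𝓝 1) := by
    have : (fun t:ℝ => 1 + w * t⁻¹) =ᶠ[atTop] (fun t:ℝ => (t+w)/t) := by
      filter_upwards [eventually_gt_atTop (0:ℝ)] with t ht
      field_simp
    have h2 : Tendsto (fun t:ℝ => 1 + w * t⁻¹) atTop (𝓝 1) := by
      have := (tendsto_inv_atTop_zero (𝕜 := ℝ)).const_mul w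
      simpa using tendsto_const_nhds.add this
    exact h2.congr' this
  have l2 : Tendsto (fun t:ℝ => Real.log ((t+w)/t)) atTop (𝓝 0) := by
    have := ((Real.continuousAt_log one_ne_zero).tendsto).comp l1
    simpa [Real.log_one, Function.comp_def] using this
  have l3 : Tendsto (fun t:ℝ => ((Real.log ((t+w)/t) : ℝ):ℂ) * τ) atTop (𝓝 0) := by
    have := ((Complex.continuous_ofReal.tendsto (0:ℝ)).comp l2).mul_const τ
    simpa using this
  have l4 : Tendsto (fun t:ℝ => Complex.exp ((Real.log ((t+w)/t) : ℂ) * τ)) atTop (𝓝 1) := by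
    have := (Complex.continuous_exp.tendsto (0:ℂ)).comp l3
    simpa [Complex.exp_zero, Function.comp_def] using this
  exact l4.congr' key

section Casc
variable {m : ℕ} {v : ℕ → ℝ} {α : ℕ → ℂ} {r : ℝ → ℂ}

lemma norm_r_eq {β : ℂ} {u : ℝ} (hu : 0 < u) (r : ℝ → ℂ) :
    ‖r u‖ = ‖r u * (u:ℂ) ^ (-β)‖ * u ^ β.re := by
  rw [norm_mul, norm_cpow_real hu, Complex.neg_re, mul_assoc,
    ← Real.rpow_add hu, neg_add_cancel, Real.rpow_zero, mul_one]

lemma cascade (hv0 : v 0 = 0) (hv : ∀ i, i < m → v i < v (i + 1))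
    (hr : SolvesEplus m v α r)
    (β : ℂ) (hβ : β = ∑ j ∈ Finset.range (m+1), α j)
    (hg : Tendsto (fun u : ℝ => r u * (u:ℂ) ^ (-β)) atTop (𝓝 0)) :
    ∀ n : ℕ, ∀ ε : ℝ, 0 < ε → ∃ U : ℝ,
      (1 ≤ U ∧ v m ≤ U) ∧ ∀ u, U ≤ u → ‖r u‖ ≤ ε * u ^ (β.re - n) := by
  have hvm : 0 ≤ v m := v_nonneg hv0 hv le_rfl
  intro n
  induction n with
  | zero =>
    intro ε hε
    obtain ⟨N, hN⟩ := Metric.tendsto_atTop.mp hg ε hε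
    refine ⟨max N (max 1 (v m)), ⟨le_max_of_le_right (le_max_left _ _),
      le_max_of_le_right (le_max_right _ _)⟩, fun u hu => ?_⟩
    have hu0 : (0:ℝ) < u := lt_of_lt_of_le one_pos (le_trans (le_max_of_le_right (le_max_left _ _)) hu)
    have h1 : ‖r u * (u:ℂ) ^ (-β)‖ ≤ ε := by
      have := hN u (le_trans (le_max_left _ _) hu)
      rw [dist_zero_right] at this
      exact this.le
    rw [norm_r_eq hu0 r (β := β)]
    push_cast
    rw [sub_zero]
    exact mul_le_mul_of_nonneg_right h1 (Real.rpow_nonneg hu0.le _)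
  | succ n ih =>
    intro ε hε
    set A := ∑ j ∈ Finset.range (m+1), ‖α j‖ with hA
    have hA0 : 0 ≤ A := Finset.sum_nonneg fun j _ => norm_nonneg _
    set c : ℝ := β.re - n with hc
    set K₁ : ℝ := max 1 (2 ^ c) with hK₁
    set K₂ : ℝ := max 1 (2 ^ (c-1)) with hK₂
    have hK₁1 : (1:ℝ) ≤ K₁ := le_max_left _ _
    have hK₂1 : (1:ℝ) ≤ K₂ := le_max_left _ _
    set C : ℝ := A^2 * K₁ * K₂ * v m + 1 with hC
    have hC0 : 0 < C := by positivity
    have hε₀ : 0 < ε / C := div_pos hε hC0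
    obtain ⟨U, ⟨hU1, hUv⟩, hbd⟩ := ih (ε / C) hε₀
    have hU0 : (0:ℝ) < U := lt_of_lt_of_le one_pos hU1
    have hD := derivBound hv0 hv hr hU0 hUv hε₀.le hbd
    set M : ℝ := A^2 * K₁ * K₂ * v m * (ε / C) with hM
    have hM0 : 0 ≤ M := by positivity
    set g : ℝ → ℂ := fun u : ℝ => r u * (u:ℂ) ^ (-β) with hgdef
    set G : ℝ → ℂ := fun u : ℝ => (u:ℂ)^(-β-1) *
      ((∑ j ∈ Finset.range (m+1), α j * r (u + v j)) + (-β) * r u) with hG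
    have hder : ∀ t, U ≤ t → HasDerivAt g (G t) t :=
      fun t ht => deriv_expr hr (hU0.trans_le ht) (-β)
    have hIci : Ici U ⊆ Ioi (0:ℝ) := fun x hx => lt_of_lt_of_le hU0 hx
    have hrcont : ContinuousOn r (Ioi (0:ℝ)) := fun u hu => ((hr u hu).1.continuousAt).continuousWithinAt
    have hGcont : ContinuousOn G (Ici U) := by
      apply ContinuousOn.mul ((cpow_contOn (-β-1)).mono hIci)
      apply ContinuousOn.add
      · apply continuousOn_finset_sum
        intro j hj
        apply continuousOn_const.mul
        intro u hu
        have hjm : j ≤ m := Nat.lt_succ_iff.mp (Finset.mem_range.mp hj)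
        have hvj : 0 ≤ v j := v_nonneg hv0 hv hjm
        have hu0 : 0 < u := lt_of_lt_of_le hU0 hu
        have hadd : ContinuousAt (fun t : ℝ => t + v j) u := (continuous_id.add continuous_const).continuousAt
        have hqc : ContinuousAt r (u + v j) := (hr (u + v j) (by linarith)).1.continuousAt
        exact (ContinuousAt.comp (x := u) hqc hadd).continuousWithinAt
      · exact continuousOn_const.mul (hrcont.mono hIci)
    have hGbd : ∀ t, U ≤ t → ‖G t‖ ≤ M * t ^ (-(n:ℝ)-2) := by
      intro t ht
      have ht0 : 0 < t := hU0.trans_le ht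
      rw [hG]
      simp only []
      rw [norm_mul, norm_cpow_real ht0]
      have hre : (-β-1).re = -β.re - 1 := by simp
      rw [hre]
      -- rewrite the sum
      have hS : (∑ j ∈ Finset.range (m+1), α j * r (t + v j)) + (-β) * r t
          = ∑ j ∈ Finset.range (m+1), α j * (r (t + v j) - r t) := by
        rw [hβ, neg_mul, Finset.sum_mul, ← sub_eq_add_neg, ← Finset.sum_sub_distrib]
        simp [mul_sub]
      rw [hS]
      have hterm : ∀ j ∈ Finset.range (m+1),
          ‖α j * (r (t + v j) - r t)‖ ≤ ‖α j‖ * (A * K₁ * K₂ * (ε/C) * v m * t ^ (c-1)) := by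
        intro j hj
        have hjm : j ≤ m := Nat.lt_succ_iff.mp (Finset.mem_range.mp hj)
        have hvj : 0 ≤ v j := v_nonneg hv0 hv hjm
        have hvjm : v j ≤ v m := v_le_vm hv0 hv hjm
        rw [norm_mul]
        apply mul_le_mul_of_nonneg_left _ (norm_nonneg _)
        -- FTC
        have hsub : uIcc t (t + v j) ⊆ Ioi (0:ℝ) := by
          rw [uIcc_of_le (by linarith)]
          intro x hx; exact lt_of_lt_of_le ht0 hx.1
        have hftc : ∫ s in t..(t + v j), deriv r s = r (t + v j) - r t :=
          integral_eq_sub_of_hasDerivAt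
            (fun s hs => ((hr s (hsub hs)).1.hasDerivAt))
            (((derivContOn hv0 hv hr).mono hsub).intervalIntegrable)
        rw [← hftc]
        have hbound : ∀ s ∈ uIoc t (t + v j), ‖deriv r s‖ ≤ (A * K₁ * (ε/C)) * (K₂ * t ^ (c-1)) := by
          intro s hs
          rw [uIoc_of_le (by linarith : t ≤ t + v j)] at hs
          have hst : t ≤ s := hs.1.le
          have hs1 : ‖deriv r s‖ ≤ (A * K₁ * (ε/C)) * s ^ (c-1) := hD s (ht.trans hst)
          apply hs1.trans
          apply mul_le_mul_of_nonneg_left _ (by positivity)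
          have : s = t + (s - t) := by ring
          rw [this]
          apply rpow_add_le (by linarith) _ ht0
          have : s - t ≤ v j := by linarith [hs.2]
          linarith [hUv.trans ht, hvjm]
        calc ‖∫ s in t..(t + v j), deriv r s‖
            ≤ (A * K₁ * (ε/C)) * (K₂ * t ^ (c-1)) * |t + v j - t| :=
              intervalIntegral.norm_integral_le_of_norm_le_const hbound
          _ = (A * K₁ * (ε/C)) * (K₂ * t ^ (c-1)) * v j := by
              rw [add_sub_cancel_left, abs_of_nonneg hvj]
          _ ≤ (A * K₁ * (ε/C)) * (K₂ * t ^ (c-1)) * v m := by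
              apply mul_le_mul_of_nonneg_left hvjm (by positivity)
          _ = A * K₁ * K₂ * (ε/C) * v m * t ^ (c-1) := by ring
      calc t ^ (-β.re - 1) * ‖∑ j ∈ Finset.range (m+1), α j * (r (t + v j) - r t)‖
          ≤ t ^ (-β.re - 1) * ∑ j ∈ Finset.range (m+1), ‖α j * (r (t + v j) - r t)‖ := by
            apply mul_le_mul_of_nonneg_left (norm_sum_le _ _) (Real.rpow_nonneg ht0.le _)
        _ ≤ t ^ (-β.re - 1) * ∑ j ∈ Finset.range (m+1), ‖α j‖ * (A * K₁ * K₂ * (ε/C) * v m * t ^ (c-1)) := by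
            apply mul_le_mul_of_nonneg_left (Finset.sum_le_sum hterm) (Real.rpow_nonneg ht0.le _)
        _ = (A^2 * K₁ * K₂ * v m * (ε/C)) * (t ^ (-β.re - 1) * t ^ (c-1)) := by
            rw [← Finset.sum_mul, ← hA]; ring
        _ = M * t ^ (-(n:ℝ)-2) := by
            rw [← Real.rpow_add ht0, ← hM]
            congr 1
            rw [hc]; ring
    have he : -(n:ℝ)-2 < -1 := by
      have : (0:ℝ) ≤ n := Nat.cast_nonneg n
      linarith
    have hlim : ∀ δ : ℝ, 0 < δ → ∀ u₀ : ℝ, ∃ T, u₀ ≤ T ∧ ‖g T‖ ≤ δ := by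
      intro δ hδ u₀
      obtain ⟨N, hN⟩ := Metric.tendsto_atTop.mp hg δ hδ
      refine ⟨max u₀ N, le_max_left _ _, ?_⟩
      have := hN _ (le_max_right u₀ N)
      rw [dist_zero_right] at this
      exact this.le
    have hgb := decay_bound hU0 hM0 hder hGcont hGbd he hlim
    refine ⟨U, ⟨hU1, hUv⟩, fun u hu => ?_⟩
    have hu0 : 0 < u := hU0.trans_le hu
    rw [norm_r_eq hu0 r (β := β)]
    have h1 : ‖r u * (u:ℂ) ^ (-β)‖ ≤ M / (-(-(n:ℝ)-2+1)) * u ^ (-(n:ℝ)-2+1) := hgb u hu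
    calc ‖r u * (u:ℂ) ^ (-β)‖ * u ^ β.re
        ≤ (M / (-(-(n:ℝ)-2+1)) * u ^ (-(n:ℝ)-2+1)) * u ^ β.re :=
          mul_le_mul_of_nonneg_right h1 (Real.rpow_nonneg hu0.le _)
      _ = M / ((n:ℝ)+1) * (u ^ (-(n:ℝ)-2+1) * u ^ β.re) := by ring_nf
      _ = M / ((n:ℝ)+1) * u ^ (β.re - ((n:ℝ)+1)) := by
          rw [← Real.rpow_add hu0]; ring_nf
      _ ≤ ε * u ^ (β.re - ((n:ℝ)+1)) := by
          apply mul_le_mul_of_nonneg_right _ (Real.rpow_nonneg hu0.le _)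
          have hn1 : (1:ℝ) ≤ (n:ℝ) + 1 := by have : (0:ℝ) ≤ n := Nat.cast_nonneg n; linarith
          have h2 : M / ((n:ℝ)+1) ≤ M := by
            apply div_le_self hM0 hn1
          apply h2.trans
          have h3 : A^2 * K₁ * K₂ * v m ≤ C := by rw [hC]; linarith
          calc M = A^2 * K₁ * K₂ * v m * (ε/C) := hM
            _ ≤ C * (ε/C) := mul_le_mul_of_nonneg_right h3 hε₀.le
            _ = ε := by field_simp
      _ = ε * u ^ (β.re - ((n+1:ℕ):ℝ)) := by push_cast; ring_nf
end Casc

section Van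
variable {m : ℕ} {v : ℕ → ℝ} {α : ℕ → ℂ} {r : ℝ → ℂ}

lemma vanish (hv0 : v 0 = 0) (hv : ∀ i, i < m → v i < v (i + 1))
    (hr : SolvesEplus m v α r)
    (β : ℂ) (hβ : β = ∑ j ∈ Finset.range (m+1), α j)
    (hg : Tendsto (fun u : ℝ => r u * (u:ℂ) ^ (-β)) atTop (𝓝 0)) :
    ∃ U : ℝ, 1 ≤ U ∧ ∀ u, U ≤ u → r u = 0 := by
  set A := ∑ j ∈ Finset.range (m+1), ‖α j‖ with hA
  have hA0 : 0 ≤ A := Finset.sum_nonneg fun j _ => norm_nonneg _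
  obtain ⟨n, hn⟩ := exists_nat_gt (β.re + A)
  set c : ℝ := β.re - n with hc
  have hcA : A < -c := by rw [hc]; linarith
  have hc0 : c < 0 := by linarith
  have hK : max (1:ℝ) (2 ^ c) = 1 :=
    max_eq_left (Real.rpow_le_one_of_one_le_of_nonpos one_le_two hc0.le)
  obtain ⟨U, ⟨hU1, hUv⟩, hbd⟩ := cascade hv0 hv hr β hβ hg n 1 one_pos
  have hU0 : (0:ℝ) < U := lt_of_lt_of_le one_pos hU1
  set ρ : ℝ := A / (-c) with hρdef
  have hρ0 : 0 ≤ ρ := div_nonneg hA0 (by linarith)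
  have hρ1 : ρ < 1 := (div_lt_one (by linarith)).mpr hcA
  have hlim : ∀ δ : ℝ, 0 < δ → ∀ u₀ : ℝ, ∃ T, u₀ ≤ T ∧ ‖r T‖ ≤ δ := by
    intro δ hδ u₀
    have h1 : Tendsto (fun x : ℝ => x ^ c) atTop (𝓝 0) := by
      have := tendsto_rpow_neg_atTop (y := -c) (by linarith)
      simpa using this
    obtain ⟨N, hN⟩ := Metric.tendsto_atTop.mp h1 δ hδ
    refine ⟨max u₀ (max N U), le_max_left _ _, ?_⟩
    set T := max u₀ (max N U)
    have hTU : U ≤ T := le_trans (le_max_right N U) (le_max_right _ _)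
    have hTN : N ≤ T := le_trans (le_max_left N U) (le_max_right _ _)
    have := hN T hTN
    rw [dist_zero_right, Real.norm_eq_abs] at this
    calc ‖r T‖ ≤ 1 * T ^ c := hbd T hTU
      _ = T ^ c := one_mul _
      _ ≤ |T ^ c| := le_abs_self _
      _ ≤ δ := this.le
  have claim : ∀ k : ℕ, ∀ u, U ≤ u → ‖r u‖ ≤ ρ ^ k * u ^ c := by
    intro k
    induction k with
    | zero => simpa using hbd
    | succ k ih =>
      have hD := derivBound hv0 hv hr hU0 hUv (pow_nonneg hρ0 k) ih
      rw [hK] at hD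
      have hD' : ∀ t, U ≤ t → ‖deriv r t‖ ≤ (A * ρ ^ k) * t ^ (c - 1) := by
        intro t ht
        have := hD t ht
        calc ‖deriv r t‖ ≤ A * 1 * ρ ^ k * t ^ (c-1) := this
          _ = (A * ρ ^ k) * t ^ (c-1) := by ring
      have he : c - 1 < -1 := by linarith
      have hrd : ∀ t, U ≤ t → HasDerivAt r (deriv r t) t :=
        fun t ht => ((hr t (hU0.trans_le ht)).1.hasDerivAt)
      have hIci : Ici U ⊆ Ioi (0:ℝ) := fun x hx => lt_of_lt_of_le hU0 hx
      have hdb := decay_bound hU0 (by positivity) hrd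
        ((derivContOn hv0 hv hr).mono hIci) hD' he hlim
      intro u hu
      have := hdb u hu
      have h1 : c - 1 + 1 = c := by ring
      rw [h1] at this
      calc ‖r u‖ ≤ A * ρ ^ k / (-c) * u ^ c := this
        _ = ρ ^ (k+1) * u ^ c := by
          rw [pow_succ, hρdef]; ring
  refine ⟨U, hU1, fun u hu => ?_⟩
  have hu0 : 0 < u := hU0.trans_le hu
  have htend : Tendsto (fun k : ℕ => ρ ^ k * u ^ c) atTop (𝓝 0) := by
    have := (tendsto_pow_atTop_nhds_zero_of_lt_one hρ0 hρ1).mul_const (u ^ c)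
    simpa using this
  have hle : ‖r u‖ ≤ 0 :=
    ge_of_tendsto htend (Filter.Eventually.of_forall fun k => claim k u hu)
  exact norm_le_zero_iff.mp hle 
end Van

section Tau
variable {m : ℕ} {v : ℕ → ℝ} {α : ℕ → ℂ} {q : ℝ → ℂ}

lemma tau_eq (hv0 : v 0 = 0) (hv : ∀ i, i < m → v i < v (i + 1))
    (hq : SolvesEplus m v α q) (τ : ℂ)
    (hτ : Tendsto (fun u : ℝ => q u / (u : ℂ) ^ τ) atTop (𝓝 1)) :
    τ = ∑ j ∈ Finset.range (m+1), α j := by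
  set β := ∑ j ∈ Finset.range (m+1), α j with hβ
  set h : ℝ → ℂ := fun u => q u * (u:ℂ) ^ (-τ) with hhdef
  have hh : Tendsto h atTop (𝓝 1) := by
    apply hτ.congr
    intro u
    rw [hhdef]
    simp only [Complex.cpow_neg, div_eq_mul_inv]
  set Hd : ℝ → ℂ := fun t => (t:ℂ)^(-τ-1) *
    ((∑ j ∈ Finset.range (m+1), α j * q (t + v j)) + (-τ) * q t) with hHd
  have hder : ∀ t : ℝ, 0 < t → HasDerivAt h (Hd t) t := fun t ht => deriv_expr hq ht (-τ)
  set φ : ℝ → ℂ := fun t => (t:ℂ) * Hd t with hφ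
  -- φ tends to β - τ
  have hφt : Tendsto φ atTop (𝓝 (β - τ)) := by
    have hsplit : (fun t : ℝ => (∑ j ∈ Finset.range (m+1),
          α j * ((q (t + v j) * ((t + v j:ℝ):ℂ)^(-τ)) * (((t + v j:ℝ):ℂ)^τ * ((t:ℝ):ℂ)^(-τ))))
        + (-τ) * (q t * (t:ℂ)^(-τ))) =ᶠ[atTop] φ := by
      filter_upwards [eventually_gt_atTop (0:ℝ)] with t ht
      have ht0 : ((t:ℝ):ℂ) ≠ 0 := by exact_mod_cast ht.ne'
      have hmul : ((t:ℝ):ℂ) * (t:ℂ)^(-τ-1) = (t:ℂ)^(-τ) := by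
        nth_rewrite 1 [← Complex.cpow_one ((t:ℝ):ℂ)]
        rw [← Complex.cpow_add _ _ ht0]
        congr 1; ring
      have hterm : ∀ j, j ≤ m →
          α j * ((q (t + v j) * ((t + v j:ℝ):ℂ)^(-τ)) * (((t + v j:ℝ):ℂ)^τ * ((t:ℝ):ℂ)^(-τ)))
          = α j * q (t + v j) * ((t:ℝ):ℂ)^(-τ) := by
        intro j hj
        have hvj : 0 ≤ v j := v_nonneg hv0 hv hj
        have htv : ((t + v j:ℝ):ℂ) ≠ 0 := by
          exact_mod_cast (by linarith : (0:ℝ) < t + v j).ne'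
        have : ((t + v j:ℝ):ℂ)^(-τ) * ((t + v j:ℝ):ℂ)^τ = 1 := by
          rw [← Complex.cpow_add _ _ htv]
          simp
        calc α j * ((q (t + v j) * ((t + v j:ℝ):ℂ)^(-τ)) * (((t + v j:ℝ):ℂ)^τ * ((t:ℝ):ℂ)^(-τ)))
            = α j * q (t + v j) * ((t:ℝ):ℂ)^(-τ) *
              (((t + v j:ℝ):ℂ)^(-τ) * ((t + v j:ℝ):ℂ)^τ) := by ring
          _ = α j * q (t + v j) * ((t:ℝ):ℂ)^(-τ) := by rw [this, mul_one]
      have hRHS : ((t:ℝ):ℂ) * Hd t = ((t:ℝ):ℂ)^(-τ) *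
          ((∑ j ∈ Finset.range (m+1), α j * q (t + v j)) + (-τ) * q t) := by
        rw [hHd]
        simp only []
        rw [← mul_assoc, hmul]
      show _ = ((t:ℝ):ℂ) * Hd t
      rw [hRHS]
      have hsum : ∑ j ∈ Finset.range (m+1),
          α j * ((q (t + v j) * ((t + v j:ℝ):ℂ)^(-τ)) * (((t + v j:ℝ):ℂ)^τ * ((t:ℝ):ℂ)^(-τ)))
          = ∑ j ∈ Finset.range (m+1), α j * q (t + v j) * ((t:ℝ):ℂ)^(-τ) := by
        apply Finset.sum_congr rfl
        intro j hj
        exact hterm j (Nat.lt_succ_iff.mp (Finset.mem_range.mp hj))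
      rw [hsum, ← Finset.sum_mul]
      ring
    have hlim : Tendsto (fun t : ℝ => (∑ j ∈ Finset.range (m+1),
          α j * ((q (t + v j) * ((t + v j:ℝ):ℂ)^(-τ)) * (((t + v j:ℝ):ℂ)^τ * ((t:ℝ):ℂ)^(-τ))))
        + (-τ) * (q t * (t:ℂ)^(-τ))) atTop (𝓝 ((∑ j ∈ Finset.range (m+1), α j * (1 * 1)) + (-τ) * 1)) := by
      apply Tendsto.add
      · apply tendsto_finset_sum
        intro j hj
        have hjm : j ≤ m := Nat.lt_succ_iff.mp (Finset.mem_range.mp hj)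
        have hvj : 0 ≤ v j := v_nonneg hv0 hv hjm
        apply Tendsto.const_mul
        apply Tendsto.mul
        · -- q (t + v j) * (t+vj)^(-τ)  → 1
          have hcomp : Tendsto (fun t : ℝ => t + v j) atTop atTop :=
            tendsto_atTop_add_const_right _ _ tendsto_id
          have := hh.comp hcomp
          exact this
        · exact cpow_ratio_tendsto τ (v j) hvj
      · exact (hh.const_mul (-τ))
    have : (∑ j ∈ Finset.range (m+1), α j * (1 * 1)) + (-τ) * 1 = β - τ := by
      simp [hβ]
      ring
    rw [this] at hlim
    exact hlim.congr' hsplit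
  -- doubling difference tends to 0
  have h2u : Tendsto (fun u : ℝ => h (2*u) - h u) atTop (𝓝 0) := by
    have hdbl : Tendsto (fun u : ℝ => 2*u) atTop atTop :=
      tendsto_id.const_mul_atTop two_pos
    have := (hh.comp hdbl).sub hh
    simpa using this
  -- continuity of Hd
  have hHdcont : ContinuousOn Hd (Ioi (0:ℝ)) := by
    rw [hHd]
    apply ContinuousOn.mul (cpow_contOn (-τ-1))
    apply ContinuousOn.add
    · apply continuousOn_finset_sum
      intro j hj
      apply continuousOn_const.mul
      intro u hu
      have hjm : j ≤ m := Nat.lt_succ_iff.mp (Finset.mem_range.mp hj)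
      have hvj : 0 ≤ v j := v_nonneg hv0 hv hjm
      have hu0 : 0 < u := mem_Ioi.mp hu
      have hadd : ContinuousAt (fun t : ℝ => t + v j) u :=
        (continuous_id.add continuous_const).continuousAt
      have hqc : ContinuousAt q (u + v j) := (hq (u + v j) (by linarith)).1.continuousAt
      exact (ContinuousAt.comp (x := u) hqc hadd).continuousWithinAt
    · exact continuousOn_const.mul
        (fun u hu => ((hq u (mem_Ioi.mp hu)).1.continuousAt).continuousWithinAt)
  -- the same difference tends to (β - τ) * log 2
  have key : Tendsto (fun u : ℝ => h (2*u) - h u) atTop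
      (𝓝 ((β - τ) * ((Real.log 2 : ℝ) : ℂ))) := by
    rw [Metric.tendsto_atTop]
    intro ε hε
    obtain ⟨N, hN⟩ := Metric.tendsto_atTop.mp hφt (ε/2) (by linarith)
    refine ⟨max N 1, fun u hu => ?_⟩
    have hu1 : (1:ℝ) ≤ u := le_trans (le_max_right N 1) hu
    have huN : N ≤ u := le_trans (le_max_left N 1) hu
    have hu0 : (0:ℝ) < u := lt_of_lt_of_le one_pos hu1
    have hu2 : u ≤ 2*u := by linarith
    have hsub : uIcc u (2*u) ⊆ Ioi (0:ℝ) := by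
      rw [uIcc_of_le hu2]
      intro x hx; exact lt_of_lt_of_le hu0 hx.1
    have hftc : ∫ t in u..(2*u), Hd t = h (2*u) - h u :=
      integral_eq_sub_of_hasDerivAt (fun t ht => hder t (hsub ht))
        ((hHdcont.mono hsub).intervalIntegrable)
    have hcont_inv : ContinuousOn (fun t : ℝ => (β - τ) * ((t:ℝ):ℂ)⁻¹) (uIcc u (2*u)) := by
      apply continuousOn_const.mul
      apply ContinuousOn.inv₀ (Complex.continuous_ofReal.continuousOn)
      intro x hx
      exact_mod_cast (ne_of_gt (hsub hx))
    have hint1 : IntervalIntegrable Hd volume u (2*u) :=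
      (hHdcont.mono hsub).intervalIntegrable
    have hint2 : IntervalIntegrable (fun t : ℝ => (β - τ) * ((t:ℝ):ℂ)⁻¹) volume u (2*u) :=
      hcont_inv.intervalIntegrable
    have hlog : ∫ t in u..(2*u), (β - τ) * ((t:ℝ):ℂ)⁻¹ = (β - τ) * ((Real.log 2 : ℝ) : ℂ) := by
      rw [intervalIntegral.integral_const_mul]
      congr 1
      have heq1 : (fun t : ℝ => ((t:ℝ):ℂ)⁻¹) = fun t : ℝ => ((t⁻¹ : ℝ) : ℂ) := by
        funext t; rw [Complex.ofReal_inv]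
      rw [heq1]
      rw [intervalIntegral.integral_ofReal]
      have hnot : (0:ℝ) ∉ uIcc u (2*u) := by
        intro h0
        exact absurd (mem_Ioi.mp (hsub h0)) (lt_irrefl 0)
      rw [integral_inv hnot]
      congr 1
      rw [mul_div_assoc]
      rw [div_self hu0.ne', mul_one]
    have hbd2 : ∀ t ∈ uIoc u (2*u), ‖Hd t - (β - τ) * ((t:ℝ):ℂ)⁻¹‖ ≤ (ε/2) * u⁻¹ := by
      intro t ht
      rw [uIoc_of_le hu2] at ht
      have ht0 : 0 < t := lt_trans hu0 ht.1
      have htc : ((t:ℝ):ℂ) ≠ 0 := by exact_mod_cast ht0.ne'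
      have hHdt : Hd t - (β - τ) * ((t:ℝ):ℂ)⁻¹ = ((t:ℝ):ℂ)⁻¹ * (φ t - (β - τ)) := by
        rw [hφ]
        simp only []
        field_simp
      rw [hHdt, norm_mul]
      have h1 : ‖((t:ℝ):ℂ)⁻¹‖ ≤ u⁻¹ := by
        rw [norm_inv, Complex.norm_real, Real.norm_of_nonneg ht0.le]
        exact inv_anti₀ hu0 ht.1.le
      have h2 : ‖φ t - (β - τ)‖ ≤ ε/2 := by
        have := hN t (le_trans huN ht.1.le)
        rw [dist_eq_norm] at this
        exact this.le
      calc ‖((t:ℝ):ℂ)⁻¹‖ * ‖φ t - (β - τ)‖ ≤ u⁻¹ * (ε/2) :=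
            mul_le_mul h1 h2 (norm_nonneg _) (by positivity)
        _ = (ε/2) * u⁻¹ := by ring
    have hdist : dist (h (2*u) - h u) ((β - τ) * ((Real.log 2 : ℝ) : ℂ)) ≤ ε/2 := by
      rw [dist_eq_norm, ← hftc, ← hlog, ← intervalIntegral.integral_sub hint1 hint2]
      calc ‖∫ t in u..(2*u), (Hd t - (β - τ) * ((t:ℝ):ℂ)⁻¹)‖
          ≤ (ε/2) * u⁻¹ * |2*u - u| := intervalIntegral.norm_integral_le_of_norm_le_const hbd2
        _ = ε/2 := by
            rw [show (2*u - u) = u by ring, abs_of_nonneg hu0.le]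
            field_simp
    exact lt_of_le_of_lt hdist (by linarith)
  have heq : (β - τ) * ((Real.log 2 : ℝ) : ℂ) = 0 := tendsto_nhds_unique key h2u
  have hlog2 : ((Real.log 2 : ℝ) : ℂ) ≠ 0 := by
    rw [Complex.ofReal_ne_zero]
    exact (Real.log_pos one_lt_two).ne'
  have hβτ : β - τ = 0 := by
    rcases mul_eq_zero.mp heq with h | h
    · exact h
    · exact absurd h hlog2
  exact (sub_eq_zero.mp hβτ).symm
end Tau

section Back
variable {m : ℕ} {v : ℕ → ℝ} {α : ℕ → ℂ} {r : ℝ → ℂ}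

lemma backward (hv0 : v 0 = 0) (hv : ∀ i, i < m → v i < v (i + 1))
    (hr : SolvesEplus m v α r) {U : ℝ} (hU1 : 1 ≤ U)
    (h0 : ∀ t, U ≤ t → r t = 0) : ∀ u : ℝ, 0 < u → r u = 0 := by
  set δ : ℝ := if m = 0 then 1 else v 1 with hδdef
  have hδ : 0 < δ := by
    rw [hδdef]; split_ifs with hm
    · norm_num
    · have := hv 0 (Nat.pos_of_ne_zero hm); rw [hv0] at this; exact this
  have hδv : ∀ j, 1 ≤ j → j ≤ m → δ ≤ v j := by
    intro j h1 hm'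
    have hm : m ≠ 0 := by omega
    rw [hδdef, if_neg hm]
    exact v_mono hv0 hv j hm' 1 h1
  have step : ∀ W : ℝ, 0 < W → (∀ t, W ≤ t → r t = 0) →
      ∀ u, 0 < u → W - δ ≤ u → r u = 0 := by
    intro W hW hWz u hu0 huW
    rcases le_or_gt W u with hle | hlt
    · exact hWz u hle
    set p : ℝ → ℂ := fun t => r t * (t:ℂ) ^ (-(α 0)) with hp
    have hder : ∀ t ∈ Ico u W, HasDerivWithinAt p 0 (Ici t) t := by
      intro t ht
      have ht0 : 0 < t := lt_of_lt_of_le hu0 ht.1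
      have hd := deriv_expr hr ht0 (-(α 0))
      have hzero : (∑ j ∈ Finset.range (m+1), α j * r (t + v j)) + (-(α 0)) * r t = 0 := by
        rw [Finset.sum_range_succ']
        have hz : ∀ i ∈ Finset.range m, α (i+1) * r (t + v (i+1)) = 0 := by
          intro i hi
          have him : i < m := Finset.mem_range.mp hi
          have hδi : δ ≤ v (i+1) := hδv (i+1) (by omega) (by omega)
          have hWt : W ≤ t + v (i+1) := by linarith [ht.1]
          rw [hWz _ hWt, mul_zero]
        rw [Finset.sum_eq_zero hz, hv0]
        simp
      have hd0 : HasDerivAt p 0 t := by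
        rw [hzero, mul_zero] at hd
        exact hd
      exact hd0.hasDerivWithinAt
    have hcont : ContinuousOn p (Icc u W) := by
      apply ContinuousOn.mul
      · intro t ht
        exact ((hr t (lt_of_lt_of_le hu0 ht.1)).1.continuousAt).continuousWithinAt
      · exact (cpow_contOn _).mono (fun t ht => lt_of_lt_of_le hu0 ht.1)
    have hconst := constant_of_has_deriv_right_zero hcont hder W ⟨hlt.le, le_rfl⟩
    have hpW : p W = 0 := by rw [hp]; simp [hWz W le_rfl]
    have hpu : p u = 0 := by rw [← hconst, hpW]
    have hmul0 : r u * (u:ℂ) ^ (-(α 0)) = 0 := hpu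
    rcases mul_eq_zero.mp hmul0 with h' | h'
    · exact h'
    · exfalso
      rw [Complex.cpow_eq_zero_iff] at h'
      exact (by exact_mod_cast hu0.ne' : ((u:ℝ):ℂ) ≠ 0) h'.1
  have iter : ∀ k : ℕ, ∀ u : ℝ, 0 < u → U - k * δ ≤ u → r u = 0 := by
    intro k
    induction k with
    | zero => intro u hu0 hU; exact h0 u (by simpa using hU)
    | succ k ih =>
      intro u hu0 hk
      rcases le_or_gt (U - k * δ) u with hle | hlt
      · exact ih u hu0 hle
      · have hW : 0 < U - k * δ := lt_trans hu0 hlt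
        apply step (U - k*δ) hW (fun t ht => ih t (lt_of_lt_of_le hW ht) ht) u hu0
        push_cast at hk ⊢
        linarith
  intro u hu0
  obtain ⟨k, hk⟩ := exists_nat_ge ((U - u)/δ)
  apply iter k u hu0
  have := (div_le_iff₀ hδ).mp hk
  linarith
end Back

section Main
variable {m : ℕ} {v : ℕ → ℝ} {α : ℕ → ℂ}

lemma sub_solves {q₁ q₂ : ℝ → ℂ} (hq₁ : SolvesEplus m v α q₁) (hq₂ : SolvesEplus m v α q₂) :
    SolvesEplus m v α (fun u => q₁ u - q₂ u) := by
  intro u hu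
  obtain ⟨d₁, e₁⟩ := hq₁ u hu
  obtain ⟨d₂, e₂⟩ := hq₂ u hu
  refine ⟨d₁.sub d₂, ?_⟩
  have hdsub : deriv (fun u => q₁ u - q₂ u) u = deriv q₁ u - deriv q₂ u := deriv_sub d₁ d₂
  rw [hdsub, mul_sub, e₁, e₂, ← Finset.sum_sub_distrib]
  apply Finset.sum_congr rfl
  intro j _
  ring

end Main

theorem stmt3 (m : ℕ) (v : ℕ → ℝ) (α : ℕ → ℂ)
    (hv0 : v 0 = 0) (hv : ∀ i, i < m → v i < v (i + 1))
    (hα : ∀ j, 1 ≤ j → j ≤ m → α j ≠ 0)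
    (q₁ q₂ : ℝ → ℂ) (hq₁ : SolvesEplus m v α q₁) (hq₂ : SolvesEplus m v α q₂)
    (τ₁ τ₂ : ℂ)
    (hτ₁ : Tendsto (fun u : ℝ => q₁ u / (u : ℂ) ^ τ₁) atTop (nhds 1))
    (hτ₂ : Tendsto (fun u : ℝ => q₂ u / (u : ℂ) ^ τ₂) atTop (nhds 1)) :
    ∀ u : ℝ, 0 < u → q₁ u = q₂ u := by
  set β : ℂ := ∑ j ∈ Finset.range (m+1), α j with hβ
  have ht1 : τ₁ = β := tau_eq hv0 hv hq₁ τ₁ hτ₁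
  have ht2 : τ₂ = β := tau_eq hv0 hv hq₂ τ₂ hτ₂
  set r : ℝ → ℂ := fun u => q₁ u - q₂ u with hrdef
  have hrs : SolvesEplus m v α r := sub_solves hq₁ hq₂
  have hconv : ∀ (q : ℝ → ℂ) (τ : ℂ), τ = β →
      Tendsto (fun u : ℝ => q u / (u : ℂ) ^ τ) atTop (𝓝 1) →
      Tendsto (fun u : ℝ => q u * (u:ℂ) ^ (-β)) atTop (𝓝 1) := by
    intro q τ hτβ hτ
    subst hτβ
    apply hτ.congr
    intro u
    rw [Complex.cpow_neg, div_eq_mul_inv]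
  have hg : Tendsto (fun u : ℝ => r u * (u:ℂ) ^ (-β)) atTop (𝓝 0) := by
    have h1 := hconv q₁ τ₁ ht1 hτ₁
    have h2 := hconv q₂ τ₂ ht2 hτ₂
    have := h1.sub h2
    have heq : (fun u : ℝ => q₁ u * (u:ℂ) ^ (-β) - q₂ u * (u:ℂ) ^ (-β))
        = fun u : ℝ => r u * (u:ℂ) ^ (-β) := by
      funext u
      rw [hrdef]
      ring
    rw [heq] at this
    simpa using this
  obtain ⟨U, hU1, hUz⟩ := vanish hv0 hv hrs β hβ hg
  intro u hu
  have := backward hv0 hv hrs hU1 hUz u hu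
  rw [hrdef] at this
  exact sub_eq_zero.mp this
end

section
/- Suppose q : ℝ → ℂ solves (E+), and suppose there exist a real number r and constants B, u_0 > 0 such that |q(u)| ≤ B·u^r for all u ≥ u_0. Then there exists a complex number A such that q(u)·u^{−β} → A as the real variable u → ∞ (u^{−β} the complex power of the positive real u). -/
open MeasureTheory Filter Set

private lemma rpow_window_bound {a s u t : ℝ} (ha : 0 ≤ a) (hu : 1 ≤ u)
    (h1 : u ≤ t) (h2 : t ≤ u + a) : t ^ s ≤ (1 + a) ^ |s| * u ^ s := by
  have hu0 : (0:ℝ) < u := lt_of_lt_of_le one_pos hu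
  have ht0 : (0:ℝ) < t := lt_of_lt_of_le hu0 h1
  have h1a : (1:ℝ) ≤ 1 + a := by linarith
  rcases le_or_gt 0 s with hs | hs
  · calc t ^ s ≤ ((1 + a) * u) ^ s := Real.rpow_le_rpow ht0.le (by nlinarith) hs
    _ = (1 + a) ^ s * u ^ s := Real.mul_rpow (by linarith) hu0.le
    _ ≤ (1 + a) ^ |s| * u ^ s := by
        have h3 := Real.rpow_le_rpow_of_exponent_le h1a (le_abs_self s)
        have hup : 0 ≤ u ^ s := Real.rpow_nonneg hu0.le s
        exact mul_le_mul_of_nonneg_right h3 hup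
  · calc t ^ s ≤ u ^ s := Real.rpow_le_rpow_of_nonpos hu0 h1 hs.le
    _ ≤ (1 + a) ^ |s| * u ^ s := by
        have h3 := Real.one_le_rpow h1a (abs_nonneg s)
        have hup : 0 < u ^ s := Real.rpow_pos_of_pos hu0 s
        nlinarith

theorem stmt4 (m : ℕ) (v : ℕ → ℝ) (α : ℕ → ℂ)
    (hv0 : v 0 = 0) (hv : ∀ i, i < m → v i < v (i + 1))
    (hα : ∀ j, 1 ≤ j → j ≤ m → α j ≠ 0)
    (q : ℝ → ℂ) (hq : SolvesEplus m v α q)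
    (r : ℝ) (B u₀ : ℝ) (hB : 0 < B) (hu₀ : 0 < u₀)
    (hbound : ∀ u : ℝ, u₀ ≤ u → ‖q u‖ ≤ B * u ^ r) :
    ∃ A : ℂ, Tendsto (fun u : ℝ => q u * (u : ℂ) ^ (-(∑ j ∈ Finset.range (m + 1), α j)))
      atTop (nhds A) := by
  set β : ℂ := ∑ j ∈ Finset.range (m + 1), α j with hβ
  set g : ℝ → ℂ := fun u => q u * (u : ℂ) ^ (-β) with hgdef
  -- monotonicity facts on v
  have hmono : ∀ k j : ℕ, j + k ≤ m → v j ≤ v (j + k) := by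
    intro k
    induction k with
    | zero => intro j _; simp
    | succ n ih =>
      intro j h
      have h1 := ih j (by omega)
      have h2 := hv (j + n) (by omega)
      have : j + (n + 1) = (j + n) + 1 := by omega
      rw [this]; linarith
  have hvnn : ∀ j, j ≤ m → 0 ≤ v j := by
    intro j hj
    have := hmono j 0 (by omega)
    simpa [hv0] using this
  have hvm : ∀ j, j ≤ m → v j ≤ v m := by
    intro j hj
    have := hmono (m - j) j (by omega)
    rwa [show j + (m - j) = m by omega] at this
  set V : ℝ := v m with hVdef
  have hV : 0 ≤ V := hvnn m le_rfl
  set U : ℝ := max u₀ 1 with hUdef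
  have hU1 : (1:ℝ) ≤ U := le_max_right _ _
  have hU0 : (0:ℝ) < U := lt_of_lt_of_le one_pos hU1
  have hUu₀ : u₀ ≤ U := le_max_left _ _
  set Sα : ℝ := ∑ j ∈ Finset.range (m + 1), ‖α j‖ with hSαdef
  have hSα : 0 ≤ Sα := Finset.sum_nonneg fun j _ => (norm_nonneg _)
  -- derivative of g
  have hgd : ∀ u : ℝ, 0 < u → HasDerivAt g
      ((u : ℂ) ^ (-β - 1) * ∑ j ∈ Finset.range (m + 1), α j * (q (u + v j) - q u)) u := by
    intro u hu
    have huc : (u : ℂ) ≠ 0 := by exact_mod_cast ne_of_gt hu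
    have hq' := hq u hu
    have h1 : HasDerivAt (fun y : ℝ => ((y : ℂ)) ^ (-β)) (-β * (u : ℂ) ^ (-β - 1)) u :=
      ((Complex.hasStrictDerivAt_cpow_const
        (Complex.ofReal_mem_slitPlane.2 hu)).hasDerivAt).comp_ofReal
    have h2 := hq'.1.hasDerivAt.mul h1
    have hsum : ∑ j ∈ Finset.range (m + 1), α j * (q (u + v j) - q u)
        = (u : ℂ) * deriv q u - β * q u := by
      have h3 : ∑ j ∈ Finset.range (m + 1), α j * (q (u + v j) - q u)
          = (∑ j ∈ Finset.range (m + 1), α j * q (u + v j))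
            - (∑ j ∈ Finset.range (m + 1), α j) * q u := by
        rw [Finset.sum_mul, ← Finset.sum_sub_distrib]
        exact Finset.sum_congr rfl fun j _ => by ring
      rw [h3, ← hq'.2, ← hβ]
    have hkey : (u : ℂ) ^ (-β) = (u : ℂ) * (u : ℂ) ^ (-β - 1) := by
      conv_lhs => rw [show (-β) = 1 + (-β - 1) by ring]
      rw [Complex.cpow_add _ _ huc, Complex.cpow_one]
    refine h2.congr_deriv ?_
    rw [hsum, hkey]; ring
  -- continuity of deriv g on positives
  have hgc : ∀ x : ℝ, 0 < x → ContinuousAt (deriv g) x := by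
    intro x hx
    have hc1 : ContinuousAt (fun y : ℝ => ((y : ℂ)) ^ (-β - 1)) x :=
      (continuousAt_cpow_const (Complex.ofReal_mem_slitPlane.2 hx)).comp
        Complex.continuous_ofReal.continuousAt
    have hc2 : ContinuousAt
        (fun y : ℝ => ∑ j ∈ Finset.range (m + 1), α j * (q (y + v j) - q y)) x := by
      apply tendsto_finset_sum
      intro j hj
      have hjm : j ≤ m := Nat.lt_succ_iff.mp (Finset.mem_range.mp hj)
      have hxj : (0:ℝ) < x + v j := by linarith [hvnn j hjm]
      have hq1 : ContinuousAt (fun y : ℝ => q (y + v j)) x :=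
        ContinuousAt.comp (f := fun y : ℝ => y + v j) (x := x)
          ((hq (x + v j) hxj).1.continuousAt)
          ((continuous_add_right (v j)).continuousAt)
      exact (continuousAt_const.mul (hq1.sub (hq x hx).1.continuousAt))
    have hform : ContinuousAt (fun y : ℝ =>
        ((y : ℂ)) ^ (-β - 1) * ∑ j ∈ Finset.range (m + 1), α j * (q (y + v j) - q y)) x :=
      hc1.mul hc2
    apply hform.congr
    filter_upwards [isOpen_Ioi.mem_nhds (show x ∈ Ioi (0:ℝ) from hx)] with y hy
    exact ((hgd y hy).deriv).symm
  -- bound propagation: from |q| ≤ C u^s get bound on ‖deriv g‖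
  have hstep : ∀ s C : ℝ, 0 ≤ C → (∀ u, U ≤ u → ‖q u‖ ≤ C * u ^ s) →
      ∃ D, 0 ≤ D ∧ ∀ u, U ≤ u → ‖deriv g u‖ ≤ D * u ^ (s - β.re - 2) := by
    intro s C hC hqs
    set K1 : ℝ := (1 + V) ^ |s| with hK1def
    set K2 : ℝ := (1 + V) ^ |s - 1| with hK2def
    have hK1 : 0 < K1 := Real.rpow_pos_of_pos (by linarith) _
    have hK2 : 0 < K2 := Real.rpow_pos_of_pos (by linarith) _
    have hdq : ∀ t, U ≤ t → ‖deriv q t‖ ≤ Sα * C * K1 * t ^ (s - 1) := by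
      intro t ht
      have ht0 : (0:ℝ) < t := lt_of_lt_of_le hU0 ht
      have ht1 : (1:ℝ) ≤ t := hU1.trans ht
      have h := (hq t ht0).2
      have hb : ‖(t : ℂ) * deriv q t‖ ≤ Sα * C * K1 * t ^ s := by
        rw [h]
        calc ‖∑ j ∈ Finset.range (m + 1), α j * q (t + v j)‖
            ≤ ∑ j ∈ Finset.range (m + 1), ‖α j * q (t + v j)‖ := norm_sum_le _ _
          _ ≤ ∑ j ∈ Finset.range (m + 1), ‖α j‖ * (C * (K1 * t ^ s)) := by
              apply Finset.sum_le_sum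
              intro j hj
              rw [norm_mul]
              have hjm : j ≤ m := Nat.lt_succ_iff.mp (Finset.mem_range.mp hj)
              have h1 : ‖q (t + v j)‖ ≤ C * (t + v j) ^ s := by
                                exact hqs _ (by linarith [hvnn j hjm])
              have h2 : (t + v j) ^ s ≤ K1 * t ^ s :=
                rpow_window_bound hV ht1 (by linarith [hvnn j hjm]) (by linarith [hvm j hjm])
              have h3 : ‖q (t + v j)‖ ≤ C * (K1 * t ^ s) :=
                h1.trans (mul_le_mul_of_nonneg_left h2 hC)
              exact mul_le_mul_of_nonneg_left h3 (norm_nonneg _)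
          _ = Sα * (C * (K1 * t ^ s)) := by rw [← Finset.sum_mul]
          _ = Sα * C * K1 * t ^ s := by ring
      have hnorm : ‖(t : ℂ) * deriv q t‖ = t * ‖deriv q t‖ := by
        rw [norm_mul, Complex.norm_real, Real.norm_eq_abs, abs_of_pos ht0]
      rw [hnorm] at hb
      have hts : t ^ (s - 1) = t ^ s / t := by
        rw [Real.rpow_sub ht0, Real.rpow_one]
      rw [hts, mul_div_assoc', le_div_iff₀ ht0]
      nlinarith [norm_nonneg (deriv q t)]
    have hdiff : ∀ u, U ≤ u → ∀ j, j ≤ m →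
        ‖q (u + v j) - q u‖ ≤ Sα * C * K1 * (K2 * u ^ (s - 1)) * V := by
      intro u hu j hj
      have hu0 : (0:ℝ) < u := lt_of_lt_of_le hU0 hu
      have hu1 : (1:ℝ) ≤ u := hU1.trans hu
      have hCst : (0:ℝ) ≤ Sα * C * K1 * (K2 * u ^ (s - 1)) :=
        mul_nonneg (mul_nonneg (mul_nonneg hSα hC) hK1.le)
          (mul_nonneg hK2.le (Real.rpow_nonneg hu0.le _))
      have hmvt := Convex.norm_image_sub_le_of_norm_deriv_le (𝕜 := ℝ) (f := q)
        (s := Icc u (u + V)) (C := Sα * C * K1 * (K2 * u ^ (s - 1)))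
        (fun x hx => (hq x (lt_of_lt_of_le hu0 hx.1)).1)
        (fun x hx => by
          have hxU : U ≤ x := le_trans hu hx.1
          refine (hdq x hxU).trans ?_
          exact mul_le_mul_of_nonneg_left
            (rpow_window_bound hV hu1 hx.1 hx.2)
            (mul_nonneg (mul_nonneg hSα hC) hK1.le))
        (convex_Icc _ _)
        (show u ∈ Icc u (u + V) from ⟨le_refl u, by linarith⟩)
        (show u + v j ∈ Icc u (u + V) from
          ⟨by linarith [hvnn j hj], by linarith [hvm j hj]⟩)
      have hnv : ‖(u + v j) - u‖ = v j := by
        rw [Real.norm_eq_abs, show u + v j - u = v j by ring, abs_of_nonneg (hvnn j hj)]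
      rw [hnv] at hmvt
      exact hmvt.trans (mul_le_mul_of_nonneg_left (hvm j hj) hCst)
    refine ⟨Sα * (Sα * C * K1 * K2 * V),
      mul_nonneg hSα (mul_nonneg (mul_nonneg (mul_nonneg (mul_nonneg hSα hC) hK1.le) hK2.le) hV),
      fun u hu => ?_⟩
    have hu0 : (0:ℝ) < u := lt_of_lt_of_le hU0 hu
    rw [(hgd u hu0).deriv, norm_mul]
    have h1 : ‖((u : ℂ)) ^ (-β - 1)‖ = u ^ (-β.re - 1) := by
      rw [Complex.norm_cpow_eq_rpow_re_of_pos hu0]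
      norm_num
    have h2 : ‖∑ j ∈ Finset.range (m + 1), α j * (q (u + v j) - q u)‖
        ≤ Sα * (Sα * C * K1 * (K2 * u ^ (s - 1)) * V) := by
      calc ‖∑ j ∈ Finset.range (m + 1), α j * (q (u + v j) - q u)‖
          ≤ ∑ j ∈ Finset.range (m + 1), ‖α j * (q (u + v j) - q u)‖ := norm_sum_le _ _
        _ ≤ ∑ j ∈ Finset.range (m + 1),
              ‖α j‖ * (Sα * C * K1 * (K2 * u ^ (s - 1)) * V) := by
            apply Finset.sum_le_sum
            intro j hj
            rw [norm_mul]
            exact mul_le_mul_of_nonneg_left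
              (hdiff u hu j (Nat.lt_succ_iff.mp (Finset.mem_range.mp hj)))
              (norm_nonneg _)
        _ = Sα * (Sα * C * K1 * (K2 * u ^ (s - 1)) * V) := by rw [← Finset.sum_mul]
    have h3 : ‖((u : ℂ)) ^ (-β - 1)‖ * ‖∑ j ∈ Finset.range (m + 1), α j * (q (u + v j) - q u)‖
        ≤ u ^ (-β.re - 1) * (Sα * (Sα * C * K1 * (K2 * u ^ (s - 1)) * V)) := by
      rw [h1]
      exact mul_le_mul_of_nonneg_left h2 (Real.rpow_nonneg hu0.le _)
    refine h3.trans (le_of_eq ?_)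
    rw [show s - β.re - 2 = (-β.re - 1) + (s - 1) by ring, Real.rpow_add hu0]
    ring
  -- FTC for g
  have hftc : ∀ u, U ≤ u → ∫ t in U..u, deriv g t = g u - g U := by
    intro u hu
    apply intervalIntegral.integral_eq_sub_of_hasDerivAt
    · intro x hx
      rw [uIcc_of_le hu] at hx
      have hx0 : 0 < x := lt_of_lt_of_le hU0 hx.1
      have h := hgd x hx0
      exact h.deriv ▸ (h.deriv ▸ h : HasDerivAt g (deriv g x) x)
    · apply ContinuousOn.intervalIntegrable
      intro x hx
      rw [uIcc_of_le hu] at hx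
      exact (hgc x (lt_of_lt_of_le hU0 hx.1)).continuousWithinAt
  -- bootstrap
  have hboot : ∀ s C : ℝ, 0 ≤ C → -1 < s - β.re - 2 → (∀ u, U ≤ u → ‖q u‖ ≤ C * u ^ s) →
      ∃ C', 0 ≤ C' ∧ ∀ u, U ≤ u → ‖q u‖ ≤ C' * u ^ (s - 1) := by
    intro s C hC he hqs
    obtain ⟨D, hD0, hDg⟩ := hstep s C hC hqs
    set e : ℝ := s - β.re - 2 with hedef
    have he1 : (0:ℝ) < e + 1 := by simp only [hedef]; linarith
    refine ⟨‖g U‖ + D / (e + 1), add_nonneg (norm_nonneg _) (div_nonneg hD0 he1.le),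
      fun u hu => ?_⟩
    have hu0 : (0:ℝ) < u := lt_of_lt_of_le hU0 hu
    have hu1 : (1:ℝ) ≤ u := hU1.trans hu
    have hii : IntervalIntegrable (deriv g) volume U u := by
      apply ContinuousOn.intervalIntegrable
      intro x hx
      rw [uIcc_of_le hu] at hx
      exact (hgc x (lt_of_lt_of_le hU0 hx.1)).continuousWithinAt
    have hii2 : IntervalIntegrable (fun t : ℝ => D * t ^ e) volume U u := by
      apply ContinuousOn.intervalIntegrable
      intro x hx
      rw [uIcc_of_le hu] at hx
      exact (continuousAt_const.mul (Real.continuousAt_rpow_const x e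
        (Or.inl (ne_of_gt (lt_of_lt_of_le hU0 hx.1))))).continuousWithinAt
    have hibound : ‖∫ t in U..u, deriv g t‖ ≤ D / (e + 1) * u ^ (e + 1) := by
      calc ‖∫ t in U..u, deriv g t‖ ≤ ∫ t in U..u, ‖deriv g t‖ :=
            intervalIntegral.norm_integral_le_integral_norm hu
        _ ≤ ∫ t in U..u, D * t ^ e := by
            apply intervalIntegral.integral_mono_on hu hii.norm hii2
            intro x hx
            exact hDg x hx.1
        _ = D * ((u ^ (e + 1) - U ^ (e + 1)) / (e + 1)) := by
            rw [intervalIntegral.integral_const_mul, integral_rpow (Or.inl he)]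
        _ ≤ D / (e + 1) * u ^ (e + 1) := by
            rw [div_mul_eq_mul_div, mul_div_assoc]
            gcongr
            linarith [Real.rpow_nonneg hU0.le (e + 1)]
    have hgu : ‖g u‖ ≤ ‖g U‖ + D / (e + 1) * u ^ (e + 1) := by
      have hgeq : g u = g U + ∫ t in U..u, deriv g t := by rw [hftc u hu]; ring
      rw [hgeq]
      exact (norm_add_le _ _).trans (by linarith [hibound])
    have hone : (1:ℝ) ≤ u ^ (e + 1) := Real.one_le_rpow hu1 he1.le
    have hqgu : ‖q u‖ = ‖g u‖ * u ^ β.re := by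
      have hne : (u : ℂ) ≠ 0 := by exact_mod_cast hu0.ne'
      have hqe : q u = g u * (u : ℂ) ^ β := by
        show q u = q u * (u : ℂ) ^ (-β) * (u : ℂ) ^ β
        rw [mul_assoc, ← Complex.cpow_add _ _ hne]
        simp
      rw [hqe, norm_mul, 
        Complex.norm_cpow_eq_rpow_re_of_pos hu0]
    rw [hqgu]
    have hstep2 : ‖g u‖ ≤ (‖g U‖ + D / (e + 1)) * u ^ (e + 1) := by
      have h0 : (0:ℝ) ≤ ‖g U‖ := norm_nonneg _
      have hD1 : (0:ℝ) ≤ D / (e + 1) := div_nonneg hD0 he1.le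
      nlinarith
    calc ‖g u‖ * u ^ β.re ≤ (‖g U‖ + D / (e + 1)) * u ^ (e + 1) * u ^ β.re :=
          mul_le_mul_of_nonneg_right hstep2 (Real.rpow_nonneg hu0.le _)
      _ = (‖g U‖ + D / (e + 1)) * u ^ (s - 1) := by
          rw [mul_assoc, ← Real.rpow_add hu0,
            show e + 1 + β.re = s - 1 by rw [hedef]; ring]
  -- induction: reach exponent β.re + 1/2
  have hfin : ∃ C, 0 ≤ C ∧ ∀ u, U ≤ u → ‖q u‖ ≤ C * u ^ (β.re + 1/2) := by
    set n : ℕ := ⌈r - β.re⌉₊ with hn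
    have hrn : r ≤ β.re + 3/2 + n := by
      have := Nat.le_ceil (r - β.re)
      rw [← hn] at this
      linarith
    have main : ∀ k : ℕ, k ≤ n + 1 →
        ∃ C, 0 ≤ C ∧ ∀ u, U ≤ u → ‖q u‖ ≤ C * u ^ (β.re + 3/2 + n - k) := by
      intro k
      induction k with
      | zero =>
        intro _
        refine ⟨B, hB.le, fun u hu => ?_⟩
        have hu1 : (1:ℝ) ≤ u := hU1.trans hu
        have h1 : ‖q u‖ ≤ B * u ^ r := by
          exact hbound u (le_trans hUu₀ hu)
        refine h1.trans (mul_le_mul_of_nonneg_left ?_ hB.le)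
        apply Real.rpow_le_rpow_of_exponent_le hu1
        push_cast
        linarith
      | succ k ih =>
        intro hk
        obtain ⟨C, hC0, hCq⟩ := ih (by omega)
        have hkn : (k:ℝ) ≤ n := by exact_mod_cast (by omega : k ≤ n)
        have he2 : (-1:ℝ) < (β.re + 3/2 + n - k) - β.re - 2 := by linarith
        obtain ⟨C', hC'0, hC'q⟩ := hboot _ C hC0 he2 hCq
        refine ⟨C', hC'0, fun u hu => ?_⟩
        have h := hC'q u hu
        rwa [show (β.re + 3/2 + (n:ℝ) - k) - 1 = β.re + 3/2 + n - ((k:ℕ)+1 : ℕ) by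
          push_cast; ring] at h
    obtain ⟨C, hC0, hCq⟩ := main (n + 1) le_rfl
    refine ⟨C, hC0, fun u hu => ?_⟩
    have h := hCq u hu
    rwa [show β.re + 3/2 + (n:ℝ) - ((n:ℕ)+1 : ℕ) = β.re + 1/2 by push_cast; ring] at h
  -- conclusion
  obtain ⟨C, hC0, hCq⟩ := hfin
  obtain ⟨D, hD0, hDg⟩ := hstep _ C hC0 hCq
  have he : β.re + 1/2 - β.re - 2 = (-3/2 : ℝ) := by ring
  rw [he] at hDg
  have hInt : IntegrableOn (deriv g) (Ioi U) volume := by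
    have h1 : IntegrableOn (fun t : ℝ => D * t ^ (-3/2 : ℝ)) (Ioi U) volume :=
      (integrableOn_Ioi_rpow_of_lt (by norm_num) hU0).const_mul D
    refine h1.mono' ?_ ?_
    · have hco : ContinuousOn (deriv g) (Ioi U) :=
        fun x hx => (hgc x (lt_of_lt_of_le hU0 (le_of_lt hx))).continuousWithinAt
      exact hco.aestronglyMeasurable measurableSet_Ioi
    · refine (ae_restrict_iff' measurableSet_Ioi).2 (ae_of_all _ fun x hx => ?_)
      exact hDg x (le_of_lt hx)
  refine ⟨g U + ∫ t in Ioi U, deriv g t, ?_⟩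
  have ht := (intervalIntegral_tendsto_integral_Ioi U hInt tendsto_id).const_add (g U)
  refine Tendsto.congr' ?_ ht
  filter_upwards [eventually_ge_atTop U] with u hu
  simp only [id]
  rw [hftc u hu]; ring
end

section
/- Suppose q_1 : ℝ → ℂ and q_2 : ℝ → ℂ both solve (E+), and suppose each is polynomially bounded: for i = 1, 2 there exist a real number r_i and constants B_i, u_i > 0 with |q_i(u)| ≤ B_i·u^{r_i} for all u ≥ u_i. Then q_1 and q_2 are linearly dependent over ℂ on (0,∞): there exist complex numbers c_1, c_2, not both zero, such that c_1 q_1(u) + c_2 q_2(u) = 0 for all u > 0. -/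
open MeasureTheory Filter Set

namespace Stmt5x

noncomputable def Wt (β : ℂ) (u : ℝ) : ℂ := Complex.exp (-β * Real.log u)
noncomputable def rho (β : ℂ) (w u : ℝ) : ℂ :=
  Complex.exp (β * (Real.log (u + w) - Real.log u))
lemma Wt_ne_zero (β : ℂ) (u : ℝ) : Wt β u ≠ 0 := Complex.exp_ne_zero _
lemma rho_mul_Wt (β : ℂ) (w u : ℝ) : rho β w u * Wt β (u + w) = Wt β u := by
  rw [Wt, Wt, rho, ← Complex.exp_add]; ring_nf
lemma hasDerivAt_Wt (β : ℂ) {u : ℝ} (hu : 0 < u) :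
    HasDerivAt (Wt β) (Wt β u * (-β / u)) u := by
  have h1 : HasDerivAt Real.log u⁻¹ u := Real.hasDerivAt_log (ne_of_gt hu)
  have h2 : HasDerivAt (fun x : ℝ => (Real.log x : ℂ)) ((u⁻¹ : ℝ) : ℂ) u := h1.ofReal_comp
  have h3 := (h2.const_mul (-β)).cexp
  refine h3.congr_deriv ?_
  rw [Wt]; push_cast; ring

/-- the function `g` -/
noncomputable def gf (β : ℂ) (q : ℝ → ℂ) (u : ℝ) : ℂ := q u * Wt β u

/-- the derivative of `g` -/
noncomputable def Gd (m : ℕ) (v : ℕ → ℝ) (α : ℕ → ℂ) (β : ℂ) (q : ℝ → ℂ) (u : ℝ) : ℂ :=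
  (∑ j ∈ Finset.range (m + 1), α j * (rho β (v j) u * gf β q (u + v j) - gf β q u)) / u

lemma hasDerivAt_gf {m : ℕ} {v : ℕ → ℝ} {α : ℕ → ℂ} {q : ℝ → ℂ} {β : ℂ}
    (hq : SolvesEplus m v α q) (hβ : β = ∑ j ∈ Finset.range (m + 1), α j)
    {u : ℝ} (hu : 0 < u) :
    HasDerivAt (gf β q) (Gd m v α β q u) u := by
  obtain ⟨hd, heq⟩ := hq u hu
  have h := hd.hasDerivAt.mul (hasDerivAt_Wt β hu)
  refine h.congr_deriv ?_
  have hu' : (u : ℂ) ≠ 0 := by exact_mod_cast ne_of_gt hu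
  rw [Gd]
  have hsum : ∑ j ∈ Finset.range (m + 1), α j * (rho β (v j) u * gf β q (u + v j) - gf β q u)
      = ((u : ℂ) * deriv q u) * Wt β u - β * (q u * Wt β u) := by
    have step : ∀ j ∈ Finset.range (m + 1),
        α j * (rho β (v j) u * gf β q (u + v j) - gf β q u)
        = α j * q (u + v j) * Wt β u - α j * (q u * Wt β u) := by
      intro j _
      have : rho β (v j) u * gf β q (u + v j) = q (u + v j) * Wt β u := by
        rw [gf, show rho β (v j) u * (q (u + v j) * Wt β (u + v j))
            = q (u + v j) * (rho β (v j) u * Wt β (u + v j)) by ring, rho_mul_Wt]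
      rw [this, gf]; ring
    rw [Finset.sum_congr rfl step, Finset.sum_sub_distrib, ← Finset.sum_mul,
      ← Finset.sum_mul, ← heq, ← hβ]
  rw [hsum]
  field_simp
  ring

lemma abs_Wt (β : ℂ) {u : ℝ} (hu : 0 < u) :
    ‖Wt β u‖ = u ^ (-β.re) := by
  rw [Wt, Complex.norm_exp, Real.rpow_def_of_pos hu]
  congr 1
  simp [Complex.mul_re, Complex.ofReal_re, Complex.ofReal_im]
  ring

lemma v_mono (m : ℕ) (v : ℕ → ℝ) (hv0 : v 0 = 0) (hv : ∀ i, i < m → v i < v (i + 1)) :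
    ∀ j, j ≤ m → ∀ i, i ≤ j → v i ≤ v j := by
  intro j
  induction j with
  | zero => intro _ i hi; simp [Nat.le_zero.mp hi]
  | succ k ih =>
    intro hjm i hi
    rcases Nat.lt_or_ge i (k+1) with h | h
    · exact le_trans (ih (le_trans (Nat.le_succ k) hjm) i (Nat.lt_succ_iff.mp h))
        (le_of_lt (hv k (Nat.lt_of_succ_le hjm)))
    · have : i = k + 1 := le_antisymm hi h
      simp [this]

lemma v_le (m : ℕ) (v : ℕ → ℝ) (hv0 : v 0 = 0) (hv : ∀ i, i < m → v i < v (i + 1)) :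
    ∀ j, j ≤ m → 0 ≤ v j ∧ v j ≤ v m := by
  intro j hj
  exact ⟨hv0 ▸ v_mono m v hv0 hv j hj 0 (Nat.zero_le j), v_mono m v hv0 hv m le_rfl j hj⟩

lemma rho_bounds (β : ℂ) (w : ℝ) (hw0 : 0 ≤ w) (wm : ℝ) (hwm : w ≤ wm) {u : ℝ}
    (hu : 2 * ‖β‖ * wm + 1 ≤ u) :
    ‖rho β w u - 1‖ ≤ (2 * ‖β‖ * wm) / u ∧
      ‖rho β w u‖ ≤ 2 := by
  have hwm0 : 0 ≤ wm := le_trans hw0 hwm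
  have hcc : 0 ≤ 2 * ‖β‖ * wm := by positivity
  have hu0 : (0:ℝ) < u := by linarith
  have hl0 : 0 ≤ Real.log (u + w) - Real.log u :=
    sub_nonneg.mpr (Real.log_le_log hu0 (by linarith))
  have hl : Real.log (u + w) - Real.log u ≤ wm / u := by
    rw [← Real.log_div (by linarith) (ne_of_gt hu0)]
    have h1 := Real.log_le_sub_one_of_pos (show 0 < (u+w)/u by positivity)
    have h2 : (u + w) / u - 1 = w / u := by field_simp; ring
    have h3 : w / u ≤ wm / u := by gcongr
    linarith
  set z : ℂ := β * ((Real.log (u + w) - Real.log u : ℝ) : ℂ) with hz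
  have habsz : ‖z‖ ≤ ‖β‖ * wm / u := by
    rw [hz, norm_mul, Complex.norm_real, Real.norm_eq_abs, abs_of_nonneg hl0]
    calc ‖β‖ * (Real.log (u + w) - Real.log u) ≤ ‖β‖ * (wm / u) := by
          gcongr
      _ = ‖β‖ * wm / u := by ring
  have hz1 : ‖z‖ ≤ 1 := by
    apply le_trans habsz
    rw [div_le_one hu0]
    nlinarith [norm_nonneg β]
  have hmain : ‖rho β w u - 1‖ ≤ (2 * ‖β‖ * wm) / u := by
    have := Complex.norm_exp_sub_one_le hz1
    have hrho : rho β w u = Complex.exp z := by rw [rho, hz]; push_cast; ring_nf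
    rw [hrho]
    calc ‖Complex.exp z - 1‖ ≤ 2 * ‖z‖ := this
      _ ≤ 2 * (‖β‖ * wm / u) := by gcongr
      _ = 2 * ‖β‖ * wm / u := by ring
  refine ⟨hmain, ?_⟩
  have h4 : (2 * ‖β‖ * wm) / u ≤ 1 := by
    rw [div_le_one hu0]; linarith
  calc ‖rho β w u‖ ≤ ‖rho β w u - 1‖ + 1 := by
        have := norm_add_le (rho β w u - 1) 1
        simpa using this
    _ ≤ 1 + 1 := by linarith
    _ = 2 := by norm_num

lemma rpow_shift {x u t wm : ℝ} (h1 : 1 ≤ u) (h2 : u ≤ t) (h3 : t ≤ u + wm) (hwm : 0 ≤ wm) :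
    t ^ x ≤ (1 + wm) ^ (max x 0) * u ^ x := by
  have hu0 : (0:ℝ) < u := by linarith
  rcases le_or_gt 0 x with hx | hx
  · rw [max_eq_left hx, ← Real.mul_rpow (by linarith) (le_of_lt hu0)]
    apply Real.rpow_le_rpow (by linarith) _ hx
    nlinarith
  · rw [max_eq_right (le_of_lt hx), Real.rpow_zero, one_mul]
    exact Real.rpow_le_rpow_of_nonpos hu0 h2 (le_of_lt hx)

noncomputable def Sa (m : ℕ) (α : ℕ → ℂ) : ℝ := ∑ j ∈ Finset.range (m + 1), ‖α j‖
noncomputable def kp (wm x : ℝ) : ℝ := (1 + wm) ^ (max x 0)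

lemma kp_nonneg (wm x : ℝ) (h : 0 ≤ wm) : 0 ≤ kp wm x := by
  rw [kp]; positivity

lemma Sa_nonneg (m : ℕ) (α : ℕ → ℂ) : 0 ≤ Sa m α := by
  rw [Sa]; exact Finset.sum_nonneg fun j _ => norm_nonneg _

lemma crude_est (m : ℕ) (v : ℕ → ℝ) (α : ℕ → ℂ) (β : ℂ) (q : ℝ → ℂ)
    (hv0 : v 0 = 0) (hv : ∀ i, i < m → v i < v (i + 1))
    (x K U : ℝ) (hU : 2 * ‖β‖ * v m + 1 ≤ U) (hK : 0 ≤ K)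
    (hgb : ∀ t, U ≤ t → ‖gf β q t‖ ≤ K * t ^ x)
    {u : ℝ} (hu : U ≤ u) :
    ‖Gd m v α β q u‖ ≤
      (2 * kp (v m) x + 1) * Sa m α * K * u ^ (x - 1) := by
  have hvm0 : 0 ≤ v m := (v_le m v hv0 hv m le_rfl).1
  have hcc : 0 ≤ 2 * ‖β‖ * v m := by positivity
  have hu1 : (1:ℝ) ≤ u := by linarith
  have hu0 : (0:ℝ) < u := by linarith
  have hkp := kp_nonneg (v m) x hvm0
  have hterm : ∀ j ∈ Finset.range (m + 1),
      ‖α j * (rho β (v j) u * gf β q (u + v j) - gf β q u)‖ ≤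
        ‖α j‖ * ((2 * kp (v m) x + 1) * (K * u ^ x)) := by
    intro j hj
    have hjm : j ≤ m := Nat.lt_succ_iff.mp (Finset.mem_range.mp hj)
    obtain ⟨hvj0, hvjm⟩ := v_le m v hv0 hv j hjm
    have hrho := (rho_bounds β (v j) hvj0 (v m) hvjm (le_trans hU hu)).2
    have hshift : (u + v j) ^ x ≤ kp (v m) x * u ^ x :=
      rpow_shift hu1 (by linarith) (by linarith) hvm0
    have hg1 : ‖gf β q (u + v j)‖ ≤ K * ((u + v j) ^ x) :=
      hgb (u + v j) (by linarith)
    have hg2 : ‖gf β q u‖ ≤ K * u ^ x := hgb u hu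
    rw [norm_mul]
    apply mul_le_mul_of_nonneg_left _ (norm_nonneg _)
    calc ‖rho β (v j) u * gf β q (u + v j) - gf β q u‖
        ≤ ‖rho β (v j) u‖ * ‖gf β q (u + v j)‖
          + ‖gf β q u‖ := by
          refine le_trans (norm_sub_le _ _) ?_
          rw [norm_mul]
      _ ≤ 2 * (K * ((u + v j) ^ x)) + K * u ^ x := by
          have h0 : (0:ℝ) ≤ ‖gf β q (u + v j)‖ := norm_nonneg _
          have := mul_le_mul hrho hg1 h0 (by norm_num)
          linarith
      _ ≤ 2 * (K * (kp (v m) x * u ^ x)) + K * u ^ x := by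
          have := mul_le_mul_of_nonneg_left hshift hK
          linarith
      _ = (2 * kp (v m) x + 1) * (K * u ^ x) := by ring
  have hsum := Finset.sum_le_sum hterm
  have habs := norm_sum_le (Finset.range (m+1))
    (fun j => α j * (rho β (v j) u * gf β q (u + v j) - gf β q u))
  rw [Gd, norm_div, Complex.norm_real, Real.norm_eq_abs, abs_of_pos hu0]
  rw [← Finset.sum_mul] at hsum
  have : ‖∑ j ∈ Finset.range (m+1),
      α j * (rho β (v j) u * gf β q (u + v j) - gf β q u)‖ ≤
      Sa m α * ((2 * kp (v m) x + 1) * (K * u ^ x)) := le_trans habs (by rw [Sa]; exact hsum)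
  calc ‖∑ j ∈ Finset.range (m+1),
      α j * (rho β (v j) u * gf β q (u + v j) - gf β q u)‖ / u
      ≤ Sa m α * ((2 * kp (v m) x + 1) * (K * u ^ x)) / u := by gcongr
    _ = (2 * kp (v m) x + 1) * Sa m α * K * (u ^ x / u) := by ring
    _ = (2 * kp (v m) x + 1) * Sa m α * K * u ^ (x - 1) := by
        rw [Real.rpow_sub_one (ne_of_gt hu0)]

/-- difference bound over a step of size ≤ v m -/
lemma diff_est (m : ℕ) (v : ℕ → ℝ) (α : ℕ → ℂ) (β : ℂ) (q : ℝ → ℂ)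
    (hq : SolvesEplus m v α q) (hβ : β = ∑ j ∈ Finset.range (m + 1), α j)
    (hv0 : v 0 = 0) (hv : ∀ i, i < m → v i < v (i + 1))
    (x K U : ℝ) (hU : 2 * ‖β‖ * v m + 1 ≤ U) (hK : 0 ≤ K)
    (hgb : ∀ t, U ≤ t → ‖gf β q t‖ ≤ K * t ^ x)
    {u w : ℝ} (hu : U ≤ u) (hw0 : 0 ≤ w) (hwm : w ≤ v m) :
    ‖gf β q (u + w) - gf β q u‖ ≤
      v m * ((2 * kp (v m) x + 1) * Sa m α * K * (kp (v m) (x - 1) * u ^ (x - 1))) := by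
  have hvm0 : 0 ≤ v m := (v_le m v hv0 hv m le_rfl).1
  have hcc : 0 ≤ 2 * ‖β‖ * v m := by positivity
  have hu1 : (1:ℝ) ≤ u := by linarith
  set C0 : ℝ := (2 * kp (v m) x + 1) * Sa m α * K * (kp (v m) (x - 1) * u ^ (x - 1)) with hC0
  have hder : ∀ s ∈ Icc u (u + w), HasDerivWithinAt (gf β q) (Gd m v α β q s) (Icc u (u + w)) s := by
    intro s hs
    exact (hasDerivAt_gf hq hβ (by rcases hs with ⟨h1, _⟩; linarith)).hasDerivWithinAt
  have hbd : ∀ s ∈ Ico u (u + w), ‖Gd m v α β q s‖ ≤ C0 := by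
    intro s hs
    rcases hs with ⟨h1, h2⟩
    have hcr := crude_est m v α β q hv0 hv x K U hU hK hgb (le_trans hu h1)
    have hsh : s ^ (x - 1) ≤ kp (v m) (x - 1) * u ^ (x - 1) := by
      rw [kp]
      exact rpow_shift hu1 h1 (by linarith) hvm0
    rw [hC0]
    have hA : 0 ≤ (2 * kp (v m) x + 1) * Sa m α * K := by
      have := kp_nonneg (v m) x hvm0
      have := Sa_nonneg m α
      positivity
    exact le_trans hcr (mul_le_mul_of_nonneg_left hsh hA)
  have hmem : u + w ∈ Icc u (u + w) := ⟨by linarith, le_rfl⟩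
  have hkey := norm_image_sub_le_of_norm_deriv_le_segment' hder hbd (u + w) hmem
  have hC0nn : 0 ≤ C0 := by
    rw [hC0]
    have := kp_nonneg (v m) x hvm0
    have := Sa_nonneg m α
    have := kp_nonneg (v m) (x-1) hvm0
    have hup : (0:ℝ) < u := by linarith
    positivity
  calc ‖gf β q (u + w) - gf β q u‖ ≤ C0 * (u + w - u) := hkey
    _ = C0 * w := by ring
    _ ≤ C0 * v m := mul_le_mul_of_nonneg_left hwm hC0nn
    _ = v m * C0 := by ring



lemma refined_est0 (m : ℕ) (v : ℕ → ℝ) (α : ℕ → ℂ) (β : ℂ) (q : ℝ → ℂ)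
    (hq : SolvesEplus m v α q) (hβ : β = ∑ j ∈ Finset.range (m + 1), α j)
    (hv0 : v 0 = 0) (hv : ∀ i, i < m → v i < v (i + 1))
    (x K U : ℝ) (hU : 2 * ‖β‖ * v m + 1 ≤ U) (hK : 0 ≤ K)
    (hgb : ∀ t, U ≤ t → ‖gf β q t‖ ≤ K * t ^ x)
    {u : ℝ} (hu : U ≤ u) :
    ‖Gd m v α β q u‖ ≤
      (2 * ‖β‖ * v m * kp (v m) x
        + v m * ((2 * kp (v m) x + 1) * Sa m α) * kp (v m) (x - 1)) * Sa m α
        * K * u ^ (x - 2) := by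
  have hvm0 : 0 ≤ v m := (v_le m v hv0 hv m le_rfl).1
  have hcc : 0 ≤ 2 * ‖β‖ * v m := by positivity
  have hu1 : (1:ℝ) ≤ u := by linarith
  have hu0 : (0:ℝ) < u := by linarith
  have hkp := kp_nonneg (v m) x hvm0
  have hkp' := kp_nonneg (v m) (x-1) hvm0
  have hSa := Sa_nonneg m α
  set D : ℝ := 2 * ‖β‖ * v m * kp (v m) x
      + v m * ((2 * kp (v m) x + 1) * Sa m α) * kp (v m) (x - 1) with hD
  have hterm : ∀ j ∈ Finset.range (m + 1),
      ‖α j * (rho β (v j) u * gf β q (u + v j) - gf β q u)‖ ≤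
        ‖α j‖ * (D * (K * u ^ (x - 1))) := by
    intro j hj
    have hjm : j ≤ m := Nat.lt_succ_iff.mp (Finset.mem_range.mp hj)
    obtain ⟨hvj0, hvjm⟩ := v_le m v hv0 hv j hjm
    have hrho := (rho_bounds β (v j) hvj0 (v m) hvjm (le_trans hU hu)).1
    have hshift : (u + v j) ^ x ≤ kp (v m) x * u ^ x :=
      rpow_shift hu1 (by linarith) (by linarith) hvm0
    have hg1 : ‖gf β q (u + v j)‖ ≤ K * ((u + v j) ^ x) :=
      hgb (u + v j) (by linarith)
    have hdiff := diff_est m v α β q hq hβ hv0 hv x K U hU hK hgb hu hvj0 hvjm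
    rw [norm_mul]
    apply mul_le_mul_of_nonneg_left _ (norm_nonneg _)
    have hsplit : ‖rho β (v j) u * gf β q (u + v j) - gf β q u‖ ≤
        ‖rho β (v j) u - 1‖ * ‖gf β q (u + v j)‖
          + ‖gf β q (u + v j) - gf β q u‖ := by
      have : rho β (v j) u * gf β q (u + v j) - gf β q u
          = (rho β (v j) u - 1) * gf β q (u + v j) + (gf β q (u + v j) - gf β q u) := by ring
      rw [this]
      refine le_trans (norm_add_le _ _) ?_
      rw [norm_mul]
    have h1 : ‖rho β (v j) u - 1‖ * ‖gf β q (u + v j)‖ ≤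
        (2 * ‖β‖ * v m / u) * (K * (kp (v m) x * u ^ x)) := by
      apply mul_le_mul hrho _ (norm_nonneg _) (by positivity)
      exact le_trans hg1 (mul_le_mul_of_nonneg_left hshift hK)
    have heq1 : (2 * ‖β‖ * v m / u) * (K * (kp (v m) x * u ^ x))
        = 2 * ‖β‖ * v m * kp (v m) x * (K * u ^ (x-1)) := by
      rw [Real.rpow_sub_one (ne_of_gt hu0)]
      field_simp
    have h2 : ‖gf β q (u + v j) - gf β q u‖ ≤
        v m * ((2 * kp (v m) x + 1) * Sa m α) * kp (v m) (x-1) * (K * u ^ (x - 1)) := by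
      refine le_trans hdiff (le_of_eq ?_)
      ring
    calc ‖rho β (v j) u * gf β q (u + v j) - gf β q u‖
        ≤ ‖rho β (v j) u - 1‖ * ‖gf β q (u + v j)‖
          + ‖gf β q (u + v j) - gf β q u‖ := hsplit
      _ ≤ 2 * ‖β‖ * v m * kp (v m) x * (K * u ^ (x-1))
          + v m * ((2 * kp (v m) x + 1) * Sa m α) * kp (v m) (x-1) * (K * u ^ (x - 1)) := by
          rw [← heq1]
          exact add_le_add h1 h2
      _ = D * (K * u ^ (x-1)) := by rw [hD]; ring
  have habs := norm_sum_le (Finset.range (m+1))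
    (fun j => α j * (rho β (v j) u * gf β q (u + v j) - gf β q u))
  have hsum := Finset.sum_le_sum hterm
  rw [← Finset.sum_mul] at hsum
  rw [Gd, norm_div, Complex.norm_real, Real.norm_eq_abs, abs_of_pos hu0]
  have hle : ‖∑ j ∈ Finset.range (m+1),
      α j * (rho β (v j) u * gf β q (u + v j) - gf β q u)‖ ≤ Sa m α * (D * (K * u ^ (x-1))) :=
    le_trans habs (by rw [Sa]; exact hsum)
  calc ‖∑ j ∈ Finset.range (m+1),
      α j * (rho β (v j) u * gf β q (u + v j) - gf β q u)‖ / u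
      ≤ Sa m α * (D * (K * u ^ (x-1))) / u := by gcongr
    _ = D * Sa m α * K * (u ^ (x-1) / u) := by ring
    _ = D * Sa m α * K * u ^ (x - 2) := by
        rw [show x - 2 = x - 1 - 1 by ring, Real.rpow_sub_one (ne_of_gt hu0),
          Real.rpow_sub_one (ne_of_gt hu0), Real.rpow_sub_one (ne_of_gt hu0)]

noncomputable def Cref (m : ℕ) (α : ℕ → ℂ) (β : ℂ) (wm x : ℝ) : ℝ :=
  (2 * ‖β‖ * wm * kp wm x + wm * ((2 * kp wm x + 1) * Sa m α) * kp wm (x - 1)) * Sa m α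

lemma refined_est (m : ℕ) (v : ℕ → ℝ) (α : ℕ → ℂ) (β : ℂ) (q : ℝ → ℂ)
    (hq : SolvesEplus m v α q) (hβ : β = ∑ j ∈ Finset.range (m + 1), α j)
    (hv0 : v 0 = 0) (hv : ∀ i, i < m → v i < v (i + 1))
    (x K U : ℝ) (hU : 2 * ‖β‖ * v m + 1 ≤ U) (hK : 0 ≤ K)
    (hgb : ∀ t, U ≤ t → ‖gf β q t‖ ≤ K * t ^ x)
    {u : ℝ} (hu : U ≤ u) :
    ‖Gd m v α β q u‖ ≤ Cref m α β (v m) x * K * u ^ (x - 2) := by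
  rw [Cref]
  exact refined_est0 m v α β q hq hβ hv0 hv x K U hU hK hgb hu

lemma normH {g g' : ℝ → ℂ} {a b C w : ℝ} (ha : 0 < a) (hab : a ≤ b) (hC : 0 ≤ C)
    (hw : w + 1 ≠ 0)
    (hg : ∀ t ∈ Icc a b, HasDerivAt g (g' t) t)
    (hbd : ∀ t ∈ Icc a b, ‖g' t‖ ≤ C * t ^ w) :
    ‖g b - g a‖ ≤ C / (w + 1) * (b ^ (w + 1) - a ^ (w + 1)) := by
  have hgc : ContinuousOn g (Icc a b) := fun t ht => ((hg t ht).continuousAt).continuousWithinAt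
  have hf : ContinuousOn (fun t => g t - g a) (Icc a b) := hgc.sub continuousOn_const
  have hf' : ∀ x ∈ Ico a b, HasDerivWithinAt (fun t => g t - g a) (g' x) (Ici x) x := by
    intro x hx
    exact ((hg x (Ico_subset_Icc_self hx)).sub_const _).hasDerivWithinAt
  have hBc : ContinuousOn (fun t : ℝ => C / (w + 1) * (t ^ (w + 1) - a ^ (w + 1))) (Icc a b) := by
    apply ContinuousOn.mul continuousOn_const
    apply ContinuousOn.sub _ continuousOn_const
    intro t ht
    exact (Real.continuousAt_rpow_const t (w+1)
      (Or.inl (ne_of_gt (lt_of_lt_of_le ha ht.1)))).continuousWithinAt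
  have hB' : ∀ x ∈ Ico a b, HasDerivWithinAt
      (fun t : ℝ => C / (w + 1) * (t ^ (w + 1) - a ^ (w + 1))) (C * x ^ w) (Ici x) x := by
    intro x hx
    have h1 : HasDerivAt (fun t : ℝ => t ^ (w + 1)) ((w + 1) * x ^ w) x := by
      have := Real.hasDerivAt_rpow_const (x := x) (p := w + 1)
        (Or.inl (ne_of_gt (lt_of_lt_of_le ha hx.1)))
      simpa using this
    have h2 := ((h1.sub_const (a ^ (w+1))).const_mul (C / (w + 1)))
    have : C / (w + 1) * ((w + 1) * x ^ w) = C * x ^ w := by field_simp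
    rw [this] at h2
    exact h2.hasDerivWithinAt
  have hbound : ∀ x ∈ Ico a b, ‖g' x‖ ≤ C * x ^ w := by
    intro x hx
    exact hbd x (Ico_subset_Icc_self hx)
  have ha' : ‖g a - g a‖ ≤ C / (w + 1) * (a ^ (w + 1) - a ^ (w + 1)) := by simp
  have := image_norm_le_of_norm_deriv_right_le_deriv_boundary' hf hf' ha' hBc hB' hbound
    (x := b) ⟨hab, le_rfl⟩
  exact this

lemma Cref_nonneg (m : ℕ) (α : ℕ → ℂ) (β : ℂ) (wm x : ℝ) (hwm : 0 ≤ wm) :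
    0 ≤ Cref m α β wm x := by
  have h1 := kp_nonneg wm x hwm
  have h2 := kp_nonneg wm (x - 1) hwm
  have h3 := Sa_nonneg m α
  have h4 := norm_nonneg β
  rw [Cref]
  apply mul_nonneg _ h3
  apply add_nonneg
  · exact mul_nonneg (mul_nonneg (by linarith) hwm) h1
  · exact mul_nonneg (mul_nonneg hwm (mul_nonneg (by linarith) h3)) h2

/-- One descent step: from exponent `x ≥ 3/2` to exponent `x - 1`. -/
lemma descent_step (m : ℕ) (v : ℕ → ℝ) (α : ℕ → ℂ) (β : ℂ) (q : ℝ → ℂ)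
    (hq : SolvesEplus m v α q) (hβ : β = ∑ j ∈ Finset.range (m + 1), α j)
    (hv0 : v 0 = 0) (hv : ∀ i, i < m → v i < v (i + 1))
    (x K U : ℝ) (hU : 2 * ‖β‖ * v m + 1 ≤ U) (hK : 0 ≤ K) (hx : 3/2 ≤ x)
    (hgb : ∀ t, U ≤ t → ‖gf β q t‖ ≤ K * t ^ x) :
    ∃ K' : ℝ, 0 ≤ K' ∧ ∀ t, U ≤ t → ‖gf β q t‖ ≤ K' * t ^ (x - 1) := by
  have hvm0 : 0 ≤ v m := (v_le m v hv0 hv m le_rfl).1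
  have hcc : 0 ≤ 2 * ‖β‖ * v m := by positivity
  have hU1 : (1:ℝ) ≤ U := by linarith
  have hU0 : (0:ℝ) < U := by linarith
  have hC := Cref_nonneg m α β (v m) x hvm0
  refine ⟨‖gf β q U‖ + 2 * (Cref m α β (v m) x * K) + 1, by positivity, ?_⟩
  intro u hu
  have hu0 : (0:ℝ) < u := by linarith
  have hw1 : x - 2 + 1 ≠ 0 := by linarith
  have hdiff : ‖gf β q u - gf β q U‖ ≤
      Cref m α β (v m) x * K / (x - 2 + 1) * (u ^ (x - 2 + 1) - U ^ (x - 2 + 1)) := by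
    apply normH hU0 hu (by positivity) hw1
    · intro t ht
      exact hasDerivAt_gf hq hβ (by rcases ht with ⟨h1, _⟩; linarith)
    · intro t ht
      exact refined_est m v α β q hq hβ hv0 hv x K U hU hK hgb ht.1
  have hxm1 : x - 2 + 1 = x - 1 := by ring
  rw [hxm1] at hdiff
  have hrpos : (0:ℝ) < x - 1 := by linarith
  have hone : (1:ℝ) ≤ u ^ (x - 1) := by
    have := Real.rpow_le_rpow_of_exponent_le (by linarith : (1:ℝ) ≤ u) (by linarith : (0:ℝ) ≤ x - 1)
    simpa [Real.rpow_zero] using this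
  have hUpow : (0:ℝ) ≤ U ^ (x - 1) := le_of_lt (Real.rpow_pos_of_pos hU0 _)
  have hstep2 : Cref m α β (v m) x * K / (x - 1) * (u ^ (x-1) - U ^ (x-1)) ≤
      2 * (Cref m α β (v m) x * K) * u ^ (x - 1) := by
    have hdivle : Cref m α β (v m) x * K / (x - 1) ≤ 2 * (Cref m α β (v m) x * K) := by
      rw [div_le_iff₀ hrpos]
      nlinarith [mul_nonneg hC hK]
    have hups : (0:ℝ) ≤ u ^ (x-1) - U ^ (x-1) → True := fun _ => trivial
    rcases le_or_gt (u ^ (x-1) - U ^ (x-1)) 0 with hneg | hpos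
    · calc Cref m α β (v m) x * K / (x - 1) * (u ^ (x-1) - U ^ (x-1)) ≤ 0 := by
            apply mul_nonpos_of_nonneg_of_nonpos (by positivity) hneg
        _ ≤ 2 * (Cref m α β (v m) x * K) * u ^ (x - 1) := by positivity
    · calc Cref m α β (v m) x * K / (x - 1) * (u ^ (x-1) - U ^ (x-1))
          ≤ 2 * (Cref m α β (v m) x * K) * (u ^ (x-1) - U ^ (x-1)) :=
            mul_le_mul_of_nonneg_right hdivle (le_of_lt hpos)
        _ ≤ 2 * (Cref m α β (v m) x * K) * u ^ (x - 1) := by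
            apply mul_le_mul_of_nonneg_left _ (by positivity)
            linarith
  have htri : ‖gf β q u‖ ≤ ‖gf β q U‖ + ‖gf β q u - gf β q U‖ := by
    have := norm_add_le (gf β q U) (gf β q u - gf β q U)
    simpa using this
  calc ‖gf β q u‖
      ≤ ‖gf β q U‖ + ‖gf β q u - gf β q U‖ := htri
    _ ≤ ‖gf β q U‖ + 2 * (Cref m α β (v m) x * K) * u ^ (x - 1) := by
        have := le_trans hdiff hstep2
        linarith
    _ ≤ (‖gf β q U‖ + 2 * (Cref m α β (v m) x * K) + 1) * u ^ (x - 1) := by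
        have h5 : (0:ℝ) ≤ ‖gf β q U‖ + 1 := by positivity
        nlinarith [norm_nonneg (gf β q U), mul_nonneg hC hK]

/-- Main asymptotic lemma: a polynomially bounded `gf` converges at `∞` with rate `u^{-1/2}`. -/
lemma descent (m : ℕ) (v : ℕ → ℝ) (α : ℕ → ℂ) (β : ℂ) (q : ℝ → ℂ)
    (hq : SolvesEplus m v α q) (hβ : β = ∑ j ∈ Finset.range (m + 1), α j)
    (hv0 : v 0 = 0) (hv : ∀ i, i < m → v i < v (i + 1))
    (x₀ K U : ℝ) (hU : 2 * ‖β‖ * v m + 1 ≤ U) (hK : 0 ≤ K)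
    (hgb : ∀ t, U ≤ t → ‖gf β q t‖ ≤ K * t ^ x₀) :
    ∃ (L : ℂ) (C : ℝ), 0 ≤ C ∧
      ∀ u, U ≤ u → ‖gf β q u - L‖ ≤ C * u ^ (-(1/2) : ℝ) := by
  have hvm0 : 0 ≤ v m := (v_le m v hv0 hv m le_rfl).1
  have hcc : 0 ≤ 2 * ‖β‖ * v m := by positivity
  have hU1 : (1:ℝ) ≤ U := by linarith
  have hU0 : (0:ℝ) < U := by linarith
  set N : ℕ := ⌈x₀⌉₊ with hN
  -- step 1 : initial bound with exponent N + 1/2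
  have hinit : ∀ t, U ≤ t → ‖gf β q t‖ ≤ K * t ^ ((N : ℝ) + 1/2 - (0:ℕ)) := by
    intro t ht
    refine le_trans (hgb t ht) (mul_le_mul_of_nonneg_left ?_ hK)
    apply Real.rpow_le_rpow_of_exponent_le (by linarith)
    have := Nat.le_ceil x₀
    push_cast
    push_cast at this
    linarith
  -- step 2 : descend N times
  have hmain : ∀ k : ℕ, k ≤ N → ∃ K', 0 ≤ K' ∧
      ∀ t, U ≤ t → ‖gf β q t‖ ≤ K' * t ^ ((N : ℝ) + 1/2 - k) := by
    intro k
    induction k with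
    | zero => exact fun _ => ⟨K, hK, hinit⟩
    | succ k ih =>
      intro hk
      obtain ⟨K', hK', hb⟩ := ih (le_of_lt (Nat.lt_of_succ_le hk))
      have hx32 : 3/2 ≤ (N : ℝ) + 1/2 - k := by
        have : (k:ℝ) + 1 ≤ (N:ℝ) := by exact_mod_cast hk
        linarith
      obtain ⟨K'', hK'', hb'⟩ := descent_step m v α β q hq hβ hv0 hv
        ((N : ℝ) + 1/2 - k) K' U hU hK' hx32 hb
      refine ⟨K'', hK'', ?_⟩
      intro t ht
      have : (N : ℝ) + 1/2 - k - 1 = (N : ℝ) + 1/2 - (k + 1 : ℕ) := by push_cast; ring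
      rw [← this]
      exact hb' t ht
  obtain ⟨K₁, hK₁, hb₁⟩ := hmain N le_rfl
  have hhalf : ∀ t, U ≤ t → ‖gf β q t‖ ≤ K₁ * t ^ ((1:ℝ)/2) := by
    intro t ht
    have : (N : ℝ) + 1/2 - N = 1/2 := by ring
    have h := hb₁ t ht
    rwa [this] at h
  -- step 3 : Cauchy-type tail estimate
  set C₂ : ℝ := Cref m α β (v m) ((1:ℝ)/2) * K₁ with hC₂
  have hC₂0 : 0 ≤ C₂ := mul_nonneg (Cref_nonneg m α β (v m) _ hvm0) hK₁
  have htail : ∀ a b : ℝ, U ≤ a → a ≤ b →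
      ‖gf β q b - gf β q a‖ ≤ 2 * C₂ * a ^ (-(1/2) : ℝ) := by
    intro a b ha hab
    have ha0 : (0:ℝ) < a := by linarith
    have hw1 : (1:ℝ)/2 - 2 + 1 ≠ 0 := by norm_num
    have hd := normH (g := gf β q) (g' := Gd m v α β q) ha0 hab hC₂0 hw1
      (fun t ht => hasDerivAt_gf hq hβ (by rcases ht with ⟨h1, _⟩; linarith))
      (fun t ht => by
        have := refined_est m v α β q hq hβ hv0 hv ((1:ℝ)/2) K₁ U hU hK₁ hhalf
          (le_trans ha ht.1)
        exact this)
    have he : (1:ℝ)/2 - 2 + 1 = -(1/2) := by norm_num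
    rw [he] at hd
    refine le_trans hd ?_
    have hb0 : (0:ℝ) < b := by linarith
    have hbp : (0:ℝ) ≤ b ^ (-(1/2) : ℝ) := le_of_lt (Real.rpow_pos_of_pos hb0 _)
    have hap : (0:ℝ) ≤ a ^ (-(1/2) : ℝ) := le_of_lt (Real.rpow_pos_of_pos ha0 _)
    calc C₂ / (-(1/2)) * (b ^ (-(1/2):ℝ) - a ^ (-(1/2):ℝ))
        = 2 * C₂ * (a ^ (-(1/2):ℝ) - b ^ (-(1/2):ℝ)) := by ring
      _ ≤ 2 * C₂ * a ^ (-(1/2):ℝ) := by nlinarith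
  -- step 4 : existence of the limit
  set s : ℕ → ℂ := fun n => gf β q (U + n) with hs
  have hUn : ∀ n : ℕ, (0:ℝ) < U + n := fun n => by
    have : (0:ℝ) ≤ (n:ℝ) := Nat.cast_nonneg n
    linarith
  have hUle : ∀ n : ℕ, U ≤ U + (n:ℝ) := fun n => by
    have : (0:ℝ) ≤ (n:ℝ) := Nat.cast_nonneg n
    linarith
  have hcauchy : CauchySeq s := by
    apply cauchySeq_of_le_tendsto_0 (b := fun n : ℕ => 2 * C₂ * (U + n) ^ (-(1/2) : ℝ))
    · intro n m' N' hn hm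
      rcases le_total n m' with h | h
      · have hh : ‖s m' - s n‖ ≤ 2 * C₂ * (U + n) ^ (-(1/2) : ℝ) :=
          htail (U + n) (U + m') (hUle n)
            (by exact_mod_cast add_le_add_right (Nat.cast_le.mpr h) U)
        rw [dist_eq_norm]
        have habs : ‖s n - s m'‖ = ‖s m' - s n‖ := by
          rw [← norm_neg]; ring_nf
        rw [habs]
        refine le_trans hh ?_
        apply mul_le_mul_of_nonneg_left _ (by positivity)
        apply Real.rpow_le_rpow_of_nonpos (hUn N') _ (by norm_num)
        exact add_le_add_right (Nat.cast_le.mpr hn) U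
      · have hh : ‖s n - s m'‖ ≤ 2 * C₂ * (U + m') ^ (-(1/2) : ℝ) :=
          htail (U + m') (U + n) (hUle m')
            (by exact_mod_cast add_le_add_right (Nat.cast_le.mpr h) U)
        rw [dist_eq_norm]
        refine le_trans hh ?_
        apply mul_le_mul_of_nonneg_left _ (by positivity)
        apply Real.rpow_le_rpow_of_nonpos (hUn N') _ (by norm_num)
        exact add_le_add_right (Nat.cast_le.mpr hm) U
    · have h1 : Tendsto (fun n : ℕ => U + (n:ℝ)) atTop atTop :=
        tendsto_atTop_add_const_left _ _ tendsto_natCast_atTop_atTop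
      have h2 := (tendsto_rpow_neg_atTop (by norm_num : (0:ℝ) < 1/2)).comp h1
      have h3 := h2.const_mul (2 * C₂)
      simpa using h3
  obtain ⟨L, hL⟩ := cauchySeq_tendsto_of_complete hcauchy
  refine ⟨L, 2 * C₂, by positivity, ?_⟩
  intro u hu
  have hu0 : (0:ℝ) < u := by linarith
  -- step 5 : pass to the limit
  have hev : ∀ᶠ n in atTop, ‖gf β q u - s n‖ ≤ 2 * C₂ * u ^ (-(1/2) : ℝ) := by
    have : ∀ n : ℕ, u - U ≤ n → ‖gf β q u - s n‖ ≤ 2 * C₂ * u ^ (-(1/2) : ℝ) := by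
      intro n hn
      have : ‖gf β q (U + n) - gf β q u‖ ≤ 2 * C₂ * u ^ (-(1/2) : ℝ) :=
        htail u (U + n) hu (by linarith)
      rw [← norm_neg] at this
      simpa [neg_sub] using this
    rcases exists_nat_ge (u - U) with ⟨n₀, hn₀⟩
    filter_upwards [eventually_ge_atTop n₀] with n hn
    exact this n (le_trans hn₀ (by exact_mod_cast hn))
  have hlim : Tendsto (fun n : ℕ => ‖gf β q u - s n‖) atTop
      (nhds (‖gf β q u - L‖)) := by
    have : Tendsto (fun n : ℕ => gf β q u - s n) atTop (nhds (gf β q u - L)) :=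
      tendsto_const_nhds.sub hL
    exact (continuous_norm.tendsto _).comp this
  exact le_of_tendsto hlim hev

lemma kp_of_nonpos (wm : ℝ) {x : ℝ} (hx : x ≤ 0) : kp wm x = 1 := by
  rw [kp, max_eq_right hx, Real.rpow_zero]

lemma Cref_of_nonpos (m : ℕ) (α : ℕ → ℂ) (β : ℂ) (wm : ℝ) {x : ℝ} (hx : x ≤ 0) :
    Cref m α β wm x = Cref m α β wm 0 := by
  rw [Cref, Cref, kp_of_nonpos wm hx, kp_of_nonpos wm (by linarith : x - 1 ≤ 0),
    kp_of_nonpos wm (le_refl (0:ℝ)), kp_of_nonpos wm (by norm_num : (0:ℝ) - 1 ≤ 0)]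

lemma rigidity_decay (m : ℕ) (v : ℕ → ℝ) (α : ℕ → ℂ) (β : ℂ) (q : ℝ → ℂ)
    (hq : SolvesEplus m v α q) (hβ : β = ∑ j ∈ Finset.range (m + 1), α j)
    (hv0 : v 0 = 0) (hv : ∀ i, i < m → v i < v (i + 1))
    (K U : ℝ) (hU : 2 * ‖β‖ * v m + 1 ≤ U) (hK : 0 ≤ K)
    (hgb : ∀ t, U ≤ t → ‖gf β q t‖ ≤ K * t ^ (-(1/2) : ℝ)) :
    ∀ n : ℕ, ∀ t, U ≤ t →
      ‖gf β q t‖ ≤ K * (Cref m α β (v m) 0) ^ n * t ^ (-(1/2) - n : ℝ) := by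
  have hvm0 : 0 ≤ v m := (v_le m v hv0 hv m le_rfl).1
  have hcc : 0 ≤ 2 * ‖β‖ * v m := by positivity
  have hU1 : (1:ℝ) ≤ U := by linarith
  have hU0 : (0:ℝ) < U := by linarith
  set C₀ : ℝ := Cref m α β (v m) 0 with hC₀
  have hC₀0 : 0 ≤ C₀ := Cref_nonneg m α β (v m) 0 hvm0
  intro n
  induction n with
  | zero =>
    intro t ht
    have h := hgb t ht
    simpa using h
  | succ n ih =>
    intro a ha
    have ha0 : (0:ℝ) < a := by linarith
    set x : ℝ := -(1/2) - n with hx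
    have hxle : x ≤ 0 := by
      have : (0:ℝ) ≤ n := Nat.cast_nonneg n
      rw [hx]; linarith
    set Kn : ℝ := K * C₀ ^ n with hKn
    have hKn0 : 0 ≤ Kn := by positivity
    have hGd : ∀ t, U ≤ t → ‖Gd m v α β q t‖ ≤ C₀ * Kn * t ^ (x - 2) := by
      intro t ht
      have := refined_est m v α β q hq hβ hv0 hv x Kn U hU hKn0 ih ht
      rwa [Cref_of_nonpos m α β (v m) hxle] at this
    have hstep : ∀ b, a ≤ b →
        ‖gf β q a‖ ≤ C₀ * Kn * a ^ (x - 1) + Kn * b ^ x := by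
      intro b hb
      have hw1 : x - 2 + 1 ≠ 0 := by rw [hx]; intro h; have : (0:ℝ) ≤ n := Nat.cast_nonneg n; nlinarith
      have hd := normH (g := gf β q) (g' := Gd m v α β q) ha0 hb (by positivity) hw1
        (fun t ht => hasDerivAt_gf hq hβ (by rcases ht with ⟨h1, _⟩; linarith))
        (fun t ht => hGd t (le_trans ha ht.1))
      have he : x - 2 + 1 = x - 1 := by ring
      rw [he] at hd
      have hb0 : (0:ℝ) < b := by linarith
      have hx1neg : x - 1 < 0 := by linarith
      have hmono : b ^ (x-1:ℝ) ≤ a ^ (x-1:ℝ) :=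
        Real.rpow_le_rpow_of_nonpos ha0 hb (le_of_lt hx1neg)
      have hbpos : (0:ℝ) < b ^ (x-1:ℝ) := Real.rpow_pos_of_pos hb0 _
      have hapos : (0:ℝ) < a ^ (x-1:ℝ) := Real.rpow_pos_of_pos ha0 _
      have hd2 : ‖gf β q b - gf β q a‖ ≤ C₀ * Kn * a ^ (x - 1) := by
        refine le_trans hd ?_
        have h1mx : (1:ℝ) ≤ 1 - x := by linarith
        have hfr : (a ^ (x-1:ℝ) - b ^ (x-1:ℝ)) / (1 - x) ≤ a ^ (x-1:ℝ) := by
          rw [div_le_iff₀ (by linarith)]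
          nlinarith
        calc C₀ * Kn / (x - 1) * (b ^ (x-1:ℝ) - a ^ (x-1:ℝ))
            = C₀ * Kn * ((a ^ (x-1:ℝ) - b ^ (x-1:ℝ)) / (1 - x)) := by
              have hne : x - 1 ≠ 0 := ne_of_lt hx1neg
              rw [div_mul_eq_mul_div, mul_div_assoc]
              congr 1
              rw [div_eq_div_iff hne (by intro h; rw [sub_eq_zero] at h; linarith)]
              ring
          _ ≤ C₀ * Kn * a ^ (x-1:ℝ) := by
              apply mul_le_mul_of_nonneg_left hfr (by positivity)
      have htri : ‖gf β q a‖ ≤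
          ‖gf β q b - gf β q a‖ + ‖gf β q b‖ := by
        have h := norm_sub_le (gf β q b - gf β q a) (gf β q b)
        have h2 : ‖gf β q b - gf β q a - gf β q b‖ = ‖gf β q a‖ := by
          rw [show gf β q b - gf β q a - gf β q b = -(gf β q a) by ring, norm_neg]
        rw [h2] at h
        exact h
      have hgbb : ‖gf β q b‖ ≤ Kn * b ^ x := ih b (by linarith)
      linarith
    -- let b → ∞
    have hlim : Tendsto (fun b : ℝ => C₀ * Kn * a ^ (x - 1) + Kn * b ^ x) atTop
        (nhds (C₀ * Kn * a ^ (x - 1) + 0)) := by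
      apply Tendsto.add tendsto_const_nhds
      have hxneg : x = -(1/2 + n) := by rw [hx]; ring
      have h2 : Tendsto (fun b : ℝ => b ^ x) atTop (nhds 0) := by
        rw [hxneg]
        apply tendsto_rpow_neg_atTop
        have : (0:ℝ) ≤ n := Nat.cast_nonneg n
        linarith
      simpa using h2.const_mul Kn
    have hfin : ‖gf β q a‖ ≤ C₀ * Kn * a ^ (x - 1) + 0 := by
      apply ge_of_tendsto hlim
      filter_upwards [eventually_ge_atTop a] with b hb
      exact hstep b hb
    have hx1 : x - 1 = -(1/2) - ((n:ℝ) + 1) := by rw [hx]; ring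
    rw [add_zero] at hfin
    refine le_trans hfin (le_of_eq ?_)
    rw [hKn, hx1]
    push_cast
    ring

/-- vanishing at infinity -/
lemma vanish (m : ℕ) (v : ℕ → ℝ) (α : ℕ → ℂ) (β : ℂ) (q : ℝ → ℂ)
    (hq : SolvesEplus m v α q) (hβ : β = ∑ j ∈ Finset.range (m + 1), α j)
    (hv0 : v 0 = 0) (hv : ∀ i, i < m → v i < v (i + 1))
    (K U : ℝ) (hU : 2 * ‖β‖ * v m + 1 ≤ U) (hK : 0 ≤ K)
    (hgb : ∀ t, U ≤ t → ‖gf β q t‖ ≤ K * t ^ (-(1/2) : ℝ)) :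
    ∀ u, U ≤ u → Cref m α β (v m) 0 < u → q u = 0 := by
  intro u hu hCu
  have hvm0 : 0 ≤ v m := (v_le m v hv0 hv m le_rfl).1
  have hcc : 0 ≤ 2 * ‖β‖ * v m := by positivity
  have hu0 : (0:ℝ) < u := by linarith
  have hC₀0 : 0 ≤ Cref m α β (v m) 0 := Cref_nonneg m α β (v m) 0 hvm0
  set C₀ : ℝ := Cref m α β (v m) 0 with hC₀
  have hbd : ∀ n : ℕ, ‖gf β q u‖ ≤ (K * u ^ (-(1/2):ℝ)) * (C₀ / u) ^ n := by
    intro n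
    have h := rigidity_decay m v α β q hq hβ hv0 hv K U hU hK hgb n u hu
    refine le_trans h (le_of_eq ?_)
    rw [show (-(1/2) - n : ℝ) = (-(1/2)) + (-(n:ℝ)) by ring, Real.rpow_add hu0,
      Real.rpow_neg (le_of_lt hu0) (n:ℝ), Real.rpow_natCast, div_pow]
    field_simp
    ring
  have hlt1 : C₀ / u < 1 := (div_lt_one hu0).mpr hCu
  have hge0 : 0 ≤ C₀ / u := by positivity
  have hlim : Tendsto (fun n : ℕ => (K * u ^ (-(1/2):ℝ)) * (C₀ / u) ^ n) atTop (nhds 0) := by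
    have h := tendsto_pow_atTop_nhds_zero_of_lt_one hge0 hlt1
    simpa using h.const_mul (K * u ^ (-(1/2):ℝ))
  have habs : ‖gf β q u‖ ≤ 0 :=
    ge_of_tendsto hlim (Filter.Eventually.of_forall hbd)
  have h0 : gf β q u = 0 := by
    have := norm_nonneg (gf β q u)
    have : ‖gf β q u‖ = 0 := le_antisymm habs this
    exact (norm_eq_zero).mp this
  rw [gf] at h0
  rcases mul_eq_zero.mp h0 with h | h
  · exact h
  · exact absurd h (Wt_ne_zero β u)

/-- backwards propagation of vanishing -/
lemma backward (m : ℕ) (v : ℕ → ℝ) (α : ℕ → ℂ) (q : ℝ → ℂ)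
    (hq : SolvesEplus m v α q)
    (hv0 : v 0 = 0) (hv : ∀ i, i < m → v i < v (i + 1))
    (T : ℝ) (hT : ∀ u, T < u → 0 < u → q u = 0) :
    ∀ u, 0 < u → q u = 0 := by
  set ε : ℝ := if m = 0 then 1 else v 1 with hε
  have hε0 : 0 < ε := by
    rw [hε]
    split
    · norm_num
    · rename_i hm
      have := hv 0 (Nat.pos_of_ne_zero hm)
      rw [hv0] at this
      linarith
  have hεv : ∀ j, 1 ≤ j → j ≤ m → ε ≤ v j := by
    intro j h1 hm
    have hm0 : m ≠ 0 := by omega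
    rw [hε, if_neg hm0]
    exact v_mono m v hv0 hv j hm 1 h1
  have step : ∀ s : ℝ, (∀ u, s < u → 0 < u → q u = 0) →
      ∀ u, s - ε < u → 0 < u → q u = 0 := by
    intro s hs u hu hu0
    rcases lt_or_ge s u with h | h
    · exact hs u h hu0
    set t₀ : ℝ := max (s + 1) 1 with ht₀
    have ht₀s : s < t₀ := lt_of_lt_of_le (by linarith) (le_max_left _ _)
    have ht₀0 : (0:ℝ) < t₀ := lt_of_lt_of_le one_pos (le_max_right _ _)
    have hut₀ : u ≤ t₀ := le_trans h (le_of_lt ht₀s)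
    have hder : ∀ t ∈ Icc u t₀, HasDerivAt (fun y => q y * Wt (α 0) y) 0 t := by
      intro t ht
      have ht0 : 0 < t := lt_of_lt_of_le hu0 ht.1
      obtain ⟨hd, heq⟩ := hq t ht0
      have hW := hasDerivAt_Wt (α 0) ht0
      have hmul := hd.hasDerivAt.mul hW
      have hsum : (t:ℂ) * deriv q t = α 0 * q t := by
        rw [heq, Finset.sum_range_succ']
        have hz : ∀ j ∈ Finset.range m, α (j+1) * q (t + v (j+1)) = 0 := by
          intro j hj
          have hjm : j + 1 ≤ m := Nat.succ_le_of_lt (Finset.mem_range.mp hj)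
          have hvj : ε ≤ v (j+1) := hεv (j+1) (Nat.le_add_left 1 j) hjm
          have hv0' : 0 ≤ v (j+1) := (v_le m v hv0 hv (j+1) hjm).1
          have hqz : q (t + v (j+1)) = 0 := by
            apply hs
            · have := ht.1
              linarith
            · linarith
          rw [hqz, mul_zero]
        rw [Finset.sum_eq_zero hz, hv0]
        simp
      have ht0' : (t:ℂ) ≠ 0 := by exact_mod_cast ne_of_gt ht0
      have hdq : deriv q t = α 0 * q t / t := by
        rw [eq_div_iff ht0']
        linear_combination hsum
      have hval : deriv q t * Wt (α 0) t + q t * (Wt (α 0) t * (-(α 0) / t)) = 0 := by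
        rw [hdq]
        field_simp
        ring
      exact hmul.congr_deriv hval
    have hbd2 : ∀ t ∈ Ico u t₀, ‖(0:ℂ)‖ ≤ (0:ℝ) := by simp
    have hkey := norm_image_sub_le_of_norm_deriv_le_segment'
      (f := fun y => q y * Wt (α 0) y) (f' := fun _ => (0:ℂ)) (C := 0)
      (fun t ht => (hder t ht).hasDerivWithinAt) hbd2 t₀ ⟨hut₀, le_rfl⟩
    have hq0 : q t₀ = 0 := hs t₀ ht₀s ht₀0
    have hzero : q u * Wt (α 0) u = 0 := by
      have h2 : ‖q t₀ * Wt (α 0) t₀ - q u * Wt (α 0) u‖ ≤ 0 * (t₀ - u) := hkey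
      rw [hq0, zero_mul, zero_mul, zero_sub, norm_neg] at h2
      have h3 : ‖q u * Wt (α 0) u‖ = 0 := le_antisymm h2 (norm_nonneg _)
      exact norm_eq_zero.mp h3
    rcases mul_eq_zero.mp hzero with h' | h'
    · exact h'
    · exact absurd h' (Wt_ne_zero (α 0) u)
  have hiter : ∀ n : ℕ, ∀ u, T - n * ε < u → 0 < u → q u = 0 := by
    intro n
    induction n with
    | zero => intro u hu hu0; exact hT u (by simpa using hu) hu0
    | succ n ih =>
      have h := step (T - n * ε) (fun u hu hu0 => ih u hu hu0)
      intro u hu hu0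
      apply h u _ hu0
      push_cast at hu ⊢
      linarith
  intro u hu0
  obtain ⟨n, hn⟩ := exists_nat_gt ((T - u) / ε)
  apply hiter n u _ hu0
  have := (div_lt_iff₀ hε0).mp hn
  linarith

lemma solves_combo (m : ℕ) (v : ℕ → ℝ) (α : ℕ → ℂ) (q₁ q₂ : ℝ → ℂ)
    (hq₁ : SolvesEplus m v α q₁) (hq₂ : SolvesEplus m v α q₂) (a b : ℂ) :
    SolvesEplus m v α (fun u => a * q₁ u + b * q₂ u) := by
  intro u hu
  obtain ⟨hd₁, he₁⟩ := hq₁ u hu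
  obtain ⟨hd₂, he₂⟩ := hq₂ u hu
  refine ⟨(hd₁.const_mul a).add (hd₂.const_mul b), ?_⟩
  have hder : deriv (fun u => a * q₁ u + b * q₂ u) u = a * deriv q₁ u + b * deriv q₂ u := by
    rw [deriv_fun_add (hd₁.const_mul a) (hd₂.const_mul b), deriv_const_mul a hd₁,
      deriv_const_mul b hd₂]
  rw [hder, show (u:ℂ) * (a * deriv q₁ u + b * deriv q₂ u)
    = a * ((u:ℂ) * deriv q₁ u) + b * ((u:ℂ) * deriv q₂ u) by ring, he₁, he₂,
    Finset.mul_sum, Finset.mul_sum, ← Finset.sum_add_distrib]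
  exact Finset.sum_congr rfl fun j _ => by ring

/-- gf of a combination -/
lemma gf_combo (β : ℂ) (q₁ q₂ : ℝ → ℂ) (a b : ℂ) (t : ℝ) :
    gf β (fun u => a * q₁ u + b * q₂ u) t = a * gf β q₁ t + b * gf β q₂ t := by
  simp only [gf]
  ring
end Stmt5x

open Stmt5x in
theorem stmt5 (m : ℕ) (v : ℕ → ℝ) (α : ℕ → ℂ)
    (hv0 : v 0 = 0) (hv : ∀ i, i < m → v i < v (i + 1))
    (hα : ∀ j, 1 ≤ j → j ≤ m → α j ≠ 0)
    (q₁ q₂ : ℝ → ℂ) (hq₁ : SolvesEplus m v α q₁) (hq₂ : SolvesEplus m v α q₂)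
    (r₁ r₂ B₁ B₂ u₁ u₂ : ℝ) (hB₁ : 0 < B₁) (hB₂ : 0 < B₂) (hu₁ : 0 < u₁) (hu₂ : 0 < u₂)
    (hbound₁ : ∀ u : ℝ, u₁ ≤ u → ‖q₁ u‖ ≤ B₁ * u ^ r₁)
    (hbound₂ : ∀ u : ℝ, u₂ ≤ u → ‖q₂ u‖ ≤ B₂ * u ^ r₂) :
    ∃ c₁ c₂ : ℂ, (c₁ ≠ 0 ∨ c₂ ≠ 0) ∧
      ∀ u : ℝ, 0 < u → c₁ * q₁ u + c₂ * q₂ u = 0 := by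
  set β : ℂ := ∑ j ∈ Finset.range (m + 1), α j with hβ
  have hvm0 : 0 ≤ v m := (v_le m v hv0 hv m le_rfl).1
  set U : ℝ := max (max u₁ u₂) (2 * ‖β‖ * v m + 1) with hUdef
  have hUc : 2 * ‖β‖ * v m + 1 ≤ U := le_max_right _ _
  have hU1 : u₁ ≤ U := le_trans (le_max_left _ _) (le_max_left _ _)
  have hU2 : u₂ ≤ U := le_trans (le_max_right _ _) (le_max_left _ _)
  have hUpos : (0:ℝ) < U := by
    have : (0:ℝ) ≤ 2 * ‖β‖ * v m := by positivity
    linarith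
  -- bounds on gf
  have hgf : ∀ (q : ℝ → ℂ) (B r u' : ℝ), 0 < B → u' ≤ U →
      (∀ u : ℝ, u' ≤ u → ‖q u‖ ≤ B * u ^ r) →
      ∀ t, U ≤ t → ‖gf β q t‖ ≤ B * t ^ (r - β.re) := by
    intro q B r u' hB hu' hb t ht
    have ht0 : (0:ℝ) < t := lt_of_lt_of_le hUpos ht
    rw [gf, norm_mul, abs_Wt β ht0]
    calc ‖q t‖ * t ^ (-β.re)
        ≤ (B * t ^ r) * t ^ (-β.re) := by
          apply mul_le_mul_of_nonneg_right (hb t (by linarith))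
            (le_of_lt (Real.rpow_pos_of_pos ht0 _))
      _ = B * t ^ (r - β.re) := by
          rw [mul_assoc, ← Real.rpow_add ht0, sub_eq_add_neg]
  obtain ⟨L₁, C₁, hC₁0, hb₁⟩ := descent m v α β q₁ hq₁ hβ hv0 hv (r₁ - β.re) B₁ U hUc
    (le_of_lt hB₁) (hgf q₁ B₁ r₁ u₁ hB₁ hU1 hbound₁)
  obtain ⟨L₂, C₂, hC₂0, hb₂⟩ := descent m v α β q₂ hq₂ hβ hv0 hv (r₂ - β.re) B₂ U hUc
    (le_of_lt hB₂) (hgf q₂ B₂ r₂ u₂ hB₂ hU2 hbound₂)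
  by_cases hL₁ : L₁ = 0
  · -- q₁ vanishes identically
    have hgb : ∀ t, U ≤ t → ‖gf β q₁ t‖ ≤ C₁ * t ^ (-(1/2) : ℝ) := by
      intro t ht
      have := hb₁ t ht
      rwa [hL₁, sub_zero] at this
    have hvan := vanish m v α β q₁ hq₁ hβ hv0 hv C₁ U hUc hC₁0 hgb
    have hT : ∀ u, max U (Cref m α β (v m) 0) < u → 0 < u → q₁ u = 0 := fun u hu _ =>
      hvan u (le_of_lt (lt_of_le_of_lt (le_max_left _ _) hu))
        (lt_of_le_of_lt (le_max_right _ _) hu)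
    have hall := backward m v α q₁ hq₁ hv0 hv _ hT
    exact ⟨1, 0, Or.inl one_ne_zero, fun u hu => by rw [hall u hu]; ring⟩
  · set q₃ : ℝ → ℂ := fun u => L₂ * q₁ u + (-L₁) * q₂ u with hq₃def
    have hq₃ : SolvesEplus m v α q₃ := solves_combo m v α q₁ q₂ hq₁ hq₂ L₂ (-L₁)
    have hgb₃ : ∀ t, U ≤ t → ‖gf β q₃ t‖ ≤
        (‖L₂‖ * C₁ + ‖L₁‖ * C₂) * t ^ (-(1/2) : ℝ) := by
      intro t ht
      have h1 := hb₁ t ht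
      have h2 := hb₂ t ht
      have hid : gf β q₃ t = L₂ * (gf β q₁ t - L₁) - L₁ * (gf β q₂ t - L₂) := by
        rw [hq₃def, gf_combo]
        ring
      rw [hid]
      calc ‖L₂ * (gf β q₁ t - L₁) - L₁ * (gf β q₂ t - L₂)‖
          ≤ ‖L₂ * (gf β q₁ t - L₁)‖ + ‖L₁ * (gf β q₂ t - L₂)‖ :=
            norm_sub_le _ _
        _ = ‖L₂‖ * ‖gf β q₁ t - L₁‖
            + ‖L₁‖ * ‖gf β q₂ t - L₂‖ := by rw [norm_mul, norm_mul]
        _ ≤ ‖L₂‖ * (C₁ * t ^ (-(1/2) : ℝ))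
            + ‖L₁‖ * (C₂ * t ^ (-(1/2) : ℝ)) := by
            apply add_le_add
            · exact mul_le_mul_of_nonneg_left h1 (norm_nonneg _)
            · exact mul_le_mul_of_nonneg_left h2 (norm_nonneg _)
        _ = (‖L₂‖ * C₁ + ‖L₁‖ * C₂) * t ^ (-(1/2) : ℝ) := by ring
    have hK₃ : 0 ≤ ‖L₂‖ * C₁ + ‖L₁‖ * C₂ := by
      have := norm_nonneg L₁
      have := norm_nonneg L₂
      positivity
    have hvan := vanish m v α β q₃ hq₃ hβ hv0 hv _ U hUc hK₃ hgb₃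
    have hT : ∀ u, max U (Cref m α β (v m) 0) < u → 0 < u → q₃ u = 0 := fun u hu _ =>
      hvan u (le_of_lt (lt_of_le_of_lt (le_max_left _ _) hu))
        (lt_of_le_of_lt (le_max_right _ _) hu)
    have hall := backward m v α q₃ hq₃ hv0 hv _ hT
    refine ⟨L₂, -L₁, Or.inr (neg_ne_zero.mpr hL₁), fun u hu => ?_⟩
    have := hall u hu
    rw [hq₃def] at this
    exact this
end

section
/- Assume β = −1 and suppose q : ℝ → ℂ solves (E+). Then there exists a complex number A such that for all u > 0, u·q(u) = A + Σ_{j=1}^m c_j ∫_{v_{j−1}}^{v_j} q(u + t) dt, where c_j := Σ_{i=j}^m α_i for j = 1, ..., m. -/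
open MeasureTheory Filter Set

private lemma telescope_sum (f : ℕ → ℂ) :
    ∀ n : ℕ, ∑ j ∈ Finset.Icc 1 n, (f j - f (j - 1)) = f n - f 0 := by
  intro n
  induction n with
  | zero => simp
  | succ n ih =>
    rw [Finset.sum_Icc_succ_top (by omega : 1 ≤ n + 1), ih]
    simp only [Nat.add_sub_cancel]
    ring

private lemma abel_sum (m : ℕ) (α : ℕ → ℂ) (f : ℕ → ℂ) :
    ∑ j ∈ Finset.Icc 1 m, (∑ i ∈ Finset.Icc j m, α i) * (f j - f (j - 1))
      = ∑ j ∈ Finset.Icc 1 m, α j * (f j - f 0) := by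
  induction m with
  | zero => simp
  | succ n ih =>
    have h1 : ∀ j ∈ Finset.Icc 1 (n + 1),
        (∑ i ∈ Finset.Icc j (n + 1), α i) * (f j - f (j - 1))
          = (∑ i ∈ Finset.Icc j n, α i) * (f j - f (j - 1))
            + α (n + 1) * (f j - f (j - 1)) := by
      intro j hj
      rw [Finset.sum_Icc_succ_top (Finset.mem_Icc.mp hj).2, add_mul]
    rw [Finset.sum_congr rfl h1, Finset.sum_add_distrib, ← Finset.mul_sum,
      telescope_sum f (n + 1),
      Finset.sum_Icc_succ_top (by omega : 1 ≤ n + 1), ih,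
      Finset.sum_Icc_succ_top (by omega : 1 ≤ n + 1) (fun j => α j * (f j - f 0))]
    have : Finset.Icc (n + 1) n = ∅ := by
      apply Finset.Icc_eq_empty; omega
    rw [this]
    simp only [Finset.sum_empty, zero_mul, add_zero]
    try ring

private lemma split_sum (m : ℕ) (g : ℕ → ℂ) :
    ∑ j ∈ Finset.range (m + 1), g j = g 0 + ∑ j ∈ Finset.Icc 1 m, g j := by
  induction m with
  | zero => simp
  | succ n ih =>
    rw [Finset.sum_range_succ, ih, Finset.sum_Icc_succ_top (by omega : 1 ≤ n + 1)]
    ring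

theorem stmt7 (m : ℕ) (v : ℕ → ℝ) (α : ℕ → ℂ)
    (hv0 : v 0 = 0) (hv : ∀ i, i < m → v i < v (i + 1))
    (hα : ∀ j, 1 ≤ j → j ≤ m → α j ≠ 0)
    (hβ : (∑ j ∈ Finset.range (m + 1), α j) = -1)
    (q : ℝ → ℂ) (hq : SolvesEplus m v α q) :
    ∃ A : ℂ, ∀ u : ℝ, 0 < u →
      (u : ℂ) * q u = A + ∑ j ∈ Finset.Icc 1 m,
        (∑ i ∈ Finset.Icc j m, α i) * ∫ t in (v (j - 1))..(v j), q (u + t) := by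
  -- nonnegativity/monotonicity of v up to m
  have hv_nonneg : ∀ j, j ≤ m → 0 ≤ v j := by
    intro j hj
    induction j with
    | zero => simp [hv0]
    | succ n ih =>
      exact le_trans (ih (by omega)) (hv n (by omega)).le
  -- continuity of q on Ioi 0
  have hqc : ContinuousOn q (Set.Ioi (0 : ℝ)) := fun x hx =>
    ((hq x hx).1.continuousAt).continuousWithinAt
  have hint : ∀ x y : ℝ, 0 < x → 0 < y → IntervalIntegrable q volume x y := by
    intro x y hx hy
    apply (hqc.mono ?_).intervalIntegrable
    intro t ht
    rcases Set.mem_uIcc.mp ht with ⟨h1, _⟩ | ⟨h1, _⟩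
    · exact lt_of_lt_of_le hx h1
    · exact lt_of_lt_of_le hy h1
  -- the key derivative computation
  have key : ∀ x ∈ Set.Ioi (0 : ℝ), HasDerivAt
      (fun u : ℝ => (u : ℂ) * q u - ∑ j ∈ Finset.Icc 1 m,
        (∑ i ∈ Finset.Icc j m, α i) * ∫ t in (v (j - 1))..(v j), q (u + t)) 0 x := by
    intro u hu
    rw [Set.mem_Ioi] at hu
    -- derivative of u ↦ u * q u
    have hofReal : HasDerivAt (fun y : ℝ => (y : ℂ)) 1 u := by
      simpa using (hasDerivAt_id u).ofReal_comp
    have hd : HasDerivAt q (deriv q u) u := (hq u hu).1.hasDerivAt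
    have part1 : HasDerivAt (fun y : ℝ => (y : ℂ) * q y)
        (q u + (u : ℂ) * deriv q u) u := by
      have h := hofReal.mul hd
      simp only [one_mul] at h
      exact h
    -- derivative of each integral term
    have part2 : ∀ j ∈ Finset.Icc 1 m, HasDerivAt
        (fun u' : ℝ => ∫ t in (v (j - 1))..(v j), q (u' + t))
        (q (u + v j) - q (u + v (j - 1))) u := by
      intro j hj
      obtain ⟨hj1, hj2⟩ := Finset.mem_Icc.mp hj
      have ha0 : 0 ≤ v (j - 1) := hv_nonneg _ (by omega)
      have hb0 : 0 ≤ v j := hv_nonneg _ hj2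
      have h1 : HasDerivAt (fun x => ∫ s in (u + v (j - 1))..x, q s)
          (q (u + v j)) (u + v j) :=
        intervalIntegral.integral_hasDerivAt_right
          (hint _ _ (by linarith) (by linarith))
          (hqc.stronglyMeasurableAtFilter isOpen_Ioi _ (by simp only [Set.mem_Ioi]; linarith))
          ((hq _ (by linarith)).1.continuousAt)
      have h2 : HasDerivAt (fun x => ∫ s in (u + v (j - 1))..x, q s)
          (q (u + v (j - 1))) (u + v (j - 1)) :=
        intervalIntegral.integral_hasDerivAt_right
          (hint _ _ (by linarith) (by linarith))
          (hqc.stronglyMeasurableAtFilter isOpen_Ioi _ (by simp only [Set.mem_Ioi]; linarith))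
          ((hq _ (by linarith)).1.continuousAt)
      have h1' : HasDerivAt (fun u' : ℝ => ∫ s in (u + v (j - 1))..(u' + v j), q s)
          (q (u + v j)) u := h1.comp_add_const u (v j)
      have h2' : HasDerivAt (fun u' : ℝ => ∫ s in (u + v (j - 1))..(u' + v (j - 1)), q s)
          (q (u + v (j - 1))) u := h2.comp_add_const u (v (j - 1))
      have hev : (fun u' : ℝ => ∫ s in (u' + v (j - 1))..(u' + v j), q s)
          =ᶠ[nhds u] fun u' : ℝ =>
            (∫ s in (u + v (j - 1))..(u' + v j), q s)
              - ∫ s in (u + v (j - 1))..(u' + v (j - 1)), q s := by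
        filter_upwards [isOpen_Ioi.mem_nhds (Set.mem_Ioi.mpr hu)] with u' hu'
        rw [Set.mem_Ioi] at hu'
        rw [intervalIntegral.integral_interval_sub_left
          (hint _ _ (by linarith) (by linarith))
          (hint _ _ (by linarith) (by linarith))]
      have hmain : HasDerivAt (fun u' : ℝ => ∫ s in (u' + v (j - 1))..(u' + v j), q s)
          (q (u + v j) - q (u + v (j - 1))) u :=
        (h1'.sub h2').congr_of_eventuallyEq hev
      have heq : (fun u' : ℝ => ∫ t in (v (j - 1))..(v j), q (u' + t))
          = fun u' : ℝ => ∫ s in (u' + v (j - 1))..(u' + v j), q s := by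
        funext u'
        exact intervalIntegral.integral_comp_add_left q u'
      rw [heq]
      exact hmain
    have part3 : HasDerivAt
        (fun u' : ℝ => ∑ j ∈ Finset.Icc 1 m,
          (∑ i ∈ Finset.Icc j m, α i) * ∫ t in (v (j - 1))..(v j), q (u' + t))
        (∑ j ∈ Finset.Icc 1 m,
          (∑ i ∈ Finset.Icc j m, α i) * (q (u + v j) - q (u + v (j - 1)))) u :=
      HasDerivAt.fun_sum fun j hj => (part2 j hj).const_mul _
    have hder := part1.sub part3
    have hD : (q u + (u : ℂ) * deriv q u)
        - (∑ j ∈ Finset.Icc 1 m,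
          (∑ i ∈ Finset.Icc j m, α i) * (q (u + v j) - q (u + v (j - 1)))) = 0 := by
      have h2 := (hq u hu).2
      have habel := abel_sum m α (fun j => q (u + v j))
      have hsum := split_sum m (fun j => α j * q (u + v j))
      have hβ' : ∑ j ∈ Finset.Icc 1 m, α j = -1 - α 0 := by
        have h := split_sum m α
        rw [h] at hβ
        linear_combination hβ
      rw [h2, habel, hsum]
      simp only [hv0, add_zero]
      have hms : ∑ j ∈ Finset.Icc 1 m, α j * (q (u + v j) - q u)
          = (∑ j ∈ Finset.Icc 1 m, α j * q (u + v j))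
            - (∑ j ∈ Finset.Icc 1 m, α j) * q u := by
        rw [Finset.sum_mul, ← Finset.sum_sub_distrib]
        exact Finset.sum_congr rfl fun j _ => mul_sub _ _ _
      rw [hms, hβ']
      ring
    rw [hD] at hder
    exact hder
  -- constancy on Ioi 0
  have hconst : ∀ x ∈ Set.Ioi (0 : ℝ), ∀ y ∈ Set.Ioi (0 : ℝ),
      ((x : ℂ) * q x - ∑ j ∈ Finset.Icc 1 m,
        (∑ i ∈ Finset.Icc j m, α i) * ∫ t in (v (j - 1))..(v j), q (x + t))
      = ((y : ℂ) * q y - ∑ j ∈ Finset.Icc 1 m,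
        (∑ i ∈ Finset.Icc j m, α i) * ∫ t in (v (j - 1))..(v j), q (y + t)) := by
    intro x hx y hy
    exact (convex_Ioi (0 : ℝ)).is_const_of_fderivWithin_eq_zero
      (fun z hz => ((key z hz).differentiableAt).differentiableWithinAt)
      (fun z hz => by
        rw [fderivWithin_of_isOpen isOpen_Ioi hz, (key z hz).hasFDerivAt.fderiv]
        ext
        simp) hx hy
  refine ⟨((1 : ℝ) : ℂ) * q 1 - ∑ j ∈ Finset.Icc 1 m,
    (∑ i ∈ Finset.Icc j m, α i) * ∫ t in (v (j - 1))..(v j), q (1 + t), fun u hu => ?_⟩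
  have h := hconst u (Set.mem_Ioi.mpr hu) 1 (Set.mem_Ioi.mpr one_pos)
  linear_combination h
end
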